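/- arXiv:2101.09155 — 13 statements merged into one kernel-verified Lean document; each statement's English description precedes it below -/
import Mathlib

section
/- Let φ : ℝ → ℝ be three times continuously differentiable on an open interval containing [m,M] with φ''' ≥ 0 there (φ is 3-convex). Suppose φ∘f ∈ L and the function t ↦ (M − f(t))·(f(t) − m) belongs to L. Then, writing Δ = (φ(M) − φ(m))/(M − m) and K = A((M·1 − f)·(f − m·1))/(M − m), one has K·(Δ − φ'(m)) ≤ (M − A(f))/(M − m)·φ(m) + (A(f) − m)/(M − m)·φ(M) − A(φ∘f) ≤ K·(φ'(M) − Δ). -/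
section ELRAux
open Set

lemma core_nonneg (m M : ℝ) (hmM : m < M) (g g' g'' : ℝ → ℝ)
    (hg : ∀ x ∈ Icc m M, HasDerivAt g (g' x) x)
    (hg' : ∀ x ∈ Icc m M, HasDerivAt g' (g'' x) x)
    (hanti : ∀ x ∈ Icc m M, ∀ y ∈ Icc m M, x ≤ y → g'' y ≤ g'' x)
    (hgm : g m = 0) (hgM : g M = 0) (hg'm : g' m = 0) :
    ∀ x ∈ Icc m M, 0 ≤ g x := by
  by_contra hcon
  push_neg at hcon
  obtain ⟨x0, hx0, hneg⟩ := hcon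
  have hmx0 : m < x0 := hx0.1.lt_of_ne (by rintro rfl; rw [hgm] at hneg; linarith)
  have hx0M : x0 < M := hx0.2.lt_of_ne (by rintro rfl; rw [hgM] at hneg; linarith)
  have sub1 : Icc m x0 ⊆ Icc m M := Icc_subset_Icc le_rfl hx0.2
  have sub2 : Icc x0 M ⊆ Icc m M := Icc_subset_Icc hx0.1 le_rfl
  -- c ∈ (m, x0) with g' c < 0
  obtain ⟨c, hc, hc'⟩ := exists_hasDerivAt_eq_slope g g' hmx0
    (fun x hx => (hg x (sub1 hx)).continuousAt.continuousWithinAt)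
    (fun x hx => hg x (sub1 (Ioo_subset_Icc_self hx)))
  have hcI : c ∈ Icc m M := ⟨hc.1.le, hc.2.le.trans hx0.2⟩
  have hc'neg : g' c < 0 := by
    rw [hc', hgm]
    exact div_neg_of_neg_of_pos (by linarith) (by linarith [hc.1, hc.2])
  -- ξ ∈ (x0, M) with g' ξ > 0
  obtain ⟨ξ, hξ, hξ'⟩ := exists_hasDerivAt_eq_slope g g' hx0M
    (fun x hx => (hg x (sub2 hx)).continuousAt.continuousWithinAt)
    (fun x hx => hg x (sub2 (Ioo_subset_Icc_self hx)))
  have hξI : ξ ∈ Icc m M := ⟨hx0.1.trans hξ.1.le, hξ.2.le⟩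
  have hξ'pos : 0 < g' ξ := by
    rw [hξ', hgM]
    apply div_pos (by linarith) (by linarith [hξ.1, hξ.2])
  -- η1 ∈ (m, c) with g'' η1 < 0
  have sub3 : Icc m c ⊆ Icc m M := Icc_subset_Icc le_rfl hcI.2
  obtain ⟨η1, hη1, hη1'⟩ := exists_hasDerivAt_eq_slope g' g'' hc.1
    (fun x hx => (hg' x (sub3 hx)).continuousAt.continuousWithinAt)
    (fun x hx => hg' x (sub3 (Ioo_subset_Icc_self hx)))
  have hη1neg : g'' η1 < 0 := by
    rw [hη1', hg'm]
    exact div_neg_of_neg_of_pos (by linarith) (by linarith [hη1.1, hη1.2, hc.1])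
  -- η2 ∈ (c, ξ)
  have hcξ : c < ξ := hc.2.trans hξ.1
  have sub4 : Icc c ξ ⊆ Icc m M := Icc_subset_Icc hcI.1 hξI.2
  obtain ⟨η2, hη2, hη2'⟩ := exists_hasDerivAt_eq_slope g' g'' hcξ
    (fun x hx => (hg' x (sub4 hx)).continuousAt.continuousWithinAt)
    (fun x hx => hg' x (sub4 (Ioo_subset_Icc_self hx)))
  have hη12 : η1 ≤ η2 := (hη1.2.trans hη2.1).le
  have hη1I : η1 ∈ Icc m M := ⟨hη1.1.le, hη1.2.le.trans hcI.2⟩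
  have hη2I : η2 ∈ Icc m M := ⟨hcI.1.trans hη2.1.le, hη2.2.le.trans hξI.2⟩
  have h21 : g'' η2 ≤ g'' η1 := hanti η1 hη1I η2 hη2I hη12
  have : g' ξ - g' c < 0 := by
    have heq : g' ξ - g' c = g'' η2 * (ξ - c) :=
      (div_eq_iff (sub_ne_zero.mpr hcξ.ne')).mp hη2'.symm
    rw [heq]
    exact mul_neg_of_neg_of_pos (by linarith) (by linarith)
  linarith

lemma core_nonneg' (m M : ℝ) (hmM : m < M) (g g' g'' : ℝ → ℝ)
    (hg : ∀ x ∈ Icc m M, HasDerivAt g (g' x) x)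
    (hg' : ∀ x ∈ Icc m M, HasDerivAt g' (g'' x) x)
    (hmono : ∀ x ∈ Icc m M, ∀ y ∈ Icc m M, x ≤ y → g'' x ≤ g'' y)
    (hgm : g m = 0) (hgM : g M = 0) (hg'M : g' M = 0) :
    ∀ x ∈ Icc m M, 0 ≤ g x := by
  intro x hx
  have hrefl : ∀ y : ℝ, y ∈ Icc m M → m + M - y ∈ Icc m M := by
    intro y hy; exact ⟨by linarith [hy.2], by linarith [hy.1]⟩
  have key := core_nonneg m M hmM (fun y => g (m + M - y)) (fun y => -g' (m + M - y))
      (fun y => g'' (m + M - y))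
      (fun y hy => by
        have h1 : HasDerivAt (fun y : ℝ => m + M - y) (-1) y := by
          simpa using (hasDerivAt_id y).const_sub (m + M)
        have := (hg _ (hrefl y hy)).comp y h1
        exact this.congr_deriv (by ring))
      (fun y hy => by
        have h1 : HasDerivAt (fun y : ℝ => m + M - y) (-1) y := by
          simpa using (hasDerivAt_id y).const_sub (m + M)
        have := ((hg' _ (hrefl y hy)).comp y h1).neg
        exact this.congr_deriv (by ring))
      (fun u hu v hv huv => by
        exact hmono _ (hrefl v hv) _ (hrefl u hu) (by linarith))
      (by simpa using hgM) (by simpa using hgm) (by simpa using hg'M)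
  have := key (m + M - x) (hrefl x hx)
  simpa using this

lemma hasDerivAt_quad (m M u v w r : ℝ) (ψ : ℝ → ℝ) (ψ' : ℝ) (x : ℝ) (hψ : HasDerivAt ψ ψ' x) :
    HasDerivAt (fun y => ((M - y)*u + (y - m)*v - (M - y)*(y - m)*w) - r * ψ y)
      ((v - u - (M + m - 2*x)*w) - r * ψ') x := by
  have h1 : HasDerivAt (fun y:ℝ => (M-y)*u) (-1*u) x := ((hasDerivAt_id x).const_sub M).mul_const u
  have h2 : HasDerivAt (fun y:ℝ => (y-m)*v) (1*v) x := ((hasDerivAt_id x).sub_const m).mul_const v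
  have h3 : HasDerivAt (fun y:ℝ => (M-y)*(y-m)*w) ((-1*(x-m)+(M-x)*1)*w) x :=
    (((hasDerivAt_id x).const_sub M).mul ((hasDerivAt_id x).sub_const m)).mul_const w
  have h4 := hψ.const_mul r
  have H := ((h1.add h2).sub h3).sub h4
  exact H.congr_deriv (by ring)

lemma hasDerivAt_lin (s w r : ℝ) (m M : ℝ) (ψ : ℝ → ℝ) (ψ' x : ℝ) (hψ : HasDerivAt ψ ψ' x) :
    HasDerivAt (fun y => (s - (M + m - 2*y)*w) - r * ψ y) (2*w - r*ψ') x := by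
  have h1 : HasDerivAt (fun y:ℝ => 2*y) (2*1) x := (hasDerivAt_id x).const_mul 2
  have h2 : HasDerivAt (fun y:ℝ => (M+m-2*y)*w) (-(2*1)*w) x := (h1.const_sub (M+m)).mul_const w
  have H := ((hasDerivAt_const x s).sub h2).sub (hψ.const_mul r)
  exact H.congr_deriv (by ring)

lemma deriv_setup (a b : ℝ) (φ : ℝ → ℝ) (hφ : ContDiffOn ℝ 3 φ (Set.Ioo a b))
    (hφ3 : ∀ x ∈ Set.Ioo a b, 0 ≤ iteratedDeriv 3 φ x) :
    (∀ x ∈ Ioo a b, HasDerivAt φ (deriv φ x) x)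
    ∧ (∀ x ∈ Ioo a b, HasDerivAt (deriv φ) (deriv (deriv φ) x) x)
    ∧ (∀ x ∈ Ioo a b, HasDerivAt (deriv (deriv φ)) (deriv (deriv (deriv φ)) x) x)
    ∧ (∀ x ∈ Ioo a b, 0 ≤ deriv (deriv (deriv φ)) x) := by
  have hopen : IsOpen (Ioo a b) := isOpen_Ioo
  have hφ' : ContDiffOn ℝ 2 (deriv φ) (Ioo a b) := hφ.deriv_of_isOpen hopen (by norm_num)
  have hφ'' : ContDiffOn ℝ 1 (deriv (deriv φ)) (Ioo a b) := hφ'.deriv_of_isOpen hopen (by norm_num)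
  refine ⟨?_, ?_, ?_, ?_⟩
  · intro x hx
    exact (((hφ.differentiableOn (by norm_num)) x hx).differentiableAt (hopen.mem_nhds hx)).hasDerivAt
  · intro x hx
    exact (((hφ'.differentiableOn (by norm_num)) x hx).differentiableAt (hopen.mem_nhds hx)).hasDerivAt
  · intro x hx
    exact (((hφ''.differentiableOn (by norm_num)) x hx).differentiableAt (hopen.mem_nhds hx)).hasDerivAt
  · intro x hx
    have := hφ3 x hx
    rwa [show (3:ℕ) = 0+1+1+1 from rfl, iteratedDeriv_succ, iteratedDeriv_succ,
      iteratedDeriv_succ, iteratedDeriv_zero] at this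

lemma pointwise_bounds (m M a b : ℝ) (hmM : m < M) (ham : a < m) (hMb : M < b)
    (φ : ℝ → ℝ) (hφ : ContDiffOn ℝ 3 φ (Set.Ioo a b))
    (hφ3 : ∀ x ∈ Set.Ioo a b, 0 ≤ iteratedDeriv 3 φ x) :
    ∀ x ∈ Icc m M,
      (0 ≤ ((M - x)*φ m + (x - m)*φ M - (M - x)*(x - m)*((φ M - φ m)/(M - m) - deriv φ m))
            - (M - m)*φ x)
      ∧ (0 ≤ -(((M - x)*φ m + (x - m)*φ M - (M - x)*(x - m)*(deriv φ M - (φ M - φ m)/(M - m)))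
            - (M - m)*φ x)) := by
  obtain ⟨hd0, hd1, hd2, h3⟩ := deriv_setup a b φ hφ hφ3
  have hd : (0:ℝ) < M - m := sub_pos.mpr hmM
  have sub : Icc m M ⊆ Ioo a b := fun x hx => ⟨lt_of_lt_of_le ham hx.1, lt_of_le_of_lt hx.2 hMb⟩
  have hΔ : (φ M - φ m)/(M - m) * (M - m) = φ M - φ m := div_mul_cancel₀ _ hd.ne'
  -- monotonicity of second derivative
  have hmono2 : ∀ x ∈ Icc m M, ∀ y ∈ Icc m M, x ≤ y →
      deriv (deriv φ) x ≤ deriv (deriv φ) y := by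
    intro x hx y hy hxy
    rcases eq_or_lt_of_le hxy with rfl | h
    · exact le_rfl
    · have subxy : Icc x y ⊆ Ioo a b := (Icc_subset_Icc hx.1 hy.2).trans sub
      obtain ⟨c, hc, hc'⟩ := exists_hasDerivAt_eq_slope (deriv (deriv φ))
        (deriv (deriv (deriv φ))) h
        (fun z hz => (hd2 z (subxy hz)).continuousAt.continuousWithinAt)
        (fun z hz => hd2 z (subxy (Ioo_subset_Icc_self hz)))
      have h0 := h3 c (subxy (Ioo_subset_Icc_self hc))
      rw [hc'] at h0
      have := mul_nonneg h0 (sub_pos.mpr h).le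
      rw [div_mul_cancel₀ _ (sub_ne_zero.mpr h.ne')] at this
      linarith
  intro x hx
  constructor
  · -- lower bound
    set c₁ := (φ M - φ m)/(M - m) - deriv φ m with hc₁
    exact core_nonneg m M hmM
      (fun y => ((M - y)*φ m + (y - m)*φ M - (M - y)*(y - m)*c₁) - (M - m)*φ y)
      (fun y => ((φ M - φ m) - (M + m - 2*y)*c₁) - (M - m)*deriv φ y)
      (fun y => 2*c₁ - (M - m)*deriv (deriv φ) y)
      (fun y hy => by
        exact hasDerivAt_quad m M (φ m) (φ M) c₁ (M - m) φ (deriv φ y) y (hd0 y (sub hy)))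
      (fun y hy => hasDerivAt_lin (φ M - φ m) c₁ (M - m) m M (deriv φ)
        (deriv (deriv φ) y) y (hd1 y (sub hy)))
      (fun u hu v hv huv => by
        have := hmono2 u hu v hv huv
        show 2*c₁ - (M - m)*deriv (deriv φ) v ≤ 2*c₁ - (M - m)*deriv (deriv φ) u
        nlinarith)
      (by ring)
      (by ring)
      (by rw [hc₁]; linear_combination -hΔ)
      x hx
  · -- upper bound
    set c₂ := deriv φ M - (φ M - φ m)/(M - m) with hc₂
    exact core_nonneg' m M hmM
      (fun y => -(((M - y)*φ m + (y - m)*φ M - (M - y)*(y - m)*c₂) - (M - m)*φ y))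
      (fun y => -(((φ M - φ m) - (M + m - 2*y)*c₂) - (M - m)*deriv φ y))
      (fun y => -(2*c₂ - (M - m)*deriv (deriv φ) y))
      (fun y hy => by
        exact (hasDerivAt_quad m M (φ m) (φ M) c₂ (M - m) φ (deriv φ y) y (hd0 y (sub hy))).neg)
      (fun y hy => (hasDerivAt_lin (φ M - φ m) c₂ (M - m) m M (deriv φ)
        (deriv (deriv φ) y) y (hd1 y (sub hy))).neg)
      (fun u hu v hv huv => by
        have := hmono2 u hu v hv huv
        show -(2*c₂ - (M - m)*deriv (deriv φ) u) ≤ -(2*c₂ - (M - m)*deriv (deriv φ) v)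
        nlinarith)
      (by ring)
      (by ring)
      (by rw [hc₂]; linear_combination hΔ)
      x hx

end ELRAux

/-- Edmundson–Lah–Ribarič type inequality for 3-convex functions
(Theorem 2.1 of the paper). -/
theorem elr_three_convex_tm1 {E : Type*} [Nonempty E] (L : Submodule ℝ (E → ℝ))
    (h1L : (fun _ : E => (1 : ℝ)) ∈ L)
    (A : L →ₗ[ℝ] ℝ)
    (hApos : ∀ g : L, (∀ t : E, 0 ≤ g.1 t) → 0 ≤ A g)
    (hAnorm : A ⟨fun _ => 1, h1L⟩ = 1)
    (m M : ℝ) (hmM : m < M)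
    (f : E → ℝ) (hfL : f ∈ L) (hfm : ∀ t, m ≤ f t) (hfM : ∀ t, f t ≤ M)
    (φ : ℝ → ℝ) (a b : ℝ) (ham : a < m) (hMb : M < b)
    (hφ : ContDiffOn ℝ 3 φ (Set.Ioo a b))
    (hφ3 : ∀ x ∈ Set.Ioo a b, 0 ≤ iteratedDeriv 3 φ x)
    (hφfL : (fun t => φ (f t)) ∈ L)
    (hKL : (fun t => (M - f t) * (f t - m)) ∈ L) :
    let Δ := (φ M - φ m) / (M - m)
    let K := A ⟨fun t => (M - f t) * (f t - m), hKL⟩ / (M - m)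
    K * (Δ - deriv φ m)
        ≤ (M - A ⟨f, hfL⟩) / (M - m) * φ m + (A ⟨f, hfL⟩ - m) / (M - m) * φ M
            - A ⟨fun t => φ (f t), hφfL⟩
      ∧ (M - A ⟨f, hfL⟩) / (M - m) * φ m + (A ⟨f, hfL⟩ - m) / (M - m) * φ M
            - A ⟨fun t => φ (f t), hφfL⟩
        ≤ K * (deriv φ M - Δ) := by

  intro Δ K
  have hΔdef : Δ = (φ M - φ m) / (M - m) := rfl
  have hKdef : K = A ⟨fun t => (M - f t) * (f t - m), hKL⟩ / (M - m) := rfl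
  rw [hΔdef, hKdef]
  have hd : (0:ℝ) < M - m := sub_pos.mpr hmM
  have pw := pointwise_bounds m M a b hmM ham hMb φ hφ hφ3
  set c₁ := (φ M - φ m)/(M - m) - deriv φ m with hc₁
  set c₂ := deriv φ M - (φ M - φ m)/(M - m) with hc₂
  set xA := A ⟨f, hfL⟩ with hxA
  set yA := A ⟨fun t => φ (f t), hφfL⟩ with hyA
  set zA := A ⟨fun t => (M - f t) * (f t - m), hKL⟩ with hzA
  -- lower bound element
  have hmem1 : (fun t => ((M - f t)*φ m + (f t - m)*φ M - (M - f t)*(f t - m)*c₁)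
      - (M - m)*φ (f t)) ∈ L := by
    have heq : (fun t => ((M - f t)*φ m + (f t - m)*φ M - (M - f t)*(f t - m)*c₁)
        - (M - m)*φ (f t))
        = (M*φ m - m*φ M) • (fun _ : E => (1:ℝ)) + (φ M - φ m) • f
          + (-c₁) • (fun t => (M - f t)*(f t - m)) + (-(M - m)) • (fun t => φ (f t)) := by
      funext t
      simp only [Pi.add_apply, Pi.smul_apply, smul_eq_mul]
      ring
    rw [heq]
    exact L.add_mem (L.add_mem (L.add_mem (L.smul_mem _ h1L) (L.smul_mem _ hfL))
      (L.smul_mem _ hKL)) (L.smul_mem _ hφfL)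
  have hel1 : (⟨_, hmem1⟩ : L)
      = (M*φ m - m*φ M) • (⟨fun _ => 1, h1L⟩ : L) + (φ M - φ m) • ⟨f, hfL⟩
        + (-c₁) • ⟨fun t => (M - f t)*(f t - m), hKL⟩ + (-(M - m)) • ⟨fun t => φ (f t), hφfL⟩ := by
    apply Subtype.ext
    funext t
    simp only [Submodule.coe_add, SetLike.val_smul, Pi.add_apply, Pi.smul_apply, smul_eq_mul]
    ring
  have hpos1 : 0 ≤ A ⟨_, hmem1⟩ :=
    hApos _ (fun t => (pw (f t) ⟨hfm t, hfM t⟩).1)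
  rw [hel1, map_add, map_add, map_add, map_smul, map_smul, map_smul, map_smul, hAnorm] at hpos1
  simp only [smul_eq_mul, ← hxA, ← hyA, ← hzA, mul_one] at hpos1
  -- upper bound element
  have hmem2 : (fun t => -(((M - f t)*φ m + (f t - m)*φ M - (M - f t)*(f t - m)*c₂)
      - (M - m)*φ (f t))) ∈ L := by
    have heq : (fun t => -(((M - f t)*φ m + (f t - m)*φ M - (M - f t)*(f t - m)*c₂)
        - (M - m)*φ (f t)))
        = (-(M*φ m - m*φ M)) • (fun _ : E => (1:ℝ)) + (φ m - φ M) • f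
          + c₂ • (fun t => (M - f t)*(f t - m)) + (M - m) • (fun t => φ (f t)) := by
      funext t
      simp only [Pi.add_apply, Pi.smul_apply, smul_eq_mul]
      ring
    rw [heq]
    exact L.add_mem (L.add_mem (L.add_mem (L.smul_mem _ h1L) (L.smul_mem _ hfL))
      (L.smul_mem _ hKL)) (L.smul_mem _ hφfL)
  have hel2 : (⟨_, hmem2⟩ : L)
      = (-(M*φ m - m*φ M)) • (⟨fun _ => 1, h1L⟩ : L) + (φ m - φ M) • ⟨f, hfL⟩
        + c₂ • ⟨fun t => (M - f t)*(f t - m), hKL⟩ + (M - m) • ⟨fun t => φ (f t), hφfL⟩ := by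
    apply Subtype.ext
    funext t
    simp only [Submodule.coe_add, SetLike.val_smul, Pi.add_apply, Pi.smul_apply, smul_eq_mul]
    ring
  have hpos2 : 0 ≤ A ⟨_, hmem2⟩ :=
    hApos _ (fun t => (pw (f t) ⟨hfm t, hfM t⟩).2)
  rw [hel2, map_add, map_add, map_add, map_smul, map_smul, map_smul, map_smul, hAnorm] at hpos2
  simp only [smul_eq_mul, ← hxA, ← hyA, ← hzA, mul_one] at hpos2
  have expand : ((M - xA) / (M - m) * φ m + (xA - m) / (M - m) * φ M - yA) * (M - m)
      = (M - xA)*φ m + (xA - m)*φ M - (M - m)*yA := by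
    field_simp
  constructor
  · conv_lhs => rw [div_mul_eq_mul_div]
    rw [div_le_iff₀ hd, expand]
    linarith [hpos1]
  · conv_rhs => rw [div_mul_eq_mul_div]
    rw [le_div_iff₀ hd, expand]
    linarith [hpos2]
end

section
/- Let φ : ℝ → ℝ be three times continuously differentiable on an open interval containing [m,M] with φ''' ≥ 0 there (φ is 3-convex). Suppose φ∘f ∈ L and the functions t ↦ (f(t) − m)·φ'(f(t)) and t ↦ (M − f(t))·φ'(f(t)) belong to L. Then, writing Δ = (φ(M) − φ(m))/(M − m), one has (A(f) − m)·[Δ − φ'(m)/2] − (1/2)·A((f − m·1)·(φ'∘f)) ≤ (M − A(f))/(M − m)·φ(m) + (A(f) − m)/(M − m)·φ(M) − A(φ∘f) ≤ (1/2)·A((M·1 − f)·(φ'∘f)) − (M − A(f))·[Δ − φ'(M)/2]. -/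
set_option maxHeartbeats 1000000

open Set

/-- Trapezoid inequality for functions with convex derivative (φ''' ≥ 0). -/
lemma trapezoid_aux {a b : ℝ} {φ : ℝ → ℝ}
    (hφ : ContDiffOn ℝ 3 φ (Set.Ioo a b))
    (hφ3 : ∀ x ∈ Set.Ioo a b, 0 ≤ iteratedDeriv 3 φ x)
    {u v : ℝ} (hu : u ∈ Set.Ioo a b) (hv : v ∈ Set.Ioo a b) (huv : u ≤ v) :
    φ v - φ u ≤ (v - u) * (deriv φ u + deriv φ v) / 2 := by
  have hO : IsOpen (Ioo a b) := isOpen_Ioo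
  have hd0 : ∀ x ∈ Ioo a b, HasDerivAt φ (deriv φ x) x := fun x hx =>
    ((hφ.differentiableOn (by norm_num)).differentiableAt (hO.mem_nhds hx)).hasDerivAt
  have hφ1 : ContDiffOn ℝ 2 (deriv φ) (Ioo a b) := hφ.deriv_of_isOpen hO (by norm_num)
  have hd1 : ∀ x ∈ Ioo a b, HasDerivAt (deriv φ) (deriv (deriv φ) x) x := fun x hx =>
    ((hφ1.differentiableOn (by norm_num)).differentiableAt (hO.mem_nhds hx)).hasDerivAt
  have hφ2 : ContDiffOn ℝ 1 (deriv (deriv φ)) (Ioo a b) := hφ1.deriv_of_isOpen hO (by norm_num)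
  have hmono : MonotoneOn (deriv (deriv φ)) (Ioo a b) := by
    apply monotoneOn_of_deriv_nonneg (convex_Ioo a b) (hφ2.continuousOn)
    · rw [interior_Ioo]; exact hφ2.differentiableOn (by norm_num)
    · intro x hx
      rw [interior_Ioo] at hx
      have h3 := hφ3 x hx
      simpa [iteratedDeriv_succ, iteratedDeriv_zero] using h3
  have tangent : ∀ p ∈ Ioo a b, ∀ q ∈ Ioo a b, p ≤ q →
      deriv φ q - deriv φ p ≤ (q - p) * deriv (deriv φ) q := by
    intro p hp q hq hpq
    rcases eq_or_lt_of_le hpq with rfl | h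
    · simp
    · have hsub : Icc p q ⊆ Ioo a b := Icc_subset_Ioo hp.1 hq.2
      obtain ⟨c, hc, hceq⟩ := exists_hasDerivAt_eq_slope (deriv φ) (deriv (deriv φ)) h
        (fun x hx => ((hd1 x (hsub hx)).continuousAt).continuousWithinAt)
        (fun x hx => hd1 x (hsub (Ioo_subset_Icc_self hx)))
      have hcle : deriv (deriv φ) c ≤ deriv (deriv φ) q :=
        hmono (hsub (Ioo_subset_Icc_self hc)) hq hc.2.le
      have hne : q - p ≠ 0 := by linarith
      have h1 : deriv φ q - deriv φ p = (q - p) * deriv (deriv φ) c := by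
        rw [hceq]; field_simp
      have h2 := mul_le_mul_of_nonneg_left hcle (by linarith : (0:ℝ) ≤ q - p)
      linarith
  rcases eq_or_lt_of_le huv with rfl | h
  · simp
  · set ψ : ℝ → ℝ := fun w => (w - u) * (deriv φ u + deriv φ w) / 2 - φ w with hψ
    have hψd : ∀ w ∈ Ioo a b, HasDerivAt ψ
        ((1 * (deriv φ u + deriv φ w) + (w - u) * deriv (deriv φ) w) / 2 - deriv φ w) w := by
      intro w hw
      have h := ((((hasDerivAt_id w).sub_const u).mul
        ((hasDerivAt_const w (deriv φ u)).add (hd1 w hw))).div_const 2).sub (hd0 w hw)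
      exact h.congr_deriv (by simp)
    have hsub : Icc u v ⊆ Ioo a b := Icc_subset_Ioo hu.1 hv.2
    have hmonoψ : MonotoneOn ψ (Icc u v) := by
      apply monotoneOn_of_deriv_nonneg (convex_Icc u v)
      · exact fun w hw => ((hψd w (hsub hw)).differentiableAt).continuousAt.continuousWithinAt
      · rw [interior_Icc]
        exact fun w hw => ((hψd w (hsub (Ioo_subset_Icc_self hw))).differentiableAt).differentiableWithinAt
      · rw [interior_Icc]
        intro w hw
        have hwm : w ∈ Ioo a b := hsub (Ioo_subset_Icc_self hw)
        rw [(hψd w hwm).deriv]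
        have ht := tangent u hu w hwm hw.1.le
        nlinarith
    have := hmonoψ (left_mem_Icc.2 huv) (right_mem_Icc.2 huv) huv
    simp only [hψ] at this
    nlinarith [this]

/-- Edmundson–Lah–Ribarič type inequality for 3-convex functions
(Theorem 2.2 of the paper). -/
theorem elr_three_convex_tm2 {E : Type*} [Nonempty E] (L : Submodule ℝ (E → ℝ))
    (h1L : (fun _ : E => (1 : ℝ)) ∈ L)
    (A : L →ₗ[ℝ] ℝ)
    (hApos : ∀ g : L, (∀ t : E, 0 ≤ g.1 t) → 0 ≤ A g)
    (hAnorm : A ⟨fun _ => 1, h1L⟩ = 1)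
    (m M : ℝ) (hmM : m < M)
    (f : E → ℝ) (hfL : f ∈ L) (hfm : ∀ t, m ≤ f t) (hfM : ∀ t, f t ≤ M)
    (φ : ℝ → ℝ) (a b : ℝ) (ham : a < m) (hMb : M < b)
    (hφ : ContDiffOn ℝ 3 φ (Set.Ioo a b))
    (hφ3 : ∀ x ∈ Set.Ioo a b, 0 ≤ iteratedDeriv 3 φ x)
    (hφfL : (fun t => φ (f t)) ∈ L)
    (hg1L : (fun t => (f t - m) * deriv φ (f t)) ∈ L)
    (hg2L : (fun t => (M - f t) * deriv φ (f t)) ∈ L) :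
    let Δ := (φ M - φ m) / (M - m)
    (A ⟨f, hfL⟩ - m) * (Δ - deriv φ m / 2)
          - (1 / 2) * A ⟨fun t => (f t - m) * deriv φ (f t), hg1L⟩
        ≤ (M - A ⟨f, hfL⟩) / (M - m) * φ m + (A ⟨f, hfL⟩ - m) / (M - m) * φ M
            - A ⟨fun t => φ (f t), hφfL⟩
      ∧ (M - A ⟨f, hfL⟩) / (M - m) * φ m + (A ⟨f, hfL⟩ - m) / (M - m) * φ M
            - A ⟨fun t => φ (f t), hφfL⟩
        ≤ (1 / 2) * A ⟨fun t => (M - f t) * deriv φ (f t), hg2L⟩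
            - (M - A ⟨f, hfL⟩) * (Δ - deriv φ M / 2) := by
  intro Δ
  have hΔ : Δ = (φ M - φ m) / (M - m) := rfl
  have hMm : (0:ℝ) < M - m := by linarith
  have hMm' : M - m ≠ 0 := ne_of_gt hMm
  have hmm : m ∈ Ioo a b := ⟨ham, lt_trans hmM hMb⟩
  have hMM : M ∈ Ioo a b := ⟨lt_trans ham hmM, hMb⟩
  have hft : ∀ t, f t ∈ Ioo a b := fun t =>
    ⟨lt_of_lt_of_le ham (hfm t), lt_of_le_of_lt (hfM t) hMb⟩
  have hAle : ∀ (g h : L), (∀ t, g.1 t ≤ h.1 t) → A g ≤ A h := by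
    intro g h hle
    have h0 : (0:ℝ) ≤ A (h - g) := hApos _ (fun t => by
      have := hle t
      simp only [Submodule.coe_sub, Pi.sub_apply]
      linarith)
    rw [map_sub] at h0; linarith
  set oneE : L := ⟨fun _ => 1, h1L⟩ with honeE
  set fE : L := ⟨f, hfL⟩ with hfE
  set g1E : L := ⟨fun t => (f t - m) * deriv φ (f t), hg1L⟩ with hg1E
  set g2E : L := ⟨fun t => (M - f t) * deriv φ (f t), hg2L⟩ with hg2E
  set φfE : L := ⟨fun t => φ (f t), hφfL⟩ with hφfE
  set rhsE : L := (φ m / (M - m)) • (M • oneE - fE) + (φ M / (M - m)) • (fE - m • oneE) - φfE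
    with hrhsE
  have hArhs : A rhsE = (M - A fE) / (M - m) * φ m + (A fE - m) / (M - m) * φ M - A φfE := by
    simp only [hrhsE, map_sub, map_add, map_smul, smul_eq_mul, hAnorm]
    field_simp
  constructor
  · set lhsE : L := (Δ - deriv φ m / 2) • fE - (m * (Δ - deriv φ m / 2)) • oneE
      - (1/2 : ℝ) • g1E with hlhsE
    have hAlhs : A lhsE = (A fE - m) * (Δ - deriv φ m / 2) - (1/2) * A g1E := by
      simp only [hlhsE, map_sub, map_smul, smul_eq_mul, hAnorm]
      ring
    have hle : A lhsE ≤ A rhsE := by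
      apply hAle
      intro t
      simp only [hlhsE, hrhsE, honeE, hfE, hg1E, hφfE, Submodule.coe_sub, Submodule.coe_add,
        Submodule.coe_smul, Pi.sub_apply, Pi.add_apply, Pi.smul_apply, smul_eq_mul]
      have htrap := trapezoid_aux hφ hφ3 hmm (hft t) (hfm t)
      have hid : φ m / (M - m) * (M * 1 - f t) + φ M / (M - m) * (f t - m * 1)
          = φ m + (f t - m) * Δ := by
        rw [hΔ]; field_simp; ring
      rw [hid]
      nlinarith [htrap]
    rw [hAlhs, hArhs] at hle
    exact hle
  · set lhs2E : L := (1/2 : ℝ) • g2E - (Δ - deriv φ M / 2) • (M • oneE - fE) with hlhs2E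
    have hAlhs2 : A lhs2E = (1/2) * A g2E - (M - A fE) * (Δ - deriv φ M / 2) := by
      simp only [hlhs2E, map_sub, map_smul, smul_eq_mul, hAnorm]
      ring
    have hle : A rhsE ≤ A lhs2E := by
      apply hAle
      intro t
      simp only [hlhs2E, hrhsE, honeE, hfE, hg2E, hφfE, Submodule.coe_sub, Submodule.coe_add,
        Submodule.coe_smul, Pi.sub_apply, Pi.add_apply, Pi.smul_apply, smul_eq_mul]
      have htrap := trapezoid_aux hφ hφ3 (hft t) hMM (hfM t)
      have hid : φ m / (M - m) * (M * 1 - f t) + φ M / (M - m) * (f t - m * 1)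
          = φ m + (f t - m) * Δ := by
        rw [hΔ]; field_simp; ring
      rw [hid]
      have hΔ' : Δ * (M - m) = φ M - φ m := by rw [hΔ]; field_simp
      nlinarith [htrap, hΔ']
    rw [hAlhs2, hArhs] at hle
    exact hle
end

section
/- Let φ : ℝ → ℝ be three times continuously differentiable on an open interval containing [m,M] with φ''' ≥ 0 there (φ is 3-convex). Suppose φ∘f ∈ L and the functions t ↦ (M − f(t))² and t ↦ (f(t) − m)² belong to L. Then, writing Δ = (φ(M) − φ(m))/(M − m), one has (M − A(f))·[φ'(M) − Δ] − (φ''(M)/2)·A((M·1 − f)²) ≤ (M − A(f))/(M − m)·φ(m) + (A(f) − m)/(M − m)·φ(M) − A(φ∘f) ≤ (A(f) − m)·[Δ − φ'(m)] − (φ''(m)/2)·A((f − m·1)²). -/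
open Set

lemma elr_aux_pointwise (φ : ℝ → ℝ) (a b m M : ℝ) (ham : a < m) (hMb : M < b) (hmM : m < M)
    (hφ : ContDiffOn ℝ 3 φ (Set.Ioo a b))
    (hφ3 : ∀ x ∈ Set.Ioo a b, 0 ≤ iteratedDeriv 3 φ x) :
    ∀ x ∈ Set.Icc m M,
      ((M - x) * (deriv φ M - (φ M - φ m) / (M - m)) - iteratedDeriv 2 φ M / 2 * (M - x) ^ 2
        ≤ (M - x) / (M - m) * φ m + (x - m) / (M - m) * φ M - φ x)
      ∧ ((M - x) / (M - m) * φ m + (x - m) / (M - m) * φ M - φ x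
        ≤ (x - m) * ((φ M - φ m) / (M - m) - deriv φ m)
            - iteratedDeriv 2 φ m / 2 * (x - m) ^ 2) := by
  have hs : IsOpen (Ioo a b) := isOpen_Ioo
  have hsub : Icc m M ⊆ Ioo a b := fun x hx => ⟨lt_of_lt_of_le ham hx.1, lt_of_le_of_lt hx.2 hMb⟩
  have hmem : ∀ x ∈ Icc m M, x ∈ Ioo a b := fun x hx => hsub hx
  have hMm : (0:ℝ) < M - m := sub_pos.2 hmM
  have hne : M - m ≠ 0 := ne_of_gt hMm
  set Δ : ℝ := (φ M - φ m) / (M - m) with hΔ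
  have hφ1 : ContDiffOn ℝ 2 (deriv φ) (Ioo a b) := hφ.deriv_of_isOpen hs (by norm_num)
  have hφ2 : ContDiffOn ℝ 1 (deriv (deriv φ)) (Ioo a b) := hφ1.deriv_of_isOpen hs (by norm_num)
  have h2eq : iteratedDeriv 2 φ = deriv (deriv φ) := by
    rw [show (2:ℕ) = 1 + 1 from rfl, iteratedDeriv_succ, iteratedDeriv_one]
  have h3eq : iteratedDeriv 3 φ = deriv (deriv (deriv φ)) := by
    rw [show (3:ℕ) = 2 + 1 from rfl, iteratedDeriv_succ, h2eq]
  have hF1 : ∀ x ∈ Ioo a b, HasDerivAt φ (deriv φ x) x := fun x hx =>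
    (((hφ.differentiableOn (by norm_num)) x hx).differentiableAt (hs.mem_nhds hx)).hasDerivAt
  have hF2 : ∀ x ∈ Ioo a b, HasDerivAt (deriv φ) (iteratedDeriv 2 φ x) x := fun x hx => by
    rw [h2eq]
    exact (((hφ1.differentiableOn (by norm_num)) x hx).differentiableAt (hs.mem_nhds hx)).hasDerivAt
  have hmono : MonotoneOn (iteratedDeriv 2 φ) (Ioo a b) := by
    rw [h2eq]
    apply monotoneOn_of_deriv_nonneg (convex_Ioo a b) hφ2.continuousOn
    · rw [interior_Ioo]
      exact hφ2.differentiableOn (by norm_num)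
    · intro x hx
      rw [interior_Ioo] at hx
      have h := hφ3 x hx
      rw [h3eq] at h
      exact h
  have lemA : ∀ x ∈ Icc m M, deriv φ M - deriv φ x ≤ iteratedDeriv 2 φ M * (M - x) := by
    intro x hx
    rcases eq_or_lt_of_le hx.2 with h | h
    · rw [h]; simp
    · have hIcc : Icc x M ⊆ Ioo a b := fun y hy =>
        ⟨lt_of_lt_of_le (lt_of_lt_of_le ham hx.1) hy.1, lt_of_le_of_lt hy.2 hMb⟩
      have hcont : ContinuousOn (deriv φ) (Icc x M) := (hφ1.continuousOn).mono hIcc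
      obtain ⟨c, hc, hceq⟩ := exists_hasDerivAt_eq_slope (deriv φ) (iteratedDeriv 2 φ) h hcont
        (fun y hy => hF2 y (hIcc (Ioo_subset_Icc_self hy)))
      have hcM : iteratedDeriv 2 φ c ≤ iteratedDeriv 2 φ M :=
        hmono (hIcc (Ioo_subset_Icc_self hc)) (hmem M (right_mem_Icc.2 hmM.le)) hc.2.le
      rw [hceq] at hcM
      have h2 := mul_le_mul_of_nonneg_right hcM (by linarith : (0:ℝ) ≤ M - x)
      rw [div_mul_cancel₀] at h2
      · linarith
      · intro hcon; rw [sub_eq_zero] at hcon; exact absurd hcon.symm (ne_of_lt h)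
  have lemB : ∀ x ∈ Icc m M, iteratedDeriv 2 φ m * (x - m) ≤ deriv φ x - deriv φ m := by
    intro x hx
    rcases eq_or_lt_of_le hx.1 with h | h
    · rw [← h]; simp
    · have hIcc : Icc m x ⊆ Ioo a b := fun y hy =>
        ⟨lt_of_lt_of_le ham hy.1, lt_of_le_of_lt (le_trans hy.2 hx.2) hMb⟩
      have hcont : ContinuousOn (deriv φ) (Icc m x) := (hφ1.continuousOn).mono hIcc
      obtain ⟨c, hc, hceq⟩ := exists_hasDerivAt_eq_slope (deriv φ) (iteratedDeriv 2 φ) h hcont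
        (fun y hy => hF2 y (hIcc (Ioo_subset_Icc_self hy)))
      have hmc : iteratedDeriv 2 φ m ≤ iteratedDeriv 2 φ c :=
        hmono (hmem m (left_mem_Icc.2 hmM.le)) (hIcc (Ioo_subset_Icc_self hc)) hc.1.le
      rw [hceq] at hmc
      have h2 := mul_le_mul_of_nonneg_right hmc (by linarith : (0:ℝ) ≤ x - m)
      rw [div_mul_cancel₀] at h2
      · linarith
      · intro hcon; rw [sub_eq_zero] at hcon; exact absurd hcon.symm (ne_of_lt h)
  set H : ℝ → ℝ := fun x => (M - x) / (M - m) * φ m + (x - m) / (M - m) * φ M - φ x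
      - ((M - x) * (deriv φ M - Δ) - iteratedDeriv 2 φ M / 2 * (M - x) ^ 2) with hHdef
  set K : ℝ → ℝ := fun x => (x - m) * (Δ - deriv φ m) - iteratedDeriv 2 φ m / 2 * (x - m) ^ 2
      - ((M - x) / (M - m) * φ m + (x - m) / (M - m) * φ M - φ x) with hKdef
  have hHd : ∀ x ∈ Ioo a b, HasDerivAt H
      (deriv φ M - deriv φ x - iteratedDeriv 2 φ M * (M - x)) x := by
    intro x hx
    have hid : HasDerivAt (fun y : ℝ => y) 1 x := hasDerivAt_id x
    have e1 : HasDerivAt (fun y : ℝ => (M - y) / (M - m) * φ m) (-1 / (M - m) * φ m) x :=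
      ((hid.const_sub M).div_const (M - m)).mul_const (φ m)
    have e2 : HasDerivAt (fun y : ℝ => (y - m) / (M - m) * φ M) (1 / (M - m) * φ M) x :=
      ((hid.sub_const m).div_const (M - m)).mul_const (φ M)
    have e4 : HasDerivAt (fun y : ℝ => (M - y) * (deriv φ M - Δ)) (-1 * (deriv φ M - Δ)) x :=
      (hid.const_sub M).mul_const _
    have e5 : HasDerivAt (fun y : ℝ => (M - y) ^ 2) ((2:ℕ) * (M - x) ^ (2 - 1) * -1) x :=
      (hid.const_sub M).pow 2
    have e6 := e5.const_mul (iteratedDeriv 2 φ M / 2)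
    have hH := ((e1.add e2).sub (hF1 x hx)).sub (e4.sub e6)
    refine hH.congr_deriv ?_
    rw [hΔ]
    field_simp
    ring
  have hKd : ∀ x ∈ Ioo a b, HasDerivAt K
      (deriv φ x - deriv φ m - iteratedDeriv 2 φ m * (x - m)) x := by
    intro x hx
    have hid : HasDerivAt (fun y : ℝ => y) 1 x := hasDerivAt_id x
    have e1 : HasDerivAt (fun y : ℝ => (M - y) / (M - m) * φ m) (-1 / (M - m) * φ m) x :=
      ((hid.const_sub M).div_const (M - m)).mul_const (φ m)
    have e2 : HasDerivAt (fun y : ℝ => (y - m) / (M - m) * φ M) (1 / (M - m) * φ M) x :=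
      ((hid.sub_const m).div_const (M - m)).mul_const (φ M)
    have e4 : HasDerivAt (fun y : ℝ => (y - m) * (Δ - deriv φ m)) (1 * (Δ - deriv φ m)) x :=
      (hid.sub_const m).mul_const _
    have e5 : HasDerivAt (fun y : ℝ => (y - m) ^ 2) ((2:ℕ) * (x - m) ^ (2 - 1) * 1) x :=
      (hid.sub_const m).pow 2
    have e6 := e5.const_mul (iteratedDeriv 2 φ m / 2)
    have hK := (e4.sub e6).sub (((e1.add e2).sub (hF1 x hx)))
    refine hK.congr_deriv ?_
    rw [hΔ]
    field_simp
    ring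
  have Hanti : AntitoneOn H (Icc m M) := by
    apply antitoneOn_of_deriv_nonpos (convex_Icc m M)
    · exact fun x hx => ((hHd x (hsub hx)).continuousAt).continuousWithinAt
    · rw [interior_Icc]
      exact fun x hx =>
        ((hHd x (hsub (Ioo_subset_Icc_self hx))).differentiableAt).differentiableWithinAt
    · intro x hx
      rw [interior_Icc] at hx
      rw [(hHd x (hsub (Ioo_subset_Icc_self hx))).deriv]
      have := lemA x (Ioo_subset_Icc_self hx)
      linarith
  have Kmono : MonotoneOn K (Icc m M) := by
    apply monotoneOn_of_deriv_nonneg (convex_Icc m M)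
    · exact fun x hx => ((hKd x (hsub hx)).continuousAt).continuousWithinAt
    · rw [interior_Icc]
      exact fun x hx =>
        ((hKd x (hsub (Ioo_subset_Icc_self hx))).differentiableAt).differentiableWithinAt
    · intro x hx
      rw [interior_Icc] at hx
      rw [(hKd x (hsub (Ioo_subset_Icc_self hx))).deriv]
      have := lemB x (Ioo_subset_Icc_self hx)
      linarith
  have hHM : H M = 0 := by
    simp only [hHdef, sub_self]
    field_simp
    ring
  have hKm : K m = 0 := by
    simp only [hKdef, sub_self]
    field_simp
    ring
  intro x hx
  have h0H : (0:ℝ) ≤ H x := by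
    have h1 := Hanti hx (right_mem_Icc.2 hmM.le) hx.2
    rw [hHM] at h1
    exact h1
  have h0K : (0:ℝ) ≤ K x := by
    have h1 := Kmono (left_mem_Icc.2 hmM.le) hx hx.1
    rw [hKm] at h1
    exact h1
  simp only [hHdef] at h0H
  simp only [hKdef] at h0K
  constructor
  · linarith
  · linarith

/-- Edmundson–Lah–Ribarič type inequality for 3-convex functions
(Theorem 2.3 of the paper). -/
theorem elr_three_convex_tm3 {E : Type*} [Nonempty E] (L : Submodule ℝ (E → ℝ))
    (h1L : (fun _ : E => (1 : ℝ)) ∈ L)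
    (A : L →ₗ[ℝ] ℝ)
    (hApos : ∀ g : L, (∀ t : E, 0 ≤ g.1 t) → 0 ≤ A g)
    (hAnorm : A ⟨fun _ => 1, h1L⟩ = 1)
    (m M : ℝ) (hmM : m < M)
    (f : E → ℝ) (hfL : f ∈ L) (hfm : ∀ t, m ≤ f t) (hfM : ∀ t, f t ≤ M)
    (φ : ℝ → ℝ) (a b : ℝ) (ham : a < m) (hMb : M < b)
    (hφ : ContDiffOn ℝ 3 φ (Set.Ioo a b))
    (hφ3 : ∀ x ∈ Set.Ioo a b, 0 ≤ iteratedDeriv 3 φ x)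
    (hφfL : (fun t => φ (f t)) ∈ L)
    (hg1L : (fun t => (M - f t) ^ 2) ∈ L)
    (hg2L : (fun t => (f t - m) ^ 2) ∈ L) :
    let Δ := (φ M - φ m) / (M - m)
    (M - A ⟨f, hfL⟩) * (deriv φ M - Δ)
          - iteratedDeriv 2 φ M / 2 * A ⟨fun t => (M - f t) ^ 2, hg1L⟩
        ≤ (M - A ⟨f, hfL⟩) / (M - m) * φ m + (A ⟨f, hfL⟩ - m) / (M - m) * φ M
            - A ⟨fun t => φ (f t), hφfL⟩
      ∧ (M - A ⟨f, hfL⟩) / (M - m) * φ m + (A ⟨f, hfL⟩ - m) / (M - m) * φ M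
            - A ⟨fun t => φ (f t), hφfL⟩
        ≤ (A ⟨f, hfL⟩ - m) * (Δ - deriv φ m)
            - iteratedDeriv 2 φ m / 2 * A ⟨fun t => (f t - m) ^ 2, hg2L⟩ := by
  intro Δ
  have hMm : (0:ℝ) < M - m := sub_pos.2 hmM
  have hne : M - m ≠ 0 := ne_of_gt hMm
  have hΔ : Δ = (φ M - φ m) / (M - m) := rfl
  have aux := elr_aux_pointwise φ a b m M ham hMb hmM hφ hφ3
  set one : L := ⟨fun _ => 1, h1L⟩ with hone
  set fL : L := ⟨f, hfL⟩ with hfLdef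
  set φf : L := ⟨fun t => φ (f t), hφfL⟩ with hφfdef
  set q1 : L := ⟨fun t => (M - f t) ^ 2, hg1L⟩ with hq1def
  set q2 : L := ⟨fun t => (f t - m) ^ 2, hg2L⟩ with hq2def
  set c0 : ℝ := (M * φ m - m * φ M) / (M - m) - M * (deriv φ M - Δ) with hc0
  set d0 : ℝ := -m * (Δ - deriv φ m) - (M * φ m - m * φ M) / (M - m) with hd0
  have key1 : ∀ x : ℝ, c0 + deriv φ M * x + iteratedDeriv 2 φ M / 2 * (M - x) ^ 2 - φ x
      = ((M - x) / (M - m) * φ m + (x - m) / (M - m) * φ M - φ x)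
        - ((M - x) * (deriv φ M - Δ) - iteratedDeriv 2 φ M / 2 * (M - x) ^ 2) := by
    intro x
    rw [hc0, hΔ]
    field_simp
    ring
  have key2 : ∀ x : ℝ, d0 - deriv φ m * x - iteratedDeriv 2 φ m / 2 * (x - m) ^ 2 + φ x
      = ((x - m) * (Δ - deriv φ m) - iteratedDeriv 2 φ m / 2 * (x - m) ^ 2)
        - ((M - x) / (M - m) * φ m + (x - m) / (M - m) * φ M - φ x) := by
    intro x
    rw [hd0, hΔ]
    field_simp
    ring
  set vL : L := c0 • one + deriv φ M • fL + (iteratedDeriv 2 φ M / 2) • q1 - φf with hvL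
  set wL : L := d0 • one + (-(deriv φ m)) • fL + (-(iteratedDeriv 2 φ m / 2)) • q2 + φf with hwL
  have hvco : ∀ t : E, (vL : E → ℝ) t
      = c0 + deriv φ M * f t + iteratedDeriv 2 φ M / 2 * (M - f t) ^ 2 - φ (f t) := by
    intro t
    simp [hvL, hone, hfLdef, hφfdef, hq1def]
  have hwco : ∀ t : E, (wL : E → ℝ) t
      = d0 - deriv φ m * f t - iteratedDeriv 2 φ m / 2 * (f t - m) ^ 2 + φ (f t) := by
    intro t
    simp [hwL, hone, hfLdef, hφfdef, hq2def]
    ring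
  have hv0 : 0 ≤ A vL := by
    apply hApos
    intro t
    have h := (aux (f t) ⟨hfm t, hfM t⟩).1
    have hc : vL.1 t = (vL : E → ℝ) t := rfl
    rw [hc, hvco t, key1 (f t), hΔ] at *
    linarith
  have hw0 : 0 ≤ A wL := by
    apply hApos
    intro t
    have h := (aux (f t) ⟨hfm t, hfM t⟩).2
    have hc : wL.1 t = (wL : E → ℝ) t := rfl
    rw [hc, hwco t, key2 (f t), hΔ] at *
    linarith
  have hAv : A vL = c0 + deriv φ M * A fL + iteratedDeriv 2 φ M / 2 * A q1 - A φf := by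
    rw [hvL]
    simp [map_add, map_sub, map_smul, hAnorm]
  have hAw : A wL = d0 - deriv φ m * A fL - iteratedDeriv 2 φ m / 2 * A q2 + A φf := by
    rw [hwL]
    simp [map_add, map_sub, map_smul, hAnorm]
    ring
  rw [hAv] at hv0
  rw [hAw] at hw0
  constructor
  · have h := key1 (A fL)
    linarith [h, hv0]
  · have h := key2 (A fL)
    linarith [h, hw0]
end

section
/- Let φ : ℝ → ℝ be three times continuously differentiable on an open interval containing [m,M] with φ''' ≥ 0 there (φ is 3-convex). Suppose φ∘f ∈ L and the functions t ↦ (f(t) − m)·φ'(f(t)) and t ↦ (M − f(t))·φ'(f(t)) belong to L. Then A(f) ∈ [m,M] and, writing Δ = (φ(M) − φ(m))/(M − m), the Jensen-type bounds hold: (A(f) − m)·[Δ − (φ'(A(f)) + φ'(m))/2] + (M − A(f))·[Δ − φ'(M)/2] − (1/2)·A((M·1 − f)·(φ'∘f)) ≤ A(φ∘f) − φ(A(f)) ≤ (M − A(f))·[(φ'(A(f)) + φ'(M))/2 − Δ] − (A(f) − m)·[Δ − φ'(m)/2] + (1/2)·A((f − m·1)·(φ'∘f)). -/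
set_option maxHeartbeats 1000000

open Set

/-- Trapezoid estimate for a 3-convex function. -/
lemma trap_of_three_convex {φ : ℝ → ℝ} {a b : ℝ}
    (hφ : ContDiffOn ℝ 3 φ (Set.Ioo a b))
    (hφ3 : ∀ x ∈ Set.Ioo a b, 0 ≤ iteratedDeriv 3 φ x)
    {u v : ℝ} (hu : u ∈ Set.Ioo a b) (hv : v ∈ Set.Ioo a b) (huv : u ≤ v) :
    φ v - φ u ≤ (v - u) * (deriv φ u + deriv φ v) / 2 := by
  rcases eq_or_lt_of_le huv with rfl | huv
  · simp
  have hs : IsOpen (Set.Ioo a b) := isOpen_Ioo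
  have hconv : Convex ℝ (Set.Ioo a b) := convex_Ioo a b
  -- differentiability facts
  have hφd : DifferentiableOn ℝ φ (Set.Ioo a b) := hφ.differentiableOn (by norm_num)
  have hg : ContDiffOn ℝ 2 (deriv φ) (Set.Ioo a b) :=
    hφ.deriv_of_isOpen hs (by norm_num)
  have hgd : DifferentiableOn ℝ (deriv φ) (Set.Ioo a b) := hg.differentiableOn (by norm_num)
  have hg' : ContDiffOn ℝ 1 (deriv (deriv φ)) (Set.Ioo a b) :=
    hg.deriv_of_isOpen hs (by norm_num)
  have hg'd : DifferentiableOn ℝ (deriv (deriv φ)) (Set.Ioo a b) :=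
    hg'.differentiableOn (by norm_num)
  have h3 : ∀ x ∈ Set.Ioo a b, 0 ≤ deriv (deriv (deriv φ)) x := by
    intro x hx
    have := hφ3 x hx
    rwa [show (3 : ℕ) = 2 + 1 from rfl, iteratedDeriv_succ,
      show (2 : ℕ) = 1 + 1 from rfl, iteratedDeriv_succ, iteratedDeriv_one] at this
  -- deriv (deriv φ) is monotone on Ioo a b
  have hmono : MonotoneOn (deriv (deriv φ)) (Set.Ioo a b) := by
    apply monotoneOn_of_deriv_nonneg hconv hg'd.continuousOn
    · rw [hs.interior_eq]; exact hg'd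
    · rw [hs.interior_eq]; exact h3
  -- key pointwise bound: deriv φ x - deriv φ u ≤ (x - u) * deriv (deriv φ) x
  have key : ∀ x ∈ Set.Ioo u v, deriv φ x - deriv φ u ≤ (x - u) * deriv (deriv φ) x := by
    intro x hx
    have hxs : x ∈ Set.Ioo a b := ⟨hu.1.trans hx.1, hx.2.trans hv.2⟩
    have hsub : Set.Icc u x ⊆ Set.Ioo a b := fun y hy =>
      ⟨hu.1.trans_le hy.1, lt_of_le_of_lt hy.2 hxs.2⟩
    obtain ⟨c, hc, hceq⟩ := exists_deriv_eq_slope (deriv φ) hx.1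
      (hgd.continuousOn.mono hsub)
      (hgd.mono (fun y hy => hsub (Set.Ioo_subset_Icc_self hy)))
    have hcs : c ∈ Set.Ioo a b := hsub (Set.Ioo_subset_Icc_self hc)
    have hle : deriv (deriv φ) c ≤ deriv (deriv φ) x := hmono hcs hxs hc.2.le
    have hxu : (0:ℝ) < x - u := sub_pos.2 hx.1
    have : deriv φ x - deriv φ u = (x - u) * deriv (deriv φ) c := by
      field_simp at hceq; linarith [hceq]
    rw [this]
    exact mul_le_mul_of_nonneg_left hle hxu.le
  -- the auxiliary function ψ is antitone on [u, v]
  set ψ : ℝ → ℝ := fun x => φ x - (x - u) * (deriv φ u + deriv φ x) / 2 with hψ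
  have hsub : Set.Icc u v ⊆ Set.Ioo a b := fun y hy =>
    ⟨hu.1.trans_le hy.1, lt_of_le_of_lt hy.2 hv.2⟩
  have hψd : ∀ x ∈ Set.Ioo a b, HasDerivAt ψ
      ((deriv φ x - deriv φ u - (x - u) * deriv (deriv φ) x) / 2) x := by
    intro x hx
    have h1 : HasDerivAt φ (deriv φ x) x :=
      (hφd.differentiableAt (hs.mem_nhds hx)).hasDerivAt
    have h2 : HasDerivAt (deriv φ) (deriv (deriv φ) x) x :=
      (hgd.differentiableAt (hs.mem_nhds hx)).hasDerivAt
    have h3 : HasDerivAt (fun y => (y - u) * (deriv φ u + deriv φ y) / 2)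
        ((1 * (deriv φ u + deriv φ x) + (x - u) * deriv (deriv φ) x) / 2) x := by
      exact (((hasDerivAt_id x).sub_const u).mul ((h2.const_add (deriv φ u)))).div_const 2
    have := h1.sub h3
    exact this.congr_deriv (by ring)
  have hanti : AntitoneOn ψ (Set.Icc u v) := by
    apply antitoneOn_of_deriv_nonpos (convex_Icc u v)
    · exact ContinuousOn.mono (fun x hx => (hψd x hx).continuousAt.continuousWithinAt) hsub
    · rw [interior_Icc]
      exact fun x hx => ((hψd x (hsub (Set.Ioo_subset_Icc_self hx))).differentiableAt).differentiableWithinAt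
    · rw [interior_Icc]
      intro x hx
      rw [(hψd x (hsub (Set.Ioo_subset_Icc_self hx))).deriv]
      have := key x hx
      linarith
  have := hanti (Set.left_mem_Icc.2 huv.le) (Set.right_mem_Icc.2 huv.le) huv.le
  simp only [hψ, sub_self, zero_mul, zero_div, sub_zero] at this
  linarith

/-- Jensen type inequality for 3-convex functions derived from Theorem 2.2
(Remark 2.3 (i) of the paper). -/
theorem jensen_three_convex_from_tm2 {E : Type*} [Nonempty E] (L : Submodule ℝ (E → ℝ))
    (h1L : (fun _ : E => (1 : ℝ)) ∈ L)
    (A : L →ₗ[ℝ] ℝ)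
    (hApos : ∀ g : L, (∀ t : E, 0 ≤ g.1 t) → 0 ≤ A g)
    (hAnorm : A ⟨fun _ => 1, h1L⟩ = 1)
    (m M : ℝ) (hmM : m < M)
    (f : E → ℝ) (hfL : f ∈ L) (hfm : ∀ t, m ≤ f t) (hfM : ∀ t, f t ≤ M)
    (φ : ℝ → ℝ) (a b : ℝ) (ham : a < m) (hMb : M < b)
    (hφ : ContDiffOn ℝ 3 φ (Set.Ioo a b))
    (hφ3 : ∀ x ∈ Set.Ioo a b, 0 ≤ iteratedDeriv 3 φ x)
    (hφfL : (fun t => φ (f t)) ∈ L)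
    (hg1L : (fun t => (f t - m) * deriv φ (f t)) ∈ L)
    (hg2L : (fun t => (M - f t) * deriv φ (f t)) ∈ L) :
    let Δ := (φ M - φ m) / (M - m)
    A ⟨f, hfL⟩ ∈ Set.Icc m M
      ∧ (A ⟨f, hfL⟩ - m) * (Δ - (deriv φ (A ⟨f, hfL⟩) + deriv φ m) / 2)
            + (M - A ⟨f, hfL⟩) * (Δ - deriv φ M / 2)
            - (1 / 2) * A ⟨fun t => (M - f t) * deriv φ (f t), hg2L⟩
          ≤ A ⟨fun t => φ (f t), hφfL⟩ - φ (A ⟨f, hfL⟩)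
      ∧ A ⟨fun t => φ (f t), hφfL⟩ - φ (A ⟨f, hfL⟩)
          ≤ (M - A ⟨f, hfL⟩) * ((deriv φ (A ⟨f, hfL⟩) + deriv φ M) / 2 - Δ)
              - (A ⟨f, hfL⟩ - m) * (Δ - deriv φ m / 2)
              + (1 / 2) * A ⟨fun t => (f t - m) * deriv φ (f t), hg1L⟩ := by
  intro Δ
  have hmab : m ∈ Set.Ioo a b := ⟨ham, hmM.trans hMb⟩
  have hMab : M ∈ Set.Ioo a b := ⟨ham.trans hmM, hMb⟩
  have hft : ∀ t, f t ∈ Set.Ioo a b := fun t => ⟨ham.trans_le (hfm t), (hfM t).trans_lt hMb⟩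
  set F : L := (⟨f, hfL⟩ : L) with hF
  set One : L := (⟨fun _ => 1, h1L⟩ : L) with hOne
  set P : L := (⟨fun t => φ (f t), hφfL⟩ : L) with hP
  set G1 : L := (⟨fun t => (f t - m) * deriv φ (f t), hg1L⟩ : L) with hG1
  set G2 : L := (⟨fun t => (M - f t) * deriv φ (f t), hg2L⟩ : L) with hG2
  -- m ≤ A F ≤ M
  have hm_le : m ≤ A F := by
    have h0 : 0 ≤ A (F - m • One) := by
      apply hApos
      intro t
      simp only [hF, hOne, Submodule.coe_sub, SetLike.val_smul, Pi.sub_apply, Pi.smul_apply,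
        smul_eq_mul, mul_one]
      linarith [hfm t]
    rw [map_sub, map_smul, hAnorm, smul_eq_mul, mul_one] at h0
    linarith
  have hM_le : A F ≤ M := by
    have h0 : 0 ≤ A (M • One - F) := by
      apply hApos
      intro t
      simp only [hF, hOne, Submodule.coe_sub, SetLike.val_smul, Pi.sub_apply, Pi.smul_apply,
        smul_eq_mul, mul_one]
      linarith [hfM t]
    rw [map_sub, map_smul, hAnorm, smul_eq_mul, mul_one] at h0
    linarith
  have hxab : A F ∈ Set.Ioo a b := ⟨ham.trans_le hm_le, hM_le.trans_lt hMb⟩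
  have hΔ : Δ * (M - m) = φ M - φ m := div_mul_cancel₀ _ (sub_ne_zero.2 hmM.ne')
  refine ⟨⟨hm_le, hM_le⟩, ?_, ?_⟩
  · -- lower bound
    have ineq1 : φ M - 2⁻¹ * A G2 - deriv φ M / 2 * (M - A F) ≤ A P := by
      have h0 : 0 ≤ A (P - φ M • One + (2⁻¹ : ℝ) • G2 + (deriv φ M / 2) • (M • One - F)) := by
        apply hApos
        intro t
        simp only [hF, hOne, hP, hG2, Submodule.coe_add, Submodule.coe_sub, SetLike.val_smul,
          Pi.add_apply, Pi.sub_apply, Pi.smul_apply, smul_eq_mul, mul_one]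
        have := trap_of_three_convex hφ hφ3 (hft t) hMab (hfM t)
        nlinarith [this]
      simp only [map_add, map_sub, map_smul, hAnorm, smul_eq_mul, mul_one] at h0
      linarith
    have ineq2 : φ (A F) - φ m ≤ (A F - m) * (deriv φ m + deriv φ (A F)) / 2 :=
      trap_of_three_convex hφ hφ3 hmab hxab hm_le
    have key : (A F - m) * (Δ - (deriv φ (A F) + deriv φ m) / 2)
        + (M - A F) * (Δ - deriv φ M / 2) - (1 / 2 : ℝ) * A G2
        = (φ M - φ m) - (A F - m) * (deriv φ m + deriv φ (A F)) / 2
          - deriv φ M / 2 * (M - A F) - (1 / 2 : ℝ) * A G2 := by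
      linear_combination hΔ
    rw [key]
    linarith
  · -- upper bound
    have ineq3 : A P ≤ φ m + deriv φ m / 2 * (A F - m) + 2⁻¹ * A G1 := by
      have h0 : 0 ≤ A (φ m • One + (deriv φ m / 2) • (F - m • One) + (2⁻¹ : ℝ) • G1 - P) := by
        apply hApos
        intro t
        simp only [hF, hOne, hP, hG1, Submodule.coe_add, Submodule.coe_sub, SetLike.val_smul,
          Pi.add_apply, Pi.sub_apply, Pi.smul_apply, smul_eq_mul, mul_one]
        have := trap_of_three_convex hφ hφ3 hmab (hft t) (hfm t)
        nlinarith [this]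
      simp only [map_sub, map_add, map_smul, hAnorm, smul_eq_mul, mul_one] at h0
      linarith
    have ineq4 : φ M - φ (A F) ≤ (M - A F) * (deriv φ (A F) + deriv φ M) / 2 :=
      trap_of_three_convex hφ hφ3 hxab hMab hM_le
    have key : (M - A F) * ((deriv φ (A F) + deriv φ M) / 2 - Δ)
        - (A F - m) * (Δ - deriv φ m / 2) + (1 / 2 : ℝ) * A G1
        = (M - A F) * (deriv φ (A F) + deriv φ M) / 2 - (φ M - φ m)
          + deriv φ m / 2 * (A F - m) + (1 / 2 : ℝ) * A G1 := by
      linear_combination -hΔ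
    rw [key]
    linarith
end

section
/- Let φ : ℝ → ℝ be three times continuously differentiable on an open interval containing [m,M] with φ''' ≥ 0 there (φ is 3-convex). Suppose φ∘f ∈ L and the functions t ↦ (M − f(t))² and t ↦ (f(t) − m)² belong to L. Then A(f) ∈ [m,M] and, writing Δ = (φ(M) − φ(m))/(M − m), the Jensen-type bounds hold: (M − A(f))·[φ'(M) − Δ − (φ''(M)/2)·(M − A(f))] − (A(f) − m)·[Δ − φ'(m)] + (φ''(m)/2)·A((f − m·1)²) ≤ A(φ∘f) − φ(A(f)) ≤ (A(f) − m)·[Δ − φ'(m) − (φ''(m)/2)·(A(f) − m)] − (M − A(f))·[φ'(M) − Δ] + (φ''(M)/2)·A((M·1 − f)²). -/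
open Set

lemma taylor_lower {φ : ℝ → ℝ} {a b : ℝ} (hφ : ContDiffOn ℝ 3 φ (Set.Ioo a b))
    (hφ3 : ∀ x ∈ Set.Ioo a b, 0 ≤ iteratedDeriv 3 φ x)
    {m x : ℝ} (ham : a < m) (hmx : m ≤ x) (hxb : x < b) :
    φ m + deriv φ m * (x - m) + iteratedDeriv 2 φ m / 2 * (x - m) ^ 2 ≤ φ x := by
  have hs : IsOpen (Set.Ioo a b) := isOpen_Ioo
  have hi2 : iteratedDeriv 2 φ = deriv (deriv φ) := by
    rw [show (2:ℕ) = 1 + 1 from rfl, iteratedDeriv_succ, iteratedDeriv_one]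
  have hi3 : iteratedDeriv 3 φ = deriv (iteratedDeriv 2 φ) := iteratedDeriv_succ
  have hd0 : DifferentiableOn ℝ φ (Set.Ioo a b) := hφ.differentiableOn (by norm_num)
  have hφ' : ContDiffOn ℝ 2 (deriv φ) (Set.Ioo a b) := hφ.deriv_of_isOpen hs (by norm_num)
  have hφ'' : ContDiffOn ℝ 1 (iteratedDeriv 2 φ) (Set.Ioo a b) := by
    rw [hi2]; exact hφ'.deriv_of_isOpen hs (by norm_num)
  have hd0at : ∀ y ∈ Set.Ioo a b, HasDerivAt φ (deriv φ y) y := fun y hy =>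
    (hd0.differentiableAt (hs.mem_nhds hy)).hasDerivAt
  have hd1at : ∀ y ∈ Set.Ioo a b, HasDerivAt (deriv φ) (iteratedDeriv 2 φ y) y := fun y hy => by
    rw [hi2]
    exact ((hφ'.differentiableOn (by norm_num)).differentiableAt (hs.mem_nhds hy)).hasDerivAt
  have hmono2 : MonotoneOn (iteratedDeriv 2 φ) (Set.Ioo a b) := by
    apply monotoneOn_of_deriv_nonneg (convex_Ioo a b) (hφ''.continuousOn)
    · rw [interior_Ioo]
      exact hφ''.differentiableOn (by norm_num)
    · intro y hy
      rw [interior_Ioo] at hy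
      rw [← hi3]
      exact hφ3 y hy
  have hmem : ∀ y, m ≤ y → y < b → y ∈ Set.Ioo a b := fun y h1 h2 => ⟨lt_of_lt_of_le ham h1, h2⟩
  have hmm : m ∈ Set.Ioo a b := hmem m le_rfl (lt_of_le_of_lt hmx hxb)
  have hDsub : Set.Ico m b ⊆ Set.Ioo a b := fun y hy => ⟨lt_of_lt_of_le ham hy.1, hy.2⟩
  -- step 1
  have h1 : MonotoneOn (fun y => deriv φ y - iteratedDeriv 2 φ m * y) (Set.Ico m b) := by
    apply monotoneOn_of_deriv_nonneg (convex_Ico m b)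
    · exact ((hφ'.continuousOn).mono hDsub).sub (continuous_const.mul continuous_id).continuousOn
    · rw [interior_Ico]
      intro y hy
      exact (((hd1at y (hDsub (Ioo_subset_Ico_self hy))).sub
        ((hasDerivAt_id' y).const_mul _)).differentiableAt).differentiableWithinAt
    · intro y hy
      rw [interior_Ico] at hy
      have hyab := hDsub (Ioo_subset_Ico_self hy)
      rw [show (fun y => deriv φ y - iteratedDeriv 2 φ m * y) = deriv φ - fun y => iteratedDeriv 2 φ m * y from rfl,
        ((hd1at y hyab).sub ((hasDerivAt_id' y).const_mul _)).deriv]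
      have := hmono2 hmm hyab (le_of_lt hy.1)
      simp only [mul_one]
      linarith
  -- step 2
  set g : ℝ → ℝ := fun y => φ y - (φ m + deriv φ m * (y - m)
    + iteratedDeriv 2 φ m / 2 * (y - m) ^ 2) with hg
  have hgd : ∀ y ∈ Set.Ioo a b,
      HasDerivAt g (deriv φ y - (deriv φ m + iteratedDeriv 2 φ m * (y - m))) y := by
    intro y hy
    have hq : HasDerivAt (fun y : ℝ => φ m + deriv φ m * (y - m)
        + iteratedDeriv 2 φ m / 2 * (y - m) ^ 2)
        (deriv φ m + iteratedDeriv 2 φ m * (y - m)) y := by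
      have hb : HasDerivAt (fun y : ℝ => y - m) 1 y := (hasDerivAt_id y).sub_const m
      have := ((hb.const_mul (deriv φ m)).const_add (φ m)).add
        ((hb.pow 2).const_mul (iteratedDeriv 2 φ m / 2))
      convert this using 1
      · rfl
      · rfl
      · rfl
      ring
    exact (hd0at y hy).sub hq
  have h2 : MonotoneOn g (Set.Ico m b) := by
    apply monotoneOn_of_deriv_nonneg (convex_Ico m b)
    · apply ((hd0.continuousOn).mono hDsub).sub
      fun_prop
    · rw [interior_Ico]
      intro y hy
      exact (hgd y (hDsub (Ioo_subset_Ico_self hy))).differentiableAt.differentiableWithinAt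
    · intro y hy
      rw [interior_Ico] at hy
      rw [(hgd y (hDsub (Ioo_subset_Ico_self hy))).deriv]
      have := h1 ⟨le_rfl, hmm.2⟩ ⟨le_of_lt hy.1, hy.2⟩ (le_of_lt hy.1)
      simp only at this
      nlinarith [this]
  have := h2 ⟨le_rfl, hmm.2⟩ ⟨hmx, hxb⟩ hmx
  simp only [hg] at this
  nlinarith [this]

lemma taylor_upper {φ : ℝ → ℝ} {a b : ℝ} (hφ : ContDiffOn ℝ 3 φ (Set.Ioo a b))
    (hφ3 : ∀ x ∈ Set.Ioo a b, 0 ≤ iteratedDeriv 3 φ x)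
    {M x : ℝ} (hax : a < x) (hxM : x ≤ M) (hMb : M < b) :
    φ x ≤ φ M + deriv φ M * (x - M) + iteratedDeriv 2 φ M / 2 * (x - M) ^ 2 := by
  have hs : IsOpen (Set.Ioo a b) := isOpen_Ioo
  have hi2 : iteratedDeriv 2 φ = deriv (deriv φ) := by
    rw [show (2:ℕ) = 1 + 1 from rfl, iteratedDeriv_succ, iteratedDeriv_one]
  have hi3 : iteratedDeriv 3 φ = deriv (iteratedDeriv 2 φ) := iteratedDeriv_succ
  have hd0 : DifferentiableOn ℝ φ (Set.Ioo a b) := hφ.differentiableOn (by norm_num)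
  have hφ' : ContDiffOn ℝ 2 (deriv φ) (Set.Ioo a b) := hφ.deriv_of_isOpen hs (by norm_num)
  have hφ'' : ContDiffOn ℝ 1 (iteratedDeriv 2 φ) (Set.Ioo a b) := by
    rw [hi2]; exact hφ'.deriv_of_isOpen hs (by norm_num)
  have hd0at : ∀ y ∈ Set.Ioo a b, HasDerivAt φ (deriv φ y) y := fun y hy =>
    (hd0.differentiableAt (hs.mem_nhds hy)).hasDerivAt
  have hd1at : ∀ y ∈ Set.Ioo a b, HasDerivAt (deriv φ) (iteratedDeriv 2 φ y) y := fun y hy => by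
    rw [hi2]
    exact ((hφ'.differentiableOn (by norm_num)).differentiableAt (hs.mem_nhds hy)).hasDerivAt
  have hmono2 : MonotoneOn (iteratedDeriv 2 φ) (Set.Ioo a b) := by
    apply monotoneOn_of_deriv_nonneg (convex_Ioo a b) (hφ''.continuousOn)
    · rw [interior_Ioo]
      exact hφ''.differentiableOn (by norm_num)
    · intro y hy
      rw [interior_Ioo] at hy
      rw [← hi3]
      exact hφ3 y hy
  have hMM : M ∈ Set.Ioo a b := ⟨lt_of_lt_of_le hax hxM, hMb⟩
  have hDsub : Set.Ioc a M ⊆ Set.Ioo a b := fun y hy => ⟨hy.1, lt_of_le_of_lt hy.2 hMb⟩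
  -- step 1: y ↦ iteratedDeriv 2 φ M * y - deriv φ y is monotone on Ioc a M
  have h1 : MonotoneOn (fun y => iteratedDeriv 2 φ M * y - deriv φ y) (Set.Ioc a M) := by
    apply monotoneOn_of_deriv_nonneg (convex_Ioc a M)
    · exact ((continuous_const.mul continuous_id).continuousOn).sub
        ((hφ'.continuousOn).mono hDsub)
    · rw [interior_Ioc]
      intro y hy
      exact ((((hasDerivAt_id' y).const_mul _).sub
        (hd1at y (hDsub (Ioo_subset_Ioc_self hy)))).differentiableAt).differentiableWithinAt
    · intro y hy
      rw [interior_Ioc] at hy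
      have hyab := hDsub (Ioo_subset_Ioc_self hy)
      rw [show (fun y => iteratedDeriv 2 φ M * y - deriv φ y) = (fun y => iteratedDeriv 2 φ M * y) - deriv φ from rfl,
        (((hasDerivAt_id' y).const_mul _).sub (hd1at y hyab)).deriv]
      have := hmono2 hyab hMM (le_of_lt hy.2)
      simp only [mul_one]
      linarith
  -- step 2
  set g : ℝ → ℝ := fun y => φ M + deriv φ M * (y - M)
    + iteratedDeriv 2 φ M / 2 * (y - M) ^ 2 - φ y with hg
  have hgd : ∀ y ∈ Set.Ioo a b,
      HasDerivAt g (deriv φ M + iteratedDeriv 2 φ M * (y - M) - deriv φ y) y := by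
    intro y hy
    have hb : HasDerivAt (fun y : ℝ => y - M) 1 y := (hasDerivAt_id y).sub_const M
    have hq : HasDerivAt (fun y : ℝ => φ M + deriv φ M * (y - M)
        + iteratedDeriv 2 φ M / 2 * (y - M) ^ 2)
        (deriv φ M + iteratedDeriv 2 φ M * (y - M)) y := by
      have := ((hb.const_mul (deriv φ M)).const_add (φ M)).add
        ((hb.pow 2).const_mul (iteratedDeriv 2 φ M / 2))
      convert this using 1
      · rfl
      · rfl
      · rfl
      ring
    exact hq.sub (hd0at y hy)
  have h2 : AntitoneOn g (Set.Ioc a M) := by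
    apply antitoneOn_of_deriv_nonpos (convex_Ioc a M)
    · apply ContinuousOn.sub
      · fun_prop
      · exact (hd0.continuousOn).mono hDsub
    · rw [interior_Ioc]
      intro y hy
      exact (hgd y (hDsub (Ioo_subset_Ioc_self hy))).differentiableAt.differentiableWithinAt
    · intro y hy
      rw [interior_Ioc] at hy
      rw [(hgd y (hDsub (Ioo_subset_Ioc_self hy))).deriv]
      have := h1 ⟨hy.1, le_of_lt hy.2⟩ ⟨hMM.1, le_rfl⟩ (le_of_lt hy.2)
      simp only at this
      nlinarith [this]
  have := h2 ⟨hax, hxM⟩ ⟨hMM.1, le_rfl⟩ hxM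
  simp only [hg] at this
  nlinarith [this]



/-- Jensen type inequality for 3-convex functions derived from Theorem 2.3
(Remark 2.3 (ii) of the paper). -/
theorem jensen_three_convex_from_tm3 {E : Type*} [Nonempty E] (L : Submodule ℝ (E → ℝ))
    (h1L : (fun _ : E => (1 : ℝ)) ∈ L)
    (A : L →ₗ[ℝ] ℝ)
    (hApos : ∀ g : L, (∀ t : E, 0 ≤ g.1 t) → 0 ≤ A g)
    (hAnorm : A ⟨fun _ => 1, h1L⟩ = 1)
    (m M : ℝ) (hmM : m < M)
    (f : E → ℝ) (hfL : f ∈ L) (hfm : ∀ t, m ≤ f t) (hfM : ∀ t, f t ≤ M)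
    (φ : ℝ → ℝ) (a b : ℝ) (ham : a < m) (hMb : M < b)
    (hφ : ContDiffOn ℝ 3 φ (Set.Ioo a b))
    (hφ3 : ∀ x ∈ Set.Ioo a b, 0 ≤ iteratedDeriv 3 φ x)
    (hφfL : (fun t => φ (f t)) ∈ L)
    (hg1L : (fun t => (M - f t) ^ 2) ∈ L)
    (hg2L : (fun t => (f t - m) ^ 2) ∈ L) :
    let Δ := (φ M - φ m) / (M - m)
    A ⟨f, hfL⟩ ∈ Set.Icc m M
      ∧ (M - A ⟨f, hfL⟩)
              * (deriv φ M - Δ - iteratedDeriv 2 φ M / 2 * (M - A ⟨f, hfL⟩))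
            - (A ⟨f, hfL⟩ - m) * (Δ - deriv φ m)
            + iteratedDeriv 2 φ m / 2 * A ⟨fun t => (f t - m) ^ 2, hg2L⟩
          ≤ A ⟨fun t => φ (f t), hφfL⟩ - φ (A ⟨f, hfL⟩)
      ∧ A ⟨fun t => φ (f t), hφfL⟩ - φ (A ⟨f, hfL⟩)
          ≤ (A ⟨f, hfL⟩ - m)
                * (Δ - deriv φ m - iteratedDeriv 2 φ m / 2 * (A ⟨f, hfL⟩ - m))
              - (M - A ⟨f, hfL⟩) * (deriv φ M - Δ)
              + iteratedDeriv 2 φ M / 2 * A ⟨fun t => (M - f t) ^ 2, hg1L⟩ := by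
  intro Δ
  have hΔ : Δ * (M - m) = φ M - φ m := div_mul_cancel₀ _ (sub_ne_zero.2 hmM.ne')
  set one : L := ⟨fun _ => 1, h1L⟩ with hone
  set fL : L := ⟨f, hfL⟩ with hfLdef
  set φf : L := ⟨fun t => φ (f t), hφfL⟩ with hφfdef
  set q1 : L := ⟨fun t => (M - f t) ^ 2, hg1L⟩ with hq1def
  set q2 : L := ⟨fun t => (f t - m) ^ 2, hg2L⟩ with hq2def
  have hmono : ∀ g h : L, (∀ t, g.1 t ≤ h.1 t) → A g ≤ A h := by
    intro g h hle
    have := hApos (h - g) (fun t => by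
      have : (h - g).1 t = h.1 t - g.1 t := rfl
      rw [this]
      linarith [hle t])
    rw [map_sub] at this
    linarith
  have hfab : ∀ t, f t ∈ Set.Ioo a b := fun t =>
    ⟨lt_of_lt_of_le ham (hfm t), lt_of_le_of_lt (hfM t) hMb⟩
  -- bounds on A f
  have hxm : m ≤ A fL := by
    have := hmono (m • one) fL (fun t => by
      show m * 1 ≤ f t
      simpa using hfm t)
    rwa [map_smul, hAnorm, smul_eq_mul, mul_one] at this
  have hxM : A fL ≤ M := by
    have := hmono fL (M • one) (fun t => by
      show f t ≤ M * 1
      simpa using hfM t)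
    rwa [map_smul, hAnorm, smul_eq_mul, mul_one] at this
  -- lower bound for A (φ ∘ f)
  set c2m := iteratedDeriv 2 φ m with hc2m
  set c2M := iteratedDeriv 2 φ M with hc2M
  have hI1 : φ m + deriv φ m * (A fL - m) + c2m / 2 * A q2 ≤ A φf := by
    have h := hmono (φ m • one + deriv φ m • (fL - m • one) + (c2m / 2) • q2) φf (fun t => by
      show φ m * 1 + deriv φ m * (f t - m * 1) + c2m / 2 * (f t - m) ^ 2 ≤ φ (f t)
      have := taylor_lower hφ hφ3 ham (hfm t) (lt_of_le_of_lt (hfM t) hMb)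
      rw [hc2m]
      linarith [this])
    rw [map_add, map_add, map_smul, map_smul, map_smul, map_sub, map_smul, hAnorm] at h
    simp only [smul_eq_mul, mul_one] at h
    linarith
  -- upper bound for A (φ ∘ f)
  have hI2 : A φf ≤ φ M + deriv φ M * (A fL - M) + c2M / 2 * A q1 := by
    have h := hmono φf (φ M • one + deriv φ M • (fL - M • one) + (c2M / 2) • q1) (fun t => by
      show φ (f t) ≤ φ M * 1 + deriv φ M * (f t - M * 1) + c2M / 2 * (M - f t) ^ 2
      have := taylor_upper hφ hφ3 (hfab t).1 (hfM t) hMb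
      rw [hc2M]
      nlinarith [this])
    rw [map_add, map_add, map_smul, map_smul, map_smul, map_sub, map_smul, hAnorm] at h
    simp only [smul_eq_mul, mul_one] at h
    linarith
  -- bounds for φ (A f)
  have hJ1 : φ m + deriv φ m * (A fL - m) + c2m / 2 * (A fL - m) ^ 2 ≤ φ (A fL) :=
    taylor_lower hφ hφ3 ham hxm (lt_of_le_of_lt hxM hMb)
  have hJ2 : φ (A fL) ≤ φ M + deriv φ M * (A fL - M) + c2M / 2 * (A fL - M) ^ 2 :=
    taylor_upper hφ hφ3 (lt_of_lt_of_le ham hxm) hxM hMb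
  refine ⟨⟨hxm, hxM⟩, ?_, ?_⟩
  · have hid : (M - A fL) * (deriv φ M - Δ - c2M / 2 * (M - A fL))
        - (A fL - m) * (Δ - deriv φ m) + c2m / 2 * A q2
        = (φ m + deriv φ m * (A fL - m) + c2m / 2 * A q2)
          - (φ M + deriv φ M * (A fL - M) + c2M / 2 * (A fL - M) ^ 2) := by
      linear_combination -hΔ
    rw [hid]
    linarith [hI1, hJ2]
  · have hid : (A fL - m) * (Δ - deriv φ m - c2m / 2 * (A fL - m))
        - (M - A fL) * (deriv φ M - Δ) + c2M / 2 * A q1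
        = (φ M + deriv φ M * (A fL - M) + c2M / 2 * A q1)
          - (φ m + deriv φ m * (A fL - m) + c2m / 2 * (A fL - m) ^ 2) := by
      linear_combination hΔ
    rw [hid]
    linarith [hI2, hJ1]
end

section
/- Let m < M be real numbers and let φ : ℝ → ℝ be three times continuously differentiable on an open interval containing [m,M] with φ''' ≥ 0 there (φ is 3-convex). Then for every x ∈ (m,M), writing Δ = (φ(M) − φ(m))/(M − m): ((M − x)(x − m)/(M − m))·(Δ − φ'(m)) ≤ (M − x)/(M − m)·φ(m) + (x − m)/(M − m)·φ(M) − φ(x) ≤ ((M − x)(x − m)/(M − m))·(φ'(M) − Δ). -/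
open Set

lemma core_left {m M : ℝ} (hmM : m < M) (F F' : ℝ → ℝ)
    (hF : ∀ t ∈ Set.Icc m M, HasDerivAt F (F' t) t)
    (hFm : F m = 0) (hFM : F M = 0) (hF'm : F' m = 0)
    (hconc : ConcaveOn ℝ (Set.Icc m M) F') :
    ∀ x ∈ Set.Icc m M, 0 ≤ F x := by
  have hFc : ContinuousOn F (Set.Icc m M) :=
    fun t ht => (hF t ht).differentiableAt.continuousAt.continuousWithinAt
  obtain ⟨ξ, hξ, hξ0⟩ := exists_deriv_eq_zero hmM hFc (hFm.trans hFM.symm)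
  have hmξ : m < ξ := hξ.1
  have hξM : ξ < M := hξ.2
  have hξmem : ξ ∈ Set.Icc m M := ⟨hmξ.le, hξM.le⟩
  have hF'ξ : F' ξ = 0 := by rw [← (hF ξ hξmem).deriv]; exact hξ0
  have hmmem : m ∈ Set.Icc m M := ⟨le_refl m, hmM.le⟩
  have claim1 : ∀ t ∈ Set.Icc m ξ, 0 ≤ F' t := by
    intro t ht
    have h1 : (0:ℝ) ≤ (ξ - t)/(ξ - m) := div_nonneg (by linarith [ht.2]) (by linarith)
    have h2 : (0:ℝ) ≤ (t - m)/(ξ - m) := div_nonneg (by linarith [ht.1]) (by linarith)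
    have hne : ξ - m ≠ 0 := sub_ne_zero.mpr hmξ.ne'
    have h3 : (ξ - t)/(ξ - m) + (t - m)/(ξ - m) = 1 := by field_simp; ring
    have hc := hconc.2 hmmem hξmem h1 h2 h3
    have heq : ((ξ - t)/(ξ - m)) • m + ((t - m)/(ξ - m)) • ξ = t := by
      simp only [smul_eq_mul]
      field_simp
      ring
    rw [heq, hF'm, hF'ξ, smul_zero, smul_zero, add_zero] at hc
    exact hc
  have claim2 : ∀ t ∈ Set.Icc ξ M, F' t ≤ 0 := by
    intro t ht
    rcases eq_or_lt_of_le ht.1 with h | h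
    · rw [← h, hF'ξ]
    · have htmem : t ∈ Set.Icc m M := ⟨by linarith, ht.2⟩
      have ha : (0:ℝ) ≤ (t - ξ)/(t - m) := div_nonneg (by linarith) (by linarith)
      have hb : (0:ℝ) < (ξ - m)/(t - m) := div_pos (by linarith) (by linarith)
      have hne : t - m ≠ 0 := sub_ne_zero.mpr (by linarith)
      have hab : (t - ξ)/(t - m) + (ξ - m)/(t - m) = 1 := by field_simp; ring
      have hc := hconc.2 hmmem htmem ha hb.le hab
      have heq : ((t - ξ)/(t - m)) • m + ((ξ - m)/(t - m)) • t = ξ := by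
        simp only [smul_eq_mul]
        field_simp
        ring
      rw [heq, hF'm, hF'ξ, smul_zero, zero_add, smul_eq_mul] at hc
      nlinarith [hc, hb]
  have hmono : MonotoneOn F (Set.Icc m ξ) := by
    apply monotoneOn_of_deriv_nonneg (convex_Icc m ξ)
      (hFc.mono (Set.Icc_subset_Icc_right hξM.le))
    · intro t ht
      rw [interior_Icc] at ht
      exact (hF t ⟨ht.1.le, ht.2.le.trans hξM.le⟩).differentiableAt.differentiableWithinAt
    · intro t ht
      rw [interior_Icc] at ht
      rw [(hF t ⟨ht.1.le, ht.2.le.trans hξM.le⟩).deriv]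
      exact claim1 t ⟨ht.1.le, ht.2.le⟩
  have hanti : AntitoneOn F (Set.Icc ξ M) := by
    apply antitoneOn_of_deriv_nonpos (convex_Icc ξ M)
      (hFc.mono (Set.Icc_subset_Icc_left hmξ.le))
    · intro t ht
      rw [interior_Icc] at ht
      exact (hF t ⟨hmξ.le.trans ht.1.le, ht.2.le⟩).differentiableAt.differentiableWithinAt
    · intro t ht
      rw [interior_Icc] at ht
      rw [(hF t ⟨hmξ.le.trans ht.1.le, ht.2.le⟩).deriv]
      exact claim2 t ⟨ht.1.le, ht.2.le⟩
  intro x hx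
  rcases le_total x ξ with h | h
  · have := hmono ⟨le_refl m, hmξ.le⟩ ⟨hx.1, h⟩ hx.1
    rwa [hFm] at this
  · have := hanti ⟨h, hx.2⟩ ⟨hξM.le, le_refl M⟩ hx.2
    rwa [hFM] at this

lemma core_right {m M : ℝ} (hmM : m < M) (F F' : ℝ → ℝ)
    (hF : ∀ t ∈ Set.Icc m M, HasDerivAt F (F' t) t)
    (hFm : F m = 0) (hFM : F M = 0) (hF'M : F' M = 0)
    (hconv : ConvexOn ℝ (Set.Icc m M) F') :
    ∀ x ∈ Set.Icc m M, 0 ≤ F x := by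
  have hFc : ContinuousOn F (Set.Icc m M) :=
    fun t ht => (hF t ht).differentiableAt.continuousAt.continuousWithinAt
  obtain ⟨ξ, hξ, hξ0⟩ := exists_deriv_eq_zero hmM hFc (hFm.trans hFM.symm)
  have hmξ : m < ξ := hξ.1
  have hξM : ξ < M := hξ.2
  have hξmem : ξ ∈ Set.Icc m M := ⟨hmξ.le, hξM.le⟩
  have hF'ξ : F' ξ = 0 := by rw [← (hF ξ hξmem).deriv]; exact hξ0
  have hMmem : M ∈ Set.Icc m M := ⟨hmM.le, le_refl M⟩
  have claim2 : ∀ t ∈ Set.Icc ξ M, F' t ≤ 0 := by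
    intro t ht
    have hne : M - ξ ≠ 0 := sub_ne_zero.mpr hξM.ne'
    have h1 : (0:ℝ) ≤ (M - t)/(M - ξ) := div_nonneg (by linarith [ht.2]) (by linarith)
    have h2 : (0:ℝ) ≤ (t - ξ)/(M - ξ) := div_nonneg (by linarith [ht.1]) (by linarith)
    have h3 : (M - t)/(M - ξ) + (t - ξ)/(M - ξ) = 1 := by field_simp; ring
    have hc := hconv.2 hξmem hMmem h1 h2 h3
    have heq : ((M - t)/(M - ξ)) • ξ + ((t - ξ)/(M - ξ)) • M = t := by
      simp only [smul_eq_mul]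
      field_simp
      ring
    rw [heq, hF'M, hF'ξ, smul_zero, smul_zero, add_zero] at hc
    exact hc
  have claim1 : ∀ t ∈ Set.Icc m ξ, 0 ≤ F' t := by
    intro t ht
    rcases eq_or_lt_of_le ht.2 with h | h
    · rw [h, hF'ξ]
    · have htmem : t ∈ Set.Icc m M := ⟨ht.1, by linarith⟩
      have hne : M - t ≠ 0 := sub_ne_zero.mpr (by linarith)
      have ha : (0:ℝ) < (M - ξ)/(M - t) := div_pos (by linarith) (by linarith)
      have hb : (0:ℝ) ≤ (ξ - t)/(M - t) := div_nonneg (by linarith) (by linarith)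
      have hab : (M - ξ)/(M - t) + (ξ - t)/(M - t) = 1 := by field_simp; ring
      have hc := hconv.2 htmem hMmem ha.le hb hab
      have heq : ((M - ξ)/(M - t)) • t + ((ξ - t)/(M - t)) • M = ξ := by
        simp only [smul_eq_mul]
        field_simp
        ring
      rw [heq, hF'M, hF'ξ, smul_zero, add_zero, smul_eq_mul] at hc
      nlinarith [hc, ha]
  have hmono : MonotoneOn F (Set.Icc m ξ) := by
    apply monotoneOn_of_deriv_nonneg (convex_Icc m ξ)
      (hFc.mono (Set.Icc_subset_Icc_right hξM.le))
    · intro t ht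
      rw [interior_Icc] at ht
      exact (hF t ⟨ht.1.le, ht.2.le.trans hξM.le⟩).differentiableAt.differentiableWithinAt
    · intro t ht
      rw [interior_Icc] at ht
      rw [(hF t ⟨ht.1.le, ht.2.le.trans hξM.le⟩).deriv]
      exact claim1 t ⟨ht.1.le, ht.2.le⟩
  have hanti : AntitoneOn F (Set.Icc ξ M) := by
    apply antitoneOn_of_deriv_nonpos (convex_Icc ξ M)
      (hFc.mono (Set.Icc_subset_Icc_left hmξ.le))
    · intro t ht
      rw [interior_Icc] at ht
      exact (hF t ⟨hmξ.le.trans ht.1.le, ht.2.le⟩).differentiableAt.differentiableWithinAt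
    · intro t ht
      rw [interior_Icc] at ht
      rw [(hF t ⟨hmξ.le.trans ht.1.le, ht.2.le⟩).deriv]
      exact claim2 t ⟨ht.1.le, ht.2.le⟩
  intro x hx
  rcases le_total x ξ with h | h
  · have := hmono ⟨le_refl m, hmξ.le⟩ ⟨hx.1, h⟩ hx.1
    rwa [hFm] at this
  · have := hanti ⟨h, hx.2⟩ ⟨hξM.le, le_refl M⟩ hx.2
    rwa [hFM] at this

/-- Pointwise Edmundson–Lah–Ribarič type estimate for 3-convex functions
(inequality (2.5) in the paper). -/
theorem elr_pointwise_tm1 (m M : ℝ) (hmM : m < M)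
    (φ : ℝ → ℝ) (a b : ℝ) (ham : a < m) (hMb : M < b)
    (hφ : ContDiffOn ℝ 3 φ (Set.Ioo a b))
    (hφ3 : ∀ t ∈ Set.Ioo a b, 0 ≤ iteratedDeriv 3 φ t)
    (x : ℝ) (hx : x ∈ Set.Ioo m M) :
    let Δ := (φ M - φ m) / (M - m)
    (M - x) * (x - m) / (M - m) * (Δ - deriv φ m)
        ≤ (M - x) / (M - m) * φ m + (x - m) / (M - m) * φ M - φ x
      ∧ (M - x) / (M - m) * φ m + (x - m) / (M - m) * φ M - φ x
        ≤ (M - x) * (x - m) / (M - m) * (deriv φ M - Δ) := by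
  intro Δ
  have hΔ : Δ = (φ M - φ m) / (M - m) := rfl
  have hs : IsOpen (Set.Ioo a b) := isOpen_Ioo
  have hsub : Set.Icc m M ⊆ Set.Ioo a b := fun t ht => ⟨lt_of_lt_of_le ham ht.1, lt_of_le_of_lt ht.2 hMb⟩
  have hMm : (0:ℝ) < M - m := by linarith
  have hne : M - m ≠ 0 := ne_of_gt hMm
  -- smoothness facts
  have hφ1 : ContDiffOn ℝ 2 (deriv φ) (Set.Ioo a b) := hφ.deriv_of_isOpen hs (by norm_num)
  have hφ2 : ContDiffOn ℝ 1 (deriv (deriv φ)) (Set.Ioo a b) := hφ1.deriv_of_isOpen hs (by norm_num)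
  have hD0 : ∀ t ∈ Set.Ioo a b, HasDerivAt φ (deriv φ t) t := fun t ht =>
    ((hφ.contDiffAt (hs.mem_nhds ht)).differentiableAt (by norm_num)).hasDerivAt
  have hD1 : ∀ t ∈ Set.Ioo a b, HasDerivAt (deriv φ) (deriv (deriv φ) t) t := fun t ht =>
    ((hφ1.contDiffAt (hs.mem_nhds ht)).differentiableAt (by norm_num)).hasDerivAt
  have hD2 : ∀ t ∈ Set.Ioo a b, HasDerivAt (deriv (deriv φ)) (deriv (deriv (deriv φ)) t) t :=
    fun t ht =>
    ((hφ2.contDiffAt (hs.mem_nhds ht)).differentiableAt (by norm_num)).hasDerivAt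
  have h3 : ∀ t ∈ Set.Ioo a b, 0 ≤ deriv (deriv (deriv φ)) t := by
    intro t ht
    have := hφ3 t ht
    rwa [show (3:ℕ) = 2 + 1 from rfl, iteratedDeriv_succ, show (2:ℕ) = 1 + 1 from rfl,
      iteratedDeriv_succ, iteratedDeriv_one] at this
  set c : ℝ := Δ - deriv φ m with hc
  set d : ℝ := deriv φ M - Δ with hd
  -- LEFT
  have key1 : ∀ x' ∈ Set.Icc m M,
      0 ≤ (M - x') * φ m + (x' - m) * φ M - (M - m) * φ x' - c * ((M - x') * (x' - m)) := by
    apply core_left hmM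
      (F' := fun t => (φ M - φ m) - (M - m) * deriv φ t - c * (M + m - 2 * t))
    · intro t ht
      have ht' := hsub ht
      have p1 : HasDerivAt (fun u : ℝ => (M - u) * φ m) (-1 * φ m) t :=
        ((hasDerivAt_id t).const_sub M).mul_const (φ m)
      have p2 : HasDerivAt (fun u : ℝ => (u - m) * φ M) (1 * φ M) t :=
        ((hasDerivAt_id t).sub_const m).mul_const (φ M)
      have p3 : HasDerivAt (fun u : ℝ => (M - m) * φ u) ((M - m) * deriv φ t) t :=
        (hD0 t ht').const_mul (M - m)
      have p4 : HasDerivAt (fun u : ℝ => (M - u) * (u - m)) (-1 * (t - m) + (M - t) * 1) t :=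
        ((hasDerivAt_id t).const_sub M).mul ((hasDerivAt_id t).sub_const m)
      have p5 := p4.const_mul c
      have p := ((p1.add p2).sub p3).sub p5
      exact p.congr_deriv (by ring)
    · ring
    · ring
    · have hcm : c * (M - m) = φ M - φ m - (M - m) * deriv φ m := by
        rw [hc, hΔ, sub_mul, div_mul_cancel₀ _ hne]; ring
      linear_combination (-1) * hcm
    · -- concavity of F'
      apply concaveOn_of_hasDerivWithinAt2_nonpos (convex_Icc m M)
        (f' := fun t => -((M - m) * deriv (deriv φ) t) + 2 * c)
        (f'' := fun t => -((M - m) * deriv (deriv (deriv φ)) t))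
      · intro t ht
        have ht' := hsub ht
        have q1 : HasDerivAt (fun u : ℝ => (M - m) * deriv φ u) ((M - m) * deriv (deriv φ) t) t :=
          (hD1 t ht').const_mul (M - m)
        have q2 : HasDerivAt (fun u : ℝ => M + m - 2 * u) (-(2 * 1)) t :=
          ((hasDerivAt_id t).const_mul 2).const_sub (M + m)
        have q3 := q2.const_mul c
        have q := ((hasDerivAt_const t (φ M - φ m)).sub q1).sub q3
        exact q.differentiableAt.continuousAt.continuousWithinAt
      · intro t ht
        rw [interior_Icc] at ht
        have ht' := hsub ⟨ht.1.le, ht.2.le⟩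
        have q1 : HasDerivAt (fun u : ℝ => (M - m) * deriv φ u) ((M - m) * deriv (deriv φ) t) t :=
          (hD1 t ht').const_mul (M - m)
        have q2 : HasDerivAt (fun u : ℝ => M + m - 2 * u) (-(2 * 1)) t :=
          ((hasDerivAt_id t).const_mul 2).const_sub (M + m)
        have q3 := q2.const_mul c
        have q := ((hasDerivAt_const t (φ M - φ m)).sub q1).sub q3
        exact (q.congr_deriv (by ring)).hasDerivWithinAt
      · intro t ht
        rw [interior_Icc] at ht
        have ht' := hsub ⟨ht.1.le, ht.2.le⟩
        have q1 : HasDerivAt (fun u : ℝ => (M - m) * deriv (deriv φ) u)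
            ((M - m) * deriv (deriv (deriv φ)) t) t := (hD2 t ht').const_mul (M - m)
        have q := q1.neg.add_const (2 * c)
        exact (q.congr_deriv (by ring)).hasDerivWithinAt
      · intro t ht
        rw [interior_Icc] at ht
        have := h3 t (hsub ⟨ht.1.le, ht.2.le⟩)
        nlinarith
  -- RIGHT
  have key2 : ∀ x' ∈ Set.Icc m M,
      0 ≤ d * ((M - x') * (x' - m)) - ((M - x') * φ m + (x' - m) * φ M - (M - m) * φ x') := by
    apply core_right hmM
      (F' := fun t => d * (M + m - 2 * t) - ((φ M - φ m) - (M - m) * deriv φ t))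
    · intro t ht
      have ht' := hsub ht
      have p1 : HasDerivAt (fun u : ℝ => (M - u) * φ m) (-1 * φ m) t :=
        ((hasDerivAt_id t).const_sub M).mul_const (φ m)
      have p2 : HasDerivAt (fun u : ℝ => (u - m) * φ M) (1 * φ M) t :=
        ((hasDerivAt_id t).sub_const m).mul_const (φ M)
      have p3 : HasDerivAt (fun u : ℝ => (M - m) * φ u) ((M - m) * deriv φ t) t :=
        (hD0 t ht').const_mul (M - m)
      have p4 : HasDerivAt (fun u : ℝ => (M - u) * (u - m)) (-1 * (t - m) + (M - t) * 1) t :=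
        ((hasDerivAt_id t).const_sub M).mul ((hasDerivAt_id t).sub_const m)
      have p5 := p4.const_mul d
      have p := p5.sub ((p1.add p2).sub p3)
      exact p.congr_deriv (by ring)
    · ring
    · ring
    · have hdm : d * (M - m) = (M - m) * deriv φ M - (φ M - φ m) := by
        rw [hd, hΔ, sub_mul, div_mul_cancel₀ _ hne]; ring
      linear_combination (-1) * hdm
    · -- convexity of F'
      apply convexOn_of_hasDerivWithinAt2_nonneg (convex_Icc m M)
        (f' := fun t => (M - m) * deriv (deriv φ) t - 2 * d)
        (f'' := fun t => (M - m) * deriv (deriv (deriv φ)) t)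
      · intro t ht
        have ht' := hsub ht
        have q1 : HasDerivAt (fun u : ℝ => (M - m) * deriv φ u) ((M - m) * deriv (deriv φ) t) t :=
          (hD1 t ht').const_mul (M - m)
        have q2 : HasDerivAt (fun u : ℝ => M + m - 2 * u) (-(2 * 1)) t :=
          ((hasDerivAt_id t).const_mul 2).const_sub (M + m)
        have q3 := q2.const_mul d
        have q := q3.sub ((hasDerivAt_const t (φ M - φ m)).sub q1)
        exact q.differentiableAt.continuousAt.continuousWithinAt
      · intro t ht
        rw [interior_Icc] at ht
        have ht' := hsub ⟨ht.1.le, ht.2.le⟩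
        have q1 : HasDerivAt (fun u : ℝ => (M - m) * deriv φ u) ((M - m) * deriv (deriv φ) t) t :=
          (hD1 t ht').const_mul (M - m)
        have q2 : HasDerivAt (fun u : ℝ => M + m - 2 * u) (-(2 * 1)) t :=
          ((hasDerivAt_id t).const_mul 2).const_sub (M + m)
        have q3 := q2.const_mul d
        have q := q3.sub ((hasDerivAt_const t (φ M - φ m)).sub q1)
        exact (q.congr_deriv (by ring)).hasDerivWithinAt
      · intro t ht
        rw [interior_Icc] at ht
        have ht' := hsub ⟨ht.1.le, ht.2.le⟩
        have q1 : HasDerivAt (fun u : ℝ => (M - m) * deriv (deriv φ) u)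
            ((M - m) * deriv (deriv (deriv φ)) t) t := (hD2 t ht').const_mul (M - m)
        have q := q1.sub_const (2 * d)
        exact q.hasDerivWithinAt
      · intro t ht
        rw [interior_Icc] at ht
        have := h3 t (hsub ⟨ht.1.le, ht.2.le⟩)
        nlinarith
  have hk1 := key1 x ⟨hx.1.le, hx.2.le⟩
  have hk2 := key2 x ⟨hx.1.le, hx.2.le⟩
  have e2 : (M - x) / (M - m) * φ m + (x - m) / (M - m) * φ M - φ x
      = ((M - x) * φ m + (x - m) * φ M - (M - m) * φ x) / (M - m) := by
    field_simp
  constructor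
  · have e1 : (M - x) * (x - m) / (M - m) * (Δ - deriv φ m) = c * ((M - x) * (x - m)) / (M - m) := by
      rw [hc]; ring
    rw [e1, e2, div_le_div_iff₀ hMm hMm]
    nlinarith [hk1, hMm]
  · have e3 : (M - x) * (x - m) / (M - m) * (deriv φ M - Δ) = d * ((M - x) * (x - m)) / (M - m) := by
      rw [hd]; ring
    rw [e3, e2, div_le_div_iff₀ hMm hMm]
    nlinarith [hk2, hMm]
end

section
/- Let m < M be real numbers and let φ : ℝ → ℝ be three times continuously differentiable on an open interval containing [m,M] with φ''' ≥ 0 there (φ is 3-convex). Then for every x ∈ (m,M), writing Δ = (φ(M) − φ(m))/(M − m): (M − x)·[φ'(M) − Δ − (φ''(M)/2)·(M − x)] ≤ (M − x)/(M − m)·φ(m) + (x − m)/(M − m)·φ(M) − φ(x) ≤ (x − m)·[Δ − φ'(m) − (φ''(m)/2)·(x − m)]. -/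
open Set

private lemma iDW_open {f : ℝ → ℝ} {U : Set ℝ} (hU : IsOpen U) {t : ℝ} (ht : t ∈ U) (n : ℕ) :
    iteratedDerivWithin n f U t = iteratedDeriv n f t := by
  rw [iteratedDerivWithin_eq_iteratedFDerivWithin, iteratedDeriv_eq_iteratedFDeriv,
    iteratedFDerivWithin_of_isOpen n hU ht]

private lemma iDeriv_diffAt {f : ℝ → ℝ} {U : Set ℝ} (hU : IsOpen U) (hf : ContDiffOn ℝ 3 f U)
    {n : ℕ} (hn : n < 3) {t : ℝ} (ht : t ∈ U) :
    DifferentiableAt ℝ (iteratedDeriv n f) t := by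
  have h1 : DifferentiableOn ℝ (iteratedDerivWithin n f U) U :=
    hf.differentiableOn_iteratedDerivWithin (by exact_mod_cast hn) hU.uniqueDiffOn
  have h2 : DifferentiableAt ℝ (iteratedDerivWithin n f U) t :=
    (h1 t ht).differentiableAt (hU.mem_nhds ht)
  exact h2.congr_of_eventuallyEq
    (Filter.eventually_of_mem (hU.mem_nhds ht) fun y hy => (iDW_open hU hy n).symm)

private lemma iDW_subset {f : ℝ → ℝ} {U s : Set ℝ} (hU : IsOpen U) (hf : ContDiffOn ℝ 3 f U)
    (hsU : s ⊆ U) (hs : UniqueDiffOn ℝ s) {n : ℕ} (hn : n ≤ 3) :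
    Set.EqOn (iteratedDerivWithin n f s) (iteratedDeriv n f) s := by
  induction n with
  | zero => intro t ht; simp
  | succ k ih =>
    intro t ht
    have hk3 : k < 3 := Nat.lt_of_succ_le hn
    have hEq : Set.EqOn (iteratedDerivWithin k f s) (iteratedDeriv k f) s := ih hk3.le
    rw [iteratedDerivWithin_succ, iteratedDeriv_succ,
      derivWithin_congr hEq (hEq ht)]
    exact DifferentiableAt.derivWithin (iDeriv_diffAt hU hf hk3 (hsU ht))
      (hs.uniqueDiffWithinAt ht)

private lemma taylor2_ge {a b m x : ℝ} {φ : ℝ → ℝ} (hφ : ContDiffOn ℝ 3 φ (Set.Ioo a b))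
    (hφ3 : ∀ t ∈ Set.Ioo a b, 0 ≤ iteratedDeriv 3 φ t)
    (ham : a < m) (hmx : m < x) (hxb : x < b) :
    φ m + deriv φ m * (x - m) + iteratedDeriv 2 φ m / 2 * (x - m) ^ 2 ≤ φ x := by
  have hU : IsOpen (Set.Ioo a b) := isOpen_Ioo
  have hsub : Set.Icc m x ⊆ Set.Ioo a b := fun t ht =>
    ⟨lt_of_lt_of_le ham ht.1, lt_of_le_of_lt ht.2 hxb⟩
  have hs : UniqueDiffOn ℝ (Set.Icc m x) := uniqueDiffOn_Icc hmx
  have hEq : ∀ n : ℕ, n ≤ 3 →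
      Set.EqOn (iteratedDerivWithin n φ (Set.Icc m x)) (iteratedDeriv n φ) (Set.Icc m x) :=
    fun n hn => iDW_subset hU hφ hsub hs hn
  have hf : ContDiffOn ℝ 2 φ (Set.Icc m x) := (hφ.of_le (by norm_num)).mono hsub
  have hf' : DifferentiableOn ℝ (iteratedDerivWithin 2 φ (Set.Icc m x)) (Set.Ioo m x) := by
    intro t ht
    have htI : t ∈ Set.Icc m x := Set.mem_Icc_of_Ioo ht
    exact ((iDeriv_diffAt hU hφ (by norm_num) (hsub htI)).differentiableWithinAt).congr
      (fun y hy => hEq 2 (by norm_num) (Set.mem_Icc_of_Ioo hy)) (hEq 2 (by norm_num) htI)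
  obtain ⟨x', hx', h⟩ := taylor_mean_remainder_lagrange (n := 2) hmx.ne
    (by rw [Set.uIcc_of_le hmx.le]; exact_mod_cast hf)
    (by rw [Set.uIcc_of_le hmx.le, Set.uIoo_of_le hmx.le]; exact hf')
  rw [Set.uIcc_of_le hmx.le] at h
  rw [Set.uIoo_of_le hmx.le] at hx'
  have hmI : m ∈ Set.Icc m x := Set.left_mem_Icc.2 hmx.le
  have hT : taylorWithinEval φ 2 (Set.Icc m x) m x =
      φ m + deriv φ m * (x - m) + iteratedDeriv 2 φ m / 2 * (x - m) ^ 2 := by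
    simp only [taylorWithinEval_succ, taylor_within_zero_eval, hEq 1 (by norm_num) hmI,
      hEq 2 (by norm_num) hmI, iteratedDeriv_one, smul_eq_mul]
    norm_num
    ring
  have h3 : iteratedDerivWithin 3 φ (Set.Icc m x) x' = iteratedDeriv 3 φ x' :=
    hEq 3 le_rfl (Set.mem_Icc_of_Ioo hx')
  rw [hT, h3] at h
  have h30 : 0 ≤ iteratedDeriv 3 φ x' := hφ3 x' (hsub (Set.mem_Icc_of_Ioo hx'))
  have hxm : 0 ≤ x - m := by linarith [hmx]
  have hpos : 0 ≤ iteratedDeriv 3 φ x' * (x - m) ^ (2 + 1) / ((2 + 1).factorial : ℝ) := by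
    positivity
  linarith [h, hpos]

private lemma taylor2_le {a b x M : ℝ} {φ : ℝ → ℝ} (hφ : ContDiffOn ℝ 3 φ (Set.Ioo a b))
    (hφ3 : ∀ t ∈ Set.Ioo a b, 0 ≤ iteratedDeriv 3 φ t)
    (hax : a < x) (hxM : x < M) (hMb : M < b) :
    φ x ≤ φ M + deriv φ M * (x - M) + iteratedDeriv 2 φ M / 2 * (x - M) ^ 2 := by
  set ψ : ℝ → ℝ := fun t => -φ (-t) with hψdef
  have hψiter : ∀ (n : ℕ) (t : ℝ),
      iteratedDeriv n ψ t = (-1 : ℝ) ^ (n + 1) * iteratedDeriv n φ (-t) := by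
    intro n t
    have h1 : iteratedDeriv n (fun s => (fun u => -φ u) (-s)) t
        = (-1 : ℝ) ^ n • iteratedDeriv n (fun u => -φ u) (-t) :=
      iteratedDeriv_comp_neg n (fun u => -φ u) t
    have h2 : iteratedDeriv n (fun u => -(φ u)) (-t) = -(iteratedDeriv n φ (-t)) :=
      iteratedDeriv_neg n φ (-t)
    calc iteratedDeriv n ψ t = (-1 : ℝ) ^ n • iteratedDeriv n (fun u => -φ u) (-t) := h1
      _ = (-1 : ℝ) ^ n * (-(iteratedDeriv n φ (-t))) := by rw [h2, smul_eq_mul]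
      _ = (-1 : ℝ) ^ (n + 1) * iteratedDeriv n φ (-t) := by ring
  have hψ : ContDiffOn ℝ 3 ψ (Set.Ioo (-b) (-a)) := by
    have : ContDiffOn ℝ 3 (fun u => -φ u) (Set.Ioo a b) := hφ.neg
    exact this.comp contDiff_neg.contDiffOn
      (fun t ht => ⟨by linarith [ht.2], by linarith [ht.1]⟩)
  have hψ3 : ∀ t ∈ Set.Ioo (-b) (-a), 0 ≤ iteratedDeriv 3 ψ t := by
    intro t ht
    rw [hψiter 3 t]
    have h0 : 0 ≤ iteratedDeriv 3 φ (-t) := hφ3 (-t) ⟨by linarith [ht.2], by linarith [ht.1]⟩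
    rw [show ((-1:ℝ)) ^ (3 + 1) = 1 by norm_num, one_mul]; exact h0
  have key := taylor2_ge hψ hψ3 (show -b < -M by linarith) (show -M < -x by linarith)
    (show -x < -a by linarith)
  have e0 : ψ (-M) = -φ M := by simp [hψdef]
  have e0' : ψ (-x) = -φ x := by simp [hψdef]
  have e1 : deriv ψ (-M) = deriv φ M := by
    have h1 := hψiter 1 (-M)
    rw [iteratedDeriv_one] at h1
    rw [h1]; norm_num
  have e2 : iteratedDeriv 2 ψ (-M) = -iteratedDeriv 2 φ M := by
    have h2 := hψiter 2 (-M)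
    rw [h2]; norm_num
  rw [e0, e0', e1, e2] at key
  nlinarith [key]

/-- Pointwise Edmundson–Lah–Ribarič type estimate for 3-convex functions
(inequality (2.16) in the paper). -/
theorem elr_pointwise_tm3 (m M : ℝ) (hmM : m < M)
    (φ : ℝ → ℝ) (a b : ℝ) (ham : a < m) (hMb : M < b)
    (hφ : ContDiffOn ℝ 3 φ (Set.Ioo a b))
    (hφ3 : ∀ t ∈ Set.Ioo a b, 0 ≤ iteratedDeriv 3 φ t)
    (x : ℝ) (hx : x ∈ Set.Ioo m M) :
    let Δ := (φ M - φ m) / (M - m)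
    (M - x) * (deriv φ M - Δ - iteratedDeriv 2 φ M / 2 * (M - x))
        ≤ (M - x) / (M - m) * φ m + (x - m) / (M - m) * φ M - φ x
      ∧ (M - x) / (M - m) * φ m + (x - m) / (M - m) * φ M - φ x
        ≤ (x - m) * (Δ - deriv φ m - iteratedDeriv 2 φ m / 2 * (x - m)) := by
  intro Δ
  obtain ⟨hmx, hxM⟩ := hx
  have hMm : (0:ℝ) < M - m := by linarith
  have hΔ : Δ * (M - m) = φ M - φ m := by
    simp only [Δ]; field_simp
  have key : (M - x) / (M - m) * φ m + (x - m) / (M - m) * φ M = φ m + Δ * (x - m) := by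
    simp only [Δ]; field_simp; ring
  constructor
  · have T := taylor2_le hφ hφ3 (by linarith) hxM hMb
    rw [key]
    nlinarith [T, hΔ]
  · have T := taylor2_ge hφ hφ3 ham hmx (by linarith)
    rw [key]
    nlinarith [T, hΔ]
end

section
/- Let f : ℝ → ℝ be three times continuously differentiable on an open interval containing [m,M] with f''' ≥ 0 there (f is 3-convex). Then, writing Δ = (f(M) − f(m))/(M − m): (1 − m)·[Δ − f'(m)/2] − (1/2)·∑_{i=1}^n (p_i − m·q_i)·f'(p_i/q_i) ≤ (M − 1)/(M − m)·f(m) + (1 − m)/(M − m)·f(M) − D̃_f(p,q) ≤ (1/2)·∑_{i=1}^n (M·q_i − p_i)·f'(p_i/q_i) − (M − 1)·[Δ − f'(M)/2]. -/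
open Set Finset

/-- Trapezoid inequality for 3-convex functions. -/
lemma trap_ineq (f : ℝ → ℝ) (a b : ℝ)
    (hf : ContDiffOn ℝ 3 f (Set.Ioo a b))
    (hf3 : ∀ x ∈ Set.Ioo a b, 0 ≤ iteratedDeriv 3 f x)
    (u v : ℝ) (hu : u ∈ Set.Ioo a b) (hv : v ∈ Set.Ioo a b) (huv : u ≤ v) :
    f v - f u ≤ (v - u) * (deriv f u + deriv f v) / 2 := by
  have hs : IsOpen (Set.Ioo a b) := isOpen_Ioo
  have h1 : ContDiffOn ℝ 2 (deriv f) (Set.Ioo a b) :=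
    hf.deriv_of_isOpen hs (by norm_num)
  have h2 : ContDiffOn ℝ 1 (deriv (deriv f)) (Set.Ioo a b) :=
    h1.deriv_of_isOpen hs (by norm_num)
  have hdf : DifferentiableOn ℝ f (Set.Ioo a b) := hf.differentiableOn (by norm_num)
  have hdf1 : DifferentiableOn ℝ (deriv f) (Set.Ioo a b) := h1.differentiableOn (by norm_num)
  have hdf2 : DifferentiableOn ℝ (deriv (deriv f)) (Set.Ioo a b) := h2.differentiableOn (by norm_num)
  have e3 : iteratedDeriv 3 f = deriv (deriv (deriv f)) := by
    rw [show (3 : ℕ) = 2 + 1 from rfl, iteratedDeriv_succ,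
      show (2 : ℕ) = 1 + 1 from rfl, iteratedDeriv_succ, iteratedDeriv_one]
  have hmono : MonotoneOn (deriv (deriv f)) (Set.Ioo a b) := by
    apply monotoneOn_of_deriv_nonneg (convex_Ioo a b) hdf2.continuousOn
    · rw [interior_Ioo]; exact hdf2
    · intro x hx
      rw [interior_Ioo] at hx
      have := hf3 x hx
      rwa [e3] at this
  rcases eq_or_lt_of_le huv with h | huv'
  · subst h; simp
  have hsub : Set.Icc u v ⊆ Set.Ioo a b := Set.Icc_subset_Ioo hu.1 hv.2
  set h : ℝ → ℝ := fun x => (x - u) * (deriv f u + deriv f x) / 2 - (f x - f u) with hh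
  have hmonoH : MonotoneOn h (Set.Icc u v) := by
    apply monotoneOn_of_deriv_nonneg (convex_Icc u v)
    · exact (((continuousOn_id.sub continuousOn_const).mul
        (continuousOn_const.add (hdf1.continuousOn.mono hsub))).div_const 2).sub
        ((hdf.continuousOn.mono hsub).sub continuousOn_const)
    · rw [interior_Icc]
      have hsub' : Set.Ioo u v ⊆ Set.Ioo a b := fun x hx => hsub (Set.Ioo_subset_Icc_self hx)
      exact ((((differentiableOn_id.sub (differentiableOn_const _)).mul
        ((differentiableOn_const _).add (hdf1.mono hsub'))).div_const 2).sub
        ((hdf.mono hsub').sub (differentiableOn_const _)))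
    · intro x hx
      rw [interior_Icc] at hx
      have hx' : x ∈ Set.Ioo a b := hsub (Set.Ioo_subset_Icc_self hx)
      have H1 : HasDerivAt f (deriv f x) x :=
        (hdf.differentiableAt (hs.mem_nhds hx')).hasDerivAt
      have H2 : HasDerivAt (deriv f) (deriv (deriv f) x) x :=
        (hdf1.differentiableAt (hs.mem_nhds hx')).hasDerivAt
      have Hh : HasDerivAt h
          ((1 * (deriv f u + deriv f x) + (x - u) * (0 + deriv (deriv f) x)) / 2
            - deriv f x) x := by
        exact ((((hasDerivAt_id x).sub_const u).mul
          ((hasDerivAt_const x (deriv f u)).add H2)).div_const 2).sub (H1.sub_const (f u))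
      rw [Hh.deriv]
      -- gradient inequality: deriv f x - deriv f u ≤ (x - u) * deriv (deriv f) x
      have hux : u < x := hx.1
      obtain ⟨c, hc, hceq⟩ := exists_deriv_eq_slope (deriv f) hux
        (hdf1.continuousOn.mono (fun y hy => hsub ⟨hy.1, le_trans hy.2 hx.2.le⟩))
        (hdf1.mono (fun y hy => hsub (Set.Ioo_subset_Icc_self ⟨hy.1, lt_trans hy.2 hx.2⟩)))
      have hc' : c ∈ Set.Ioo a b := hsub (Set.Ioo_subset_Icc_self ⟨hc.1, lt_trans hc.2 hx.2⟩)
      have hle : deriv (deriv f) c ≤ deriv (deriv f) x := hmono hc' hx' hc.2.le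
      have hgrad : deriv f x - deriv f u ≤ (x - u) * deriv (deriv f) x := by
        have hxu : (0:ℝ) < x - u := by linarith
        have : (deriv f x - deriv f u) / (x - u) ≤ deriv (deriv f) x := by
          rw [← hceq]; exact hle
        calc deriv f x - deriv f u = (x - u) * ((deriv f x - deriv f u) / (x - u)) := by
              field_simp
          _ ≤ (x - u) * deriv (deriv f) x := by
              exact mul_le_mul_of_nonneg_left this hxu.le
      linarith
  have h0 : h u = 0 := by simp [hh]
  have hv0 : h u ≤ h v := hmonoH (Set.left_mem_Icc.2 huv) (Set.right_mem_Icc.2 huv) huv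
  rw [h0] at hv0
  simp only [hh] at hv0
  linarith

lemma alg_low (m M x fm fM fx dm dx : ℝ) (hMm : 0 < M - m)
    (T : fx - fm ≤ (x - m) * (dm + dx) / 2) :
    (x - m) * ((fM - fm) / (M - m) - (dm + dx) / 2)
      ≤ ((M - x) * fm + (x - m) * fM) / (M - m) - fx := by
  have h2 : ((M - x) * fm + (x - m) * fM) / (M - m) - fx
      = ((M - x) * fm + (x - m) * fM - (M - m) * fx) / (M - m) := by
    field_simp
  have h3 : (x - m) * ((fM - fm) / (M - m) - (dm + dx) / 2)
      = ((x - m) * (fM - fm) - (M - m) * ((x - m) * (dm + dx) / 2)) / (M - m) := by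
    field_simp
  rw [h2, h3, div_le_div_iff₀ hMm hMm]
  have h4 := mul_le_mul_of_nonneg_left T hMm.le
  nlinarith [h4]

lemma alg_high (m M x fm fM fx dM dx : ℝ) (hMm : 0 < M - m)
    (T : fM - fx ≤ (M - x) * (dx + dM) / 2) :
    ((M - x) * fm + (x - m) * fM) / (M - m) - fx
      ≤ (M - x) * ((dx + dM) / 2 - (fM - fm) / (M - m)) := by
  have h2 : ((M - x) * fm + (x - m) * fM) / (M - m) - fx
      = ((M - x) * fm + (x - m) * fM - (M - m) * fx) / (M - m) := by
    field_simp
  have h3 : (M - x) * ((dx + dM) / 2 - (fM - fm) / (M - m))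
      = ((M - m) * ((M - x) * (dx + dM) / 2) - (M - x) * (fM - fm)) / (M - m) := by
    field_simp
  rw [h2, h3, div_le_div_iff₀ hMm hMm]
  have h4 := mul_le_mul_of_nonneg_left T hMm.le
  nlinarith [h4]

/-- Edmundson–Lah–Ribarič type inequality for the generalized f-divergence
functional (Theorem 3.1 of the paper). -/
theorem elr_f_divergence_tm2 (n : ℕ) (p q : Fin n → ℝ)
    (m M : ℝ) (hmM : m < M) (hm1 : m ≤ 1) (h1M : 1 ≤ M)
    (hp : ∀ i, 0 ≤ p i) (hq : ∀ i, 0 < q i)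
    (hps : ∑ i, p i = 1) (hqs : ∑ i, q i = 1)
    (hratio : ∀ i, p i / q i ∈ Set.Icc m M)
    (f : ℝ → ℝ) (a b : ℝ) (ham : a < m) (hMb : M < b)
    (hf : ContDiffOn ℝ 3 f (Set.Ioo a b))
    (hf3 : ∀ x ∈ Set.Ioo a b, 0 ≤ iteratedDeriv 3 f x) :
    let Δ := (f M - f m) / (M - m)
    (1 - m) * (Δ - deriv f m / 2)
          - (1 / 2) * ∑ i, (p i - m * q i) * deriv f (p i / q i)
        ≤ (M - 1) / (M - m) * f m + (1 - m) / (M - m) * f M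
            - ∑ i, q i * f (p i / q i)
      ∧ (M - 1) / (M - m) * f m + (1 - m) / (M - m) * f M
            - ∑ i, q i * f (p i / q i)
        ≤ (1 / 2) * ∑ i, (M * q i - p i) * deriv f (p i / q i)
            - (M - 1) * (Δ - deriv f M / 2) := by
  intro Δ
  have hΔ : Δ = (f M - f m) / (M - m) := rfl
  rw [hΔ]
  have hMm : (0:ℝ) < M - m := sub_pos.2 hmM
  have hm' : m ∈ Set.Ioo a b := ⟨ham, lt_trans hmM hMb⟩
  have hM' : M ∈ Set.Ioo a b := ⟨lt_trans ham hmM, hMb⟩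
  have hsubIcc : Set.Icc m M ⊆ Set.Ioo a b := Set.Icc_subset_Ioo ham hMb
  have hpi : ∀ i, q i * (p i / q i) = p i := fun i => by
    rw [mul_comm, div_mul_cancel₀ _ (hq i).ne']
  have hsum2 : ∑ i, (p i - m * q i) = 1 - m := by
    rw [Finset.sum_sub_distrib, ← Finset.mul_sum, hps, hqs, mul_one]
  have hsum3 : ∑ i, (M * q i - p i) = M - 1 := by
    rw [Finset.sum_sub_distrib, ← Finset.mul_sum, hps, hqs, mul_one]
  -- pointwise bounds
  have pointlow : ∀ i, (p i / q i - m) * ((f M - f m) / (M - m)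
        - (deriv f m + deriv f (p i / q i)) / 2)
      ≤ ((M - p i / q i) * f m + (p i / q i - m) * f M) / (M - m) - f (p i / q i) := by
    intro i
    have hxi := hratio i
    exact alg_low m M _ _ _ _ _ _ hMm
      (trap_ineq f a b hf hf3 m _ hm' (hsubIcc hxi) hxi.1)
  have pointhigh : ∀ i, ((M - p i / q i) * f m + (p i / q i - m) * f M) / (M - m)
        - f (p i / q i)
      ≤ (M - p i / q i) * ((deriv f (p i / q i) + deriv f M) / 2
        - (f M - f m) / (M - m)) := by
    intro i
    have hxi := hratio i
    exact alg_high m M _ _ _ _ _ _ hMm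
      (trap_ineq f a b hf hf3 _ M (hsubIcc hxi) hM' hxi.2)
  -- middle equality
  have mid_eq : ∑ i, q i * (((M - p i / q i) * f m + (p i / q i - m) * f M) / (M - m)
        - f (p i / q i))
      = (M - 1) / (M - m) * f m + (1 - m) / (M - m) * f M - ∑ i, q i * f (p i / q i) := by
    have step1 : ∀ i, q i * (((M - p i / q i) * f m + (p i / q i - m) * f M) / (M - m)
          - f (p i / q i))
        = ((f M - f m) / (M - m)) * p i + ((M * f m - m * f M) / (M - m)) * q i
          - q i * f (p i / q i) := by
      intro i
      have h := hpi i
      have hqne : q i ≠ 0 := (hq i).ne'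
      field_simp
      ring
    rw [Finset.sum_congr rfl (fun i _ => step1 i), Finset.sum_sub_distrib,
      Finset.sum_add_distrib, ← Finset.mul_sum, ← Finset.mul_sum, hps, hqs]
    field_simp
    ring
  constructor
  · calc (1 - m) * ((f M - f m) / (M - m) - deriv f m / 2)
          - 1 / 2 * ∑ i, (p i - m * q i) * deriv f (p i / q i)
        = ∑ i, ((p i - m * q i) * ((f M - f m) / (M - m) - deriv f m / 2)
            - 1 / 2 * ((p i - m * q i) * deriv f (p i / q i))) := by
          rw [Finset.sum_sub_distrib, ← Finset.sum_mul, hsum2, ← Finset.mul_sum]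
      _ = ∑ i, q i * ((p i / q i - m) * ((f M - f m) / (M - m)
            - (deriv f m + deriv f (p i / q i)) / 2)) := by
          refine Finset.sum_congr rfl (fun i _ => ?_)
          have h := hpi i
          have hqne : q i ≠ 0 := (hq i).ne'
          field_simp
          ring
      _ ≤ ∑ i, q i * (((M - p i / q i) * f m + (p i / q i - m) * f M) / (M - m)
            - f (p i / q i)) := by
          exact Finset.sum_le_sum (fun i _ =>
            mul_le_mul_of_nonneg_left (pointlow i) (hq i).le)
      _ = _ := mid_eq
  · calc (M - 1) / (M - m) * f m + (1 - m) / (M - m) * f M - ∑ i, q i * f (p i / q i)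
        = ∑ i, q i * (((M - p i / q i) * f m + (p i / q i - m) * f M) / (M - m)
            - f (p i / q i)) := mid_eq.symm
      _ ≤ ∑ i, q i * ((M - p i / q i) * ((deriv f (p i / q i) + deriv f M) / 2
            - (f M - f m) / (M - m))) := by
          exact Finset.sum_le_sum (fun i _ =>
            mul_le_mul_of_nonneg_left (pointhigh i) (hq i).le)
      _ = ∑ i, (1 / 2 * ((M * q i - p i) * deriv f (p i / q i))
            - (M * q i - p i) * ((f M - f m) / (M - m) - deriv f M / 2)) := by
          refine Finset.sum_congr rfl (fun i _ => ?_)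
          have h := hpi i
          have hqne : q i ≠ 0 := (hq i).ne'
          field_simp
          ring
      _ = 1 / 2 * ∑ i, (M * q i - p i) * deriv f (p i / q i)
            - (M - 1) * ((f M - f m) / (M - m) - deriv f M / 2) := by
          rw [Finset.sum_sub_distrib, ← Finset.mul_sum, ← Finset.sum_mul, hsum3]
end

section
/- Assume additionally 0 < m. For the Kullback–Leibler generating function f(t) = t·ln t one has f''' < 0 on (0,∞), so −f is 3-convex and the Edmundson–Lah–Ribarič chain reverses: writing Δ = (M·ln M − m·ln m)/(M − m), (M − 1)·[(ln M + 1) − Δ] − (1/(2M))·∑_{i=1}^n (M·q_i − p_i)²/q_i ≥ (M − 1)/(M − m)·m·ln m + (1 − m)/(M − m)·M·ln M − ∑_{i=1}^n p_i·ln(p_i/q_i) ≥ (1 − m)·[Δ − (ln m + 1)] − (1/(2m))·∑_{i=1}^n (p_i − m·q_i)²/q_i. -/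
noncomputable def phiKL (t : ℝ) : ℝ := (t^2 - 1)/2 - t * Real.log t

lemma phiKL_mono : MonotoneOn phiKL (Set.Ici (0:ℝ)) := by
  have hc : ContinuousOn phiKL (Set.Ici (0:ℝ)) := by
    apply ContinuousOn.sub
    · fun_prop
    · exact Real.continuous_mul_log.continuousOn
  apply monotoneOn_of_deriv_nonneg (convex_Ici 0) hc
  · intro x hx
    rw [interior_Ici] at hx
    have hx0 : x ≠ 0 := ne_of_gt hx
    apply DifferentiableAt.differentiableWithinAt
    exact (((differentiable_pow 2).differentiableAt.sub_const 1).div_const 2).sub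
      (((differentiableAt_id (x := x)).mul (Real.differentiableAt_log hx0)))
  · intro x hx
    rw [interior_Ici] at hx
    have hd : HasDerivAt phiKL (x - (Real.log x + 1)) x := by
      have h1 : HasDerivAt (fun t : ℝ => (t^2-1)/2) x x := by
        have := ((hasDerivAt_pow 2 x).sub_const 1).div_const 2
        simpa using this
      exact (h1.sub (Real.hasDerivAt_mul_log (ne_of_gt hx)))
    rw [hd.deriv]
    have := Real.log_le_sub_one_of_pos hx
    linarith

lemma phiKL_nonneg {t : ℝ} (ht : 1 ≤ t) : 0 ≤ phiKL t := by
  have h1 : phiKL 1 = 0 := by simp [phiKL]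
  have := phiKL_mono (Set.mem_Ici.2 (by norm_num)) (Set.mem_Ici.2 (by linarith)) ht
  linarith

lemma phiKL_nonpos {t : ℝ} (ht0 : 0 ≤ t) (ht : t ≤ 1) : phiKL t ≤ 0 := by
  have h1 : phiKL 1 = 0 := by simp [phiKL]
  have := phiKL_mono (Set.mem_Ici.2 ht0) (Set.mem_Ici.2 (by norm_num)) ht
  linarith

lemma keyA (m x : ℝ) (hm : 0 < m) (hmx : m ≤ x) :
    x * Real.log x ≤ m * Real.log m + (x - m) * (Real.log m + 1) + (x - m)^2/(2*m) := by
  have hx : 0 < x := lt_of_lt_of_le hm hmx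
  have hφ : 0 ≤ phiKL (x/m) := phiKL_nonneg ((one_le_div hm).2 hmx)
  have hid : m * phiKL (x/m)
      = m * Real.log m + (x - m) * (Real.log m + 1) + (x - m)^2/(2*m) - x * Real.log x := by
    unfold phiKL
    rw [Real.log_div (ne_of_gt hx) (ne_of_gt hm)]
    field_simp
    ring
  nlinarith [mul_nonneg hm.le hφ]

lemma keyB (M x : ℝ) (hx : 0 < x) (hxM : x ≤ M) :
    M * Real.log M + (x - M) * (Real.log M + 1) + (x - M)^2/(2*M) ≤ x * Real.log x := by
  have hM : 0 < M := lt_of_lt_of_le hx hxM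
  have hφ : phiKL (x/M) ≤ 0 := phiKL_nonpos (by positivity) ((div_le_one hM).2 hxM)
  have hid : M * phiKL (x/M)
      = M * Real.log M + (x - M) * (Real.log M + 1) + (x - M)^2/(2*M) - x * Real.log x := by
    unfold phiKL
    rw [Real.log_div (ne_of_gt hx) (ne_of_gt hM)]
    field_simp
    ring
  nlinarith [mul_nonpos_of_nonneg_of_nonpos hM.le hφ]

lemma third_deriv_neg : ∀ t : ℝ, 0 < t → iteratedDeriv 3 (fun s : ℝ => s * Real.log s) t < 0 := by
  intro t ht
  have hmem : ∀ᶠ s in nhds t, 0 < s := eventually_gt_nhds ht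
  have e1 : deriv (fun s : ℝ => s * Real.log s) =ᶠ[nhds t] (fun s => Real.log s + 1) := by
    filter_upwards [hmem] with s hs
    exact (Real.hasDerivAt_mul_log (ne_of_gt hs)).deriv
  have e2 : deriv (deriv (fun s : ℝ => s * Real.log s)) =ᶠ[nhds t] (fun s : ℝ => s⁻¹) := by
    refine e1.deriv.trans ?_
    filter_upwards with s
    rw [deriv_add_const, Real.deriv_log]
  have e3 : deriv (deriv (deriv (fun s : ℝ => s * Real.log s))) t = -(t^2)⁻¹ := by
    rw [e2.deriv_eq, deriv_inv]
  rw [iteratedDeriv_succ, iteratedDeriv_succ, iteratedDeriv_one, e3]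
  have : 0 < (t^2)⁻¹ := by positivity
  linarith

/-- Kullback–Leibler divergence: the generating function `t ↦ t·ln t` has negative
third derivative on `(0,∞)`, and the Edmundson–Lah–Ribarič chain reverses
(Example 3.1 of the paper). -/
theorem elr_kullback_leibler (n : ℕ) (p q : Fin n → ℝ)
    (m M : ℝ) (hmM : m < M) (hm0 : 0 < m) (hm1 : m ≤ 1) (h1M : 1 ≤ M)
    (hp : ∀ i, 0 ≤ p i) (hq : ∀ i, 0 < q i)
    (hps : ∑ i, p i = 1) (hqs : ∑ i, q i = 1)
    (hratio : ∀ i, p i / q i ∈ Set.Icc m M) :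
    (∀ t : ℝ, 0 < t → iteratedDeriv 3 (fun s : ℝ => s * Real.log s) t < 0)
      ∧ (let Δ := (M * Real.log M - m * Real.log m) / (M - m)
        (M - 1) * ((Real.log M + 1) - Δ)
              - 1 / (2 * M) * ∑ i, (M * q i - p i) ^ 2 / q i
            ≥ (M - 1) / (M - m) * (m * Real.log m) + (1 - m) / (M - m) * (M * Real.log M)
                - ∑ i, p i * Real.log (p i / q i)
          ∧ (M - 1) / (M - m) * (m * Real.log m) + (1 - m) / (M - m) * (M * Real.log M)
                - ∑ i, p i * Real.log (p i / q i)
            ≥ (1 - m) * (Δ - (Real.log m + 1))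
                - 1 / (2 * m) * ∑ i, (p i - m * q i) ^ 2 / q i) := by
  refine ⟨third_deriv_neg, ?_⟩
  intro Δ
  have hM0 : (0:ℝ) < M := lt_of_lt_of_le (by norm_num) h1M
  have hMm : (0:ℝ) < M - m := by linarith
  -- sum identities
  have hsub : ∑ i, (p i - m * q i) = 1 - m := by
    rw [Finset.sum_sub_distrib, ← Finset.mul_sum, hps, hqs, mul_one]
  have hsub' : ∑ i, (p i - M * q i) = 1 - M := by
    rw [Finset.sum_sub_distrib, ← Finset.mul_sum, hps, hqs, mul_one]
  -- lower-type summed inequality (from keyA)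
  have SA : ∑ i, p i * Real.log (p i / q i)
      ≤ m * Real.log m + (1 - m) * (Real.log m + 1)
        + 1/(2*m) * ∑ i, (p i - m * q i)^2 / q i := by
    calc ∑ i, p i * Real.log (p i / q i)
        = ∑ i, q i * ((p i / q i) * Real.log (p i / q i)) := by
          refine Finset.sum_congr rfl fun i _ => ?_
          field_simp
          rw [eq_div_iff (hq i).ne']
          ring
      _ ≤ ∑ i, q i * (m * Real.log m + (p i / q i - m) * (Real.log m + 1)
            + (p i / q i - m)^2/(2*m)) := by
          refine Finset.sum_le_sum fun i _ => ?_
          exact mul_le_mul_of_nonneg_left (keyA m _ hm0 (hratio i).1) (hq i).le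
      _ = ∑ i, (m * Real.log m * q i + (Real.log m + 1) * (p i - m * q i)
            + 1/(2*m) * ((p i - m * q i)^2 / q i)) := by
          refine Finset.sum_congr rfl fun i _ => ?_
          have hqi := (hq i).ne'
          field_simp
      _ = m * Real.log m + (1 - m) * (Real.log m + 1)
            + 1/(2*m) * ∑ i, (p i - m * q i)^2 / q i := by
          rw [Finset.sum_add_distrib, Finset.sum_add_distrib, ← Finset.mul_sum,
            ← Finset.mul_sum, ← Finset.mul_sum, hqs, hsub, mul_one]
          ring
  -- upper-type summed inequality (from keyB)
  have SB : M * Real.log M - (M - 1) * (Real.log M + 1)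
        + 1/(2*M) * ∑ i, (M * q i - p i)^2 / q i
      ≤ ∑ i, p i * Real.log (p i / q i) := by
    calc M * Real.log M - (M - 1) * (Real.log M + 1)
          + 1/(2*M) * ∑ i, (M * q i - p i)^2 / q i
        = ∑ i, (M * Real.log M * q i + (Real.log M + 1) * (p i - M * q i)
            + 1/(2*M) * ((M * q i - p i)^2 / q i)) := by
          rw [Finset.sum_add_distrib, Finset.sum_add_distrib, ← Finset.mul_sum,
            ← Finset.mul_sum, ← Finset.mul_sum, hqs, hsub', mul_one]
          ring
      _ = ∑ i, q i * (M * Real.log M + (p i / q i - M) * (Real.log M + 1)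
            + (p i / q i - M)^2/(2*M)) := by
          refine Finset.sum_congr rfl fun i _ => ?_
          have hqi := (hq i).ne'
          field_simp
          ring
      _ ≤ ∑ i, q i * ((p i / q i) * Real.log (p i / q i)) := by
          refine Finset.sum_le_sum fun i _ => ?_
          refine mul_le_mul_of_nonneg_left (keyB M _ ?_ (hratio i).2) (hq i).le
          exact lt_of_lt_of_le hm0 (hratio i).1
      _ = ∑ i, p i * Real.log (p i / q i) := by
          refine Finset.sum_congr rfl fun i _ => ?_
          field_simp
          rw [div_eq_iff (hq i).ne']
          ring
  have hΔ1 : m * Real.log m + (1 - m) * Δ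
      = (M - 1) / (M - m) * (m * Real.log m) + (1 - m) / (M - m) * (M * Real.log M) := by
    show m * Real.log m + (1 - m) * ((M * Real.log M - m * Real.log m) / (M - m)) = _
    field_simp
    ring
  have hΔ2 : M * Real.log M - (M - 1) * Δ
      = (M - 1) / (M - m) * (m * Real.log m) + (1 - m) / (M - m) * (M * Real.log M) := by
    show M * Real.log M - (M - 1) * ((M * Real.log M - m * Real.log m) / (M - m)) = _
    field_simp
    ring
  constructor
  · have : (M - 1) * ((Real.log M + 1) - Δ) - 1 / (2 * M) * ∑ i, (M * q i - p i) ^ 2 / q i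
        = (M * Real.log M - (M - 1) * Δ)
          - (M * Real.log M - (M - 1) * (Real.log M + 1)
            + 1/(2*M) * ∑ i, (M * q i - p i)^2 / q i) := by ring
    rw [ge_iff_le, hΔ2.symm, this]
    linarith [SB]
  · have : (1 - m) * (Δ - (Real.log m + 1)) - 1 / (2 * m) * ∑ i, (p i - m * q i) ^ 2 / q i
        = (m * Real.log m + (1 - m) * Δ)
          - (m * Real.log m + (1 - m) * (Real.log m + 1)
            + 1/(2*m) * ∑ i, (p i - m * q i)^2 / q i) := by ring
    rw [ge_iff_le, hΔ1.symm, this]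
    linarith [SA]
end

section
/- Assume additionally 0 < m. For the Hellinger generating function f(t) = (1/2)·(1 − √t)² one has f''' < 0 on (0,∞), so −f is 3-convex and the Edmundson–Lah–Ribarič chain reverses: writing Δ = (f(M) − f(m))/(M − m) with f as above, (M − 1)·[(1/2 − 1/(2√M)) − Δ] − (1/(8·M^{3/2}))·∑_{i=1}^n (M·q_i − p_i)²/q_i ≥ (M − 1)/(M − m)·(1/2)(1 − √m)² + (1 − m)/(M − m)·(1/2)(1 − √M)² − (1/2)·∑_{i=1}^n (√q_i − √p_i)² ≥ (1 − m)·[Δ − (1/2 − 1/(2√m))] − (1/(8·m^{3/2}))·∑_{i=1}^n (p_i − m·q_i)²/q_i. -/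
open Real Filter

lemma hell_hd1 (s : ℝ) (hs : 0 < s) :
    HasDerivAt (fun s : ℝ => 1 / 2 * (1 - Real.sqrt s) ^ 2)
      (1 / 2 - 1 / (2 * Real.sqrt s)) s := by
  have h := (((Real.hasDerivAt_sqrt hs.ne').const_sub 1).pow 2).const_mul (1/2 : ℝ)
  refine h.congr_deriv (Eq.symm ?_)
  have h0 : Real.sqrt s ≠ 0 := by positivity
  field_simp
  ring

lemma hell_hd2 (s : ℝ) (hs : 0 < s) :
    HasDerivAt (fun s : ℝ => 1 / 2 - 1 / (2 * Real.sqrt s))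
      (1 / (4 * (s * Real.sqrt s))) s := by
  have h0 : Real.sqrt s ≠ 0 := by positivity
  have h1 : (2 : ℝ) * Real.sqrt s ≠ 0 := by positivity
  have h := (((Real.hasDerivAt_sqrt hs.ne').const_mul 2).inv h1).const_sub (1/2 : ℝ)
  simp only [← one_div] at h
  refine h.congr_deriv (Eq.symm ?_)
  have h2 : s = Real.sqrt s ^ 2 := (Real.sq_sqrt hs.le).symm
  rw [h2]
  field_simp
  rw [Real.sqrt_sq (Real.sqrt_nonneg s)]
  ring

lemma hell_hd3 (s : ℝ) (hs : 0 < s) :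
    HasDerivAt (fun s : ℝ => 1 / (4 * (s * Real.sqrt s)))
      (-(3 / (8 * (s ^ 2 * Real.sqrt s)))) s := by
  have h0 : Real.sqrt s ≠ 0 := by positivity
  have hne : (4 : ℝ) * (s * Real.sqrt s) ≠ 0 := by positivity
  have h := (((hasDerivAt_id s).mul (Real.hasDerivAt_sqrt hs.ne')).const_mul 4).inv hne
  simp only [← one_div, id] at h
  refine h.congr_deriv (Eq.symm ?_)
  have h2 : s = Real.sqrt s ^ 2 := (Real.sq_sqrt hs.le).symm
  rw [h2]
  field_simp
  simp only [Pi.mul_apply, id, Real.sqrt_sq (Real.sqrt_nonneg s)]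
  ring

lemma hell_third (t : ℝ) (ht : 0 < t) :
    iteratedDeriv 3 (fun s : ℝ => 1 / 2 * (1 - Real.sqrt s) ^ 2) t < 0 := by
  set f : ℝ → ℝ := fun s => 1 / 2 * (1 - Real.sqrt s) ^ 2
  set g1 : ℝ → ℝ := fun s => 1 / 2 - 1 / (2 * Real.sqrt s)
  set g2 : ℝ → ℝ := fun s => 1 / (4 * (s * Real.sqrt s))
  have e1 : ∀ s ∈ Set.Ioi (0:ℝ), deriv f s = g1 s := fun s hs => (hell_hd1 s hs).deriv
  have e2 : ∀ s ∈ Set.Ioi (0:ℝ), deriv (deriv f) s = g2 s := by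
    intro s hs
    have h : deriv f =ᶠ[nhds s] g1 := eventually_of_mem (Ioi_mem_nhds hs) e1
    rw [h.deriv_eq, (hell_hd2 s hs).deriv]
  have e3 : deriv (deriv (deriv f)) t = -(3 / (8 * (t ^ 2 * Real.sqrt t))) := by
    have h : deriv (deriv f) =ᶠ[nhds t] g2 := eventually_of_mem (Ioi_mem_nhds ht) e2
    rw [h.deriv_eq, (hell_hd3 t ht).deriv]
  rw [show (3:ℕ) = 2 + 1 from rfl, iteratedDeriv_succ, show (2:ℕ) = 1 + 1 from rfl,
    iteratedDeriv_succ, iteratedDeriv_one, e3]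
  have : 0 < 3 / (8 * (t ^ 2 * Real.sqrt t)) := by positivity
  linarith

lemma hell_key1 (a b x y : ℝ) (ha : 0 < a) (hab : a < b) (hy : 0 < y) :
    (b^2*y^2 - x^2) * ((1/2 - 1/(2*b)) - (1/2*(1-b)^2 - 1/2*(1-a)^2)/(b^2-a^2))
      - 1/(8*b^3) * ((b^2*y^2 - x^2)^2/y^2)
      - (b^2*y^2 - x^2)/(b^2-a^2) * (1/2*(1-a)^2)
      - (x^2 - a^2*y^2)/(b^2-a^2) * (1/2*(1-b)^2)
      + 1/2*(y - x)^2
    = (b*y - x)^3*(3*b*y + x) / (8*b^3*y^2) := by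
  have hb : (0:ℝ) < b := ha.trans hab
  have h1 : b^2 - a^2 ≠ 0 := by nlinarith
  have h2 : b ≠ 0 := hb.ne'
  have h3 : y ≠ 0 := hy.ne'
  field_simp
  ring

lemma hell_key2 (a b x y : ℝ) (ha : 0 < a) (hab : a < b) (hy : 0 < y) :
    (b^2*y^2 - x^2)/(b^2-a^2) * (1/2*(1-a)^2)
      + (x^2 - a^2*y^2)/(b^2-a^2) * (1/2*(1-b)^2)
      - 1/2*(y - x)^2
      - (x^2 - a^2*y^2) * ((1/2*(1-b)^2 - 1/2*(1-a)^2)/(b^2-a^2) - (1/2 - 1/(2*a)))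
      + 1/(8*a^3) * ((x^2 - a^2*y^2)^2/y^2)
    = (x - a*y)^3*(3*a*y + x) / (8*a^3*y^2) := by
  have hb : (0:ℝ) < b := ha.trans hab
  have h1 : b^2 - a^2 ≠ 0 := by nlinarith
  have h2 : a ≠ 0 := ha.ne'
  have h3 : y ≠ 0 := hy.ne'
  field_simp
  ring

lemma hell_pow32 (b : ℝ) (hb : 0 < b) : (b^2) ^ ((3:ℝ)/2) = b^3 := by
  rw [← Real.rpow_natCast b 2, ← Real.rpow_mul hb.le, ← Real.rpow_natCast b 3]
  norm_num

lemma hell_term1 (m M pi qi : ℝ) (hm0 : 0 < m) (hmM : m < M)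
    (hpi : 0 ≤ pi) (hqi : 0 < qi) (hhigh : pi ≤ M * qi) :
    0 ≤ (M*qi - pi) * ((1/2 - 1/(2*Real.sqrt M))
            - (1/2*(1-Real.sqrt M)^2 - 1/2*(1-Real.sqrt m)^2)/(M-m))
        - 1/(8*M^((3:ℝ)/2)) * ((M*qi - pi)^2/qi)
        - ((M*qi - pi)/(M-m) * (1/2*(1-Real.sqrt m)^2)
            + (pi - m*qi)/(M-m) * (1/2*(1-Real.sqrt M)^2)
            - 1/2*(Real.sqrt qi - Real.sqrt pi)^2) := by
  have hM0 : 0 < M := hm0.trans hmM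
  obtain ⟨a, ha0, rfl⟩ : ∃ a, 0 < a ∧ m = a^2 :=
    ⟨Real.sqrt m, Real.sqrt_pos.2 hm0, (Real.sq_sqrt hm0.le).symm⟩
  obtain ⟨b, hb0, rfl⟩ : ∃ b, 0 < b ∧ M = b^2 :=
    ⟨Real.sqrt M, Real.sqrt_pos.2 hM0, (Real.sq_sqrt hM0.le).symm⟩
  obtain ⟨x, hx0, rfl⟩ : ∃ x, 0 ≤ x ∧ pi = x^2 :=
    ⟨Real.sqrt pi, Real.sqrt_nonneg _, (Real.sq_sqrt hpi).symm⟩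
  obtain ⟨y, hy0, rfl⟩ : ∃ y, 0 < y ∧ qi = y^2 :=
    ⟨Real.sqrt qi, Real.sqrt_pos.2 hqi, (Real.sq_sqrt hqi.le).symm⟩
  have hab : a < b := by nlinarith
  rw [Real.sqrt_sq ha0.le, Real.sqrt_sq hb0.le, Real.sqrt_sq hx0, Real.sqrt_sq hy0.le,
    hell_pow32 b hb0]
  have hkey := hell_key1 a b x y ha0 hab hy0
  have hgoal : (b^2*y^2 - x^2) * ((1/2 - 1/(2*b)) - (1/2*(1-b)^2 - 1/2*(1-a)^2)/(b^2-a^2))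
      - 1/(8*b^3) * ((b^2*y^2 - x^2)^2/y^2)
      - ((b^2*y^2 - x^2)/(b^2-a^2) * (1/2*(1-a)^2)
          + (x^2 - a^2*y^2)/(b^2-a^2) * (1/2*(1-b)^2)
          - 1/2*(y - x)^2)
      = (b*y - x)^3*(3*b*y + x) / (8*b^3*y^2) := by
    rw [← hkey]; ring
  rw [hgoal]
  have hd : 0 ≤ b*y - x := by nlinarith [mul_pos hb0 hy0, hx0, hhigh]
  apply div_nonneg
  · exact mul_nonneg (pow_nonneg hd 3) (by nlinarith)
  · positivity

lemma hell_term2 (m M pi qi : ℝ) (hm0 : 0 < m) (hmM : m < M)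
    (hpi : 0 ≤ pi) (hqi : 0 < qi) (hlow : m * qi ≤ pi) :
    0 ≤ (M*qi - pi)/(M-m) * (1/2*(1-Real.sqrt m)^2)
        + (pi - m*qi)/(M-m) * (1/2*(1-Real.sqrt M)^2)
        - 1/2*(Real.sqrt qi - Real.sqrt pi)^2
        - ((pi - m*qi) * ((1/2*(1-Real.sqrt M)^2 - 1/2*(1-Real.sqrt m)^2)/(M-m)
            - (1/2 - 1/(2*Real.sqrt m)))
          - 1/(8*m^((3:ℝ)/2)) * ((pi - m*qi)^2/qi)) := by
  have hM0 : 0 < M := hm0.trans hmM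
  obtain ⟨a, ha0, rfl⟩ : ∃ a, 0 < a ∧ m = a^2 :=
    ⟨Real.sqrt m, Real.sqrt_pos.2 hm0, (Real.sq_sqrt hm0.le).symm⟩
  obtain ⟨b, hb0, rfl⟩ : ∃ b, 0 < b ∧ M = b^2 :=
    ⟨Real.sqrt M, Real.sqrt_pos.2 hM0, (Real.sq_sqrt hM0.le).symm⟩
  obtain ⟨x, hx0, rfl⟩ : ∃ x, 0 ≤ x ∧ pi = x^2 :=
    ⟨Real.sqrt pi, Real.sqrt_nonneg _, (Real.sq_sqrt hpi).symm⟩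
  obtain ⟨y, hy0, rfl⟩ : ∃ y, 0 < y ∧ qi = y^2 :=
    ⟨Real.sqrt qi, Real.sqrt_pos.2 hqi, (Real.sq_sqrt hqi.le).symm⟩
  have hab : a < b := by nlinarith
  rw [Real.sqrt_sq ha0.le, Real.sqrt_sq hb0.le, Real.sqrt_sq hx0, Real.sqrt_sq hy0.le,
    hell_pow32 a ha0]
  have hkey := hell_key2 a b x y ha0 hab hy0
  have hgoal : (b^2*y^2 - x^2)/(b^2-a^2) * (1/2*(1-a)^2)
      + (x^2 - a^2*y^2)/(b^2-a^2) * (1/2*(1-b)^2)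
      - 1/2*(y - x)^2
      - ((x^2 - a^2*y^2) * ((1/2*(1-b)^2 - 1/2*(1-a)^2)/(b^2-a^2) - (1/2 - 1/(2*a)))
          - 1/(8*a^3) * ((x^2 - a^2*y^2)^2/y^2))
      = (x - a*y)^3*(3*a*y + x) / (8*a^3*y^2) := by
    rw [← hkey]; ring
  rw [hgoal]
  have hd : 0 ≤ x - a*y := by nlinarith [mul_pos ha0 hy0, hx0, hlow]
  apply div_nonneg
  · exact mul_nonneg (pow_nonneg hd 3) (by nlinarith)
  · positivity


/-- Hellinger divergence: the generating function `t ↦ (1/2)(1 − √t)²` has negative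
third derivative on `(0,∞)`, and the Edmundson–Lah–Ribarič chain reverses
(Example 3.1 of the paper). -/
theorem elr_hellinger (n : ℕ) (p q : Fin n → ℝ)
    (m M : ℝ) (hmM : m < M) (hm0 : 0 < m) (hm1 : m ≤ 1) (h1M : 1 ≤ M)
    (hp : ∀ i, 0 ≤ p i) (hq : ∀ i, 0 < q i)
    (hps : ∑ i, p i = 1) (hqs : ∑ i, q i = 1)
    (hratio : ∀ i, p i / q i ∈ Set.Icc m M) :
    (∀ t : ℝ, 0 < t →
        iteratedDeriv 3 (fun s : ℝ => 1 / 2 * (1 - Real.sqrt s) ^ 2) t < 0)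
      ∧ (let f : ℝ → ℝ := fun s => 1 / 2 * (1 - Real.sqrt s) ^ 2
        let Δ := (f M - f m) / (M - m)
        (M - 1) * ((1 / 2 - 1 / (2 * Real.sqrt M)) - Δ)
              - 1 / (8 * M ^ ((3 : ℝ) / 2)) * ∑ i, (M * q i - p i) ^ 2 / q i
            ≥ (M - 1) / (M - m) * (1 / 2 * (1 - Real.sqrt m) ^ 2)
                + (1 - m) / (M - m) * (1 / 2 * (1 - Real.sqrt M) ^ 2)
                - 1 / 2 * ∑ i, (Real.sqrt (q i) - Real.sqrt (p i)) ^ 2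
          ∧ (M - 1) / (M - m) * (1 / 2 * (1 - Real.sqrt m) ^ 2)
                + (1 - m) / (M - m) * (1 / 2 * (1 - Real.sqrt M) ^ 2)
                - 1 / 2 * ∑ i, (Real.sqrt (q i) - Real.sqrt (p i)) ^ 2
            ≥ (1 - m) * (Δ - (1 / 2 - 1 / (2 * Real.sqrt m)))
                - 1 / (8 * m ^ ((3 : ℝ) / 2)) * ∑ i, (p i - m * q i) ^ 2 / q i) := by
  have hlow : ∀ i, m * q i ≤ p i := fun i => (le_div_iff₀ (hq i)).mp (hratio i).1
  have hhigh : ∀ i, p i ≤ M * q i := fun i => (div_le_iff₀ (hq i)).mp (hratio i).2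
  have hA : M - 1 = ∑ i, (M * q i - p i) := by
    rw [Finset.sum_sub_distrib, ← Finset.mul_sum, hqs, hps, mul_one]
  have hB : (1:ℝ) - m = ∑ i, (p i - m * q i) := by
    rw [Finset.sum_sub_distrib, ← Finset.mul_sum, hqs, hps, mul_one]
  have h1 : (M - 1) * ((1 / 2 - 1 / (2 * Real.sqrt M))
          - (1 / 2 * (1 - Real.sqrt M) ^ 2 - 1 / 2 * (1 - Real.sqrt m) ^ 2) / (M - m))
        - 1 / (8 * M ^ ((3 : ℝ) / 2)) * ∑ i, (M * q i - p i) ^ 2 / q i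
      ≥ (M - 1) / (M - m) * (1 / 2 * (1 - Real.sqrt m) ^ 2)
          + (1 - m) / (M - m) * (1 / 2 * (1 - Real.sqrt M) ^ 2)
          - 1 / 2 * ∑ i, (Real.sqrt (q i) - Real.sqrt (p i)) ^ 2 := by
    have expand : ∑ i, ((M * q i - p i) * ((1 / 2 - 1 / (2 * Real.sqrt M))
            - (1 / 2 * (1 - Real.sqrt M) ^ 2 - 1 / 2 * (1 - Real.sqrt m) ^ 2) / (M - m))
          - 1 / (8 * M ^ ((3 : ℝ) / 2)) * ((M * q i - p i) ^ 2 / q i)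
          - ((M * q i - p i) / (M - m) * (1 / 2 * (1 - Real.sqrt m) ^ 2)
              + (p i - m * q i) / (M - m) * (1 / 2 * (1 - Real.sqrt M) ^ 2)
              - 1 / 2 * (Real.sqrt (q i) - Real.sqrt (p i)) ^ 2))
        = (∑ i, (M * q i - p i)) * ((1 / 2 - 1 / (2 * Real.sqrt M))
            - (1 / 2 * (1 - Real.sqrt M) ^ 2 - 1 / 2 * (1 - Real.sqrt m) ^ 2) / (M - m))
          - 1 / (8 * M ^ ((3 : ℝ) / 2)) * ∑ i, ((M * q i - p i) ^ 2 / q i)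
          - ((∑ i, (M * q i - p i)) / (M - m) * (1 / 2 * (1 - Real.sqrt m) ^ 2)
              + (∑ i, (p i - m * q i)) / (M - m) * (1 / 2 * (1 - Real.sqrt M) ^ 2)
              - 1 / 2 * ∑ i, (Real.sqrt (q i) - Real.sqrt (p i)) ^ 2) := by
      simp only [Finset.sum_sub_distrib, Finset.sum_add_distrib, ← Finset.sum_mul,
        ← Finset.sum_div, ← Finset.mul_sum]
    have hnn : 0 ≤ ∑ i, ((M * q i - p i) * ((1 / 2 - 1 / (2 * Real.sqrt M))
            - (1 / 2 * (1 - Real.sqrt M) ^ 2 - 1 / 2 * (1 - Real.sqrt m) ^ 2) / (M - m))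
          - 1 / (8 * M ^ ((3 : ℝ) / 2)) * ((M * q i - p i) ^ 2 / q i)
          - ((M * q i - p i) / (M - m) * (1 / 2 * (1 - Real.sqrt m) ^ 2)
              + (p i - m * q i) / (M - m) * (1 / 2 * (1 - Real.sqrt M) ^ 2)
              - 1 / 2 * (Real.sqrt (q i) - Real.sqrt (p i)) ^ 2)) :=
      Finset.sum_nonneg fun i _ =>
        hell_term1 m M (p i) (q i) hm0 hmM (hp i) (hq i) (hhigh i)
    rw [expand, ← hA, ← hB] at hnn
    linarith
  have h2 : (M - 1) / (M - m) * (1 / 2 * (1 - Real.sqrt m) ^ 2)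
          + (1 - m) / (M - m) * (1 / 2 * (1 - Real.sqrt M) ^ 2)
          - 1 / 2 * ∑ i, (Real.sqrt (q i) - Real.sqrt (p i)) ^ 2
      ≥ (1 - m) * ((1 / 2 * (1 - Real.sqrt M) ^ 2 - 1 / 2 * (1 - Real.sqrt m) ^ 2) / (M - m)
            - (1 / 2 - 1 / (2 * Real.sqrt m)))
          - 1 / (8 * m ^ ((3 : ℝ) / 2)) * ∑ i, (p i - m * q i) ^ 2 / q i := by
    have expand : ∑ i, ((M * q i - p i) / (M - m) * (1 / 2 * (1 - Real.sqrt m) ^ 2)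
          + (p i - m * q i) / (M - m) * (1 / 2 * (1 - Real.sqrt M) ^ 2)
          - 1 / 2 * (Real.sqrt (q i) - Real.sqrt (p i)) ^ 2
          - ((p i - m * q i) * ((1 / 2 * (1 - Real.sqrt M) ^ 2
                - 1 / 2 * (1 - Real.sqrt m) ^ 2) / (M - m) - (1 / 2 - 1 / (2 * Real.sqrt m)))
            - 1 / (8 * m ^ ((3 : ℝ) / 2)) * ((p i - m * q i) ^ 2 / q i)))
        = (∑ i, (M * q i - p i)) / (M - m) * (1 / 2 * (1 - Real.sqrt m) ^ 2)
          + (∑ i, (p i - m * q i)) / (M - m) * (1 / 2 * (1 - Real.sqrt M) ^ 2)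
          - 1 / 2 * ∑ i, (Real.sqrt (q i) - Real.sqrt (p i)) ^ 2
          - ((∑ i, (p i - m * q i)) * ((1 / 2 * (1 - Real.sqrt M) ^ 2
                - 1 / 2 * (1 - Real.sqrt m) ^ 2) / (M - m) - (1 / 2 - 1 / (2 * Real.sqrt m)))
            - 1 / (8 * m ^ ((3 : ℝ) / 2)) * ∑ i, ((p i - m * q i) ^ 2 / q i)) := by
      simp only [Finset.sum_sub_distrib, Finset.sum_add_distrib, ← Finset.sum_mul,
        ← Finset.sum_div, ← Finset.mul_sum]
    have hnn : 0 ≤ ∑ i, ((M * q i - p i) / (M - m) * (1 / 2 * (1 - Real.sqrt m) ^ 2)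
          + (p i - m * q i) / (M - m) * (1 / 2 * (1 - Real.sqrt M) ^ 2)
          - 1 / 2 * (Real.sqrt (q i) - Real.sqrt (p i)) ^ 2
          - ((p i - m * q i) * ((1 / 2 * (1 - Real.sqrt M) ^ 2
                - 1 / 2 * (1 - Real.sqrt m) ^ 2) / (M - m) - (1 / 2 - 1 / (2 * Real.sqrt m)))
            - 1 / (8 * m ^ ((3 : ℝ) / 2)) * ((p i - m * q i) ^ 2 / q i))) :=
      Finset.sum_nonneg fun i _ =>
        hell_term2 m M (p i) (q i) hm0 hmM (hp i) (hq i) (hlow i)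
    rw [expand, ← hA, ← hB] at hnn
    linarith
  exact ⟨fun t ht => hell_third t ht, h1, h2⟩
end

section
/- Assume additionally 0 < m, and let α ≥ 2. The Rényi generating function f(t) = t^α satisfies f''' ≥ 0 on (0,∞), i.e. it is 3-convex, and hence, writing Δ = (M^α − m^α)/(M − m): (M − 1)·[α·M^{α−1} − Δ] − (α(α−1)·M^{α−2}/2)·∑_{i=1}^n (M·q_i − p_i)²/q_i ≤ (M − 1)/(M − m)·m^α + (1 − m)/(M − m)·M^α − ∑_{i=1}^n q_i^{1−α}·p_i^α ≤ (1 − m)·[Δ − α·m^{α−1}] − (α(α−1)·m^{α−2}/2)·∑_{i=1}^n (p_i − m·q_i)²/q_i. -/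
open Real Filter

/-- Tangent line inequality for `x ↦ x^β`, `β ≥ 1`, at base `a > 0`. -/
lemma elr_tangent_le {β a t : ℝ} (hβ : 1 ≤ β) (ha : 0 < a) (ht : 0 < t) :
    a ^ β + β * a ^ (β - 1) * (t - a) ≤ t ^ β := by
  have hx : (-1 : ℝ) ≤ t / a - 1 := by
    have : 0 < t / a := div_pos ht ha
    linarith
  have hB := one_add_mul_self_le_rpow_one_add hx hβ
  have h1 : (1 : ℝ) + (t / a - 1) = t / a := by ring
  rw [h1, Real.div_rpow ht.le ha.le] at hB
  have hapow : (0 : ℝ) < a ^ β := Real.rpow_pos_of_pos ha β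
  have h2 : a ^ (β - 1) = a ^ β / a := by
    rw [Real.rpow_sub ha, Real.rpow_one]
  have h3 := mul_le_mul_of_nonneg_left hB hapow.le
  rw [mul_div_cancel₀ _ hapow.ne'] at h3
  calc a ^ β + β * a ^ (β - 1) * (t - a)
      = a ^ β * (1 + β * (t / a - 1)) := by
        rw [h2]; field_simp
    _ ≤ t ^ β := h3

/-- Second-order Taylor lower bound for `x ↦ x^α`, `α ≥ 2`, to the right of `a > 0`. -/
lemma elr_taylor2_le {α a t : ℝ} (hα : 2 ≤ α) (ha : 0 < a) (hat : a ≤ t) :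
    a ^ α + α * a ^ (α - 1) * (t - a) + α * (α - 1) * a ^ (α - 2) * (t - a) ^ 2 / 2
      ≤ t ^ α := by
  set F : ℝ → ℝ := fun x =>
    x ^ α - (a ^ α + α * a ^ (α - 1) * (x - a) + α * (α - 1) * a ^ (α - 2) * (x - a) ^ 2 / 2)
    with hF
  have hder : ∀ x : ℝ, 0 < x →
      HasDerivAt F (α * x ^ (α - 1)
        - (α * a ^ (α - 1) + α * (α - 1) * a ^ (α - 2) * (x - a))) x := by
    intro x hx
    have h1 : HasDerivAt (fun x : ℝ => x ^ α) (α * x ^ (α - 1)) x :=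
      Real.hasDerivAt_rpow_const (Or.inl hx.ne')
    have hid : HasDerivAt (fun x : ℝ => x - a) 1 x := (hasDerivAt_id x).sub_const a
    have hsq : HasDerivAt (fun x : ℝ => (x - a) ^ 2) (2 * (x - a)) x := by
      simpa using hid.fun_pow 2
    have h2 : HasDerivAt (fun x : ℝ =>
        a ^ α + α * a ^ (α - 1) * (x - a) + α * (α - 1) * a ^ (α - 2) * (x - a) ^ 2 / 2)
        (α * a ^ (α - 1) * 1 + α * (α - 1) * a ^ (α - 2) / 2 * (2 * (x - a))) x := by
      have := ((hasDerivAt_const x (a ^ α)).fun_add (hid.const_mul (α * a ^ (α - 1)))).fun_add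
        (hsq.const_mul (α * (α - 1) * a ^ (α - 2) / 2))
      exact (this.congr_deriv (by ring)).congr_of_eventuallyEq
        (Filter.Eventually.of_forall fun y => by beta_reduce; ring)
    have := h1.fun_sub h2
    exact this.congr_deriv (by ring)
  have hmono : MonotoneOn F (Set.Ici a) := by
    apply monotoneOn_of_deriv_nonneg (convex_Ici a)
    · intro x hx
      exact (hder x (lt_of_lt_of_le ha hx)).continuousAt.continuousWithinAt
    · intro x hx
      rw [interior_Ici] at hx
      exact ((hder x (ha.trans hx)).differentiableAt).differentiableWithinAt
    · intro x hx
      rw [interior_Ici] at hx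
      have hx0 : 0 < x := ha.trans hx
      rw [(hder x hx0).deriv]
      have htan := elr_tangent_le (β := α - 1) (by linarith) ha hx0
      rw [show α - 1 - 1 = α - 2 by ring] at htan
      nlinarith [htan]
  have h0 : F a = 0 := by simp [hF]
  have := hmono (Set.self_mem_Ici) hat hat
  rw [h0] at this
  simp only [hF] at this
  linarith

/-- Second-order Taylor upper bound for `x ↦ x^α`, `α ≥ 2`, to the left of `a`. -/
lemma elr_taylor2_ge {α a t : ℝ} (hα : 2 ≤ α) (ht : 0 < t) (hat : t ≤ a) :
    t ^ α ≤ a ^ α + α * a ^ (α - 1) * (t - a) + α * (α - 1) * a ^ (α - 2) * (t - a) ^ 2 / 2 := by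
  have ha : 0 < a := ht.trans_le hat
  set G : ℝ → ℝ := fun x =>
    a ^ α + α * a ^ (α - 1) * (x - a) + α * (α - 1) * a ^ (α - 2) * (x - a) ^ 2 / 2 - x ^ α
    with hG
  have hder : ∀ x : ℝ, 0 < x →
      HasDerivAt G ((α * a ^ (α - 1) + α * (α - 1) * a ^ (α - 2) * (x - a))
        - α * x ^ (α - 1)) x := by
    intro x hx
    have h1 : HasDerivAt (fun x : ℝ => x ^ α) (α * x ^ (α - 1)) x :=
      Real.hasDerivAt_rpow_const (Or.inl hx.ne')
    have hid : HasDerivAt (fun x : ℝ => x - a) 1 x := (hasDerivAt_id x).sub_const a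
    have hsq : HasDerivAt (fun x : ℝ => (x - a) ^ 2) (2 * (x - a)) x := by
      simpa using hid.fun_pow 2
    have h2 : HasDerivAt (fun x : ℝ =>
        a ^ α + α * a ^ (α - 1) * (x - a) + α * (α - 1) * a ^ (α - 2) * (x - a) ^ 2 / 2)
        (α * a ^ (α - 1) * 1 + α * (α - 1) * a ^ (α - 2) / 2 * (2 * (x - a))) x := by
      have := ((hasDerivAt_const x (a ^ α)).fun_add (hid.const_mul (α * a ^ (α - 1)))).fun_add
        (hsq.const_mul (α * (α - 1) * a ^ (α - 2) / 2))
      exact (this.congr_deriv (by ring)).congr_of_eventuallyEq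
        (Filter.Eventually.of_forall fun y => by beta_reduce; ring)
    have := h2.fun_sub h1
    exact this.congr_deriv (by ring)
  have hanti : AntitoneOn G (Set.Icc t a) := by
    apply antitoneOn_of_deriv_nonpos (convex_Icc t a)
    · intro x hx
      exact (hder x (lt_of_lt_of_le ht hx.1)).continuousAt.continuousWithinAt
    · intro x hx
      rw [interior_Icc] at hx
      exact ((hder x (ht.trans hx.1)).differentiableAt).differentiableWithinAt
    · intro x hx
      rw [interior_Icc] at hx
      have hx0 : 0 < x := ht.trans hx.1
      rw [(hder x hx0).deriv]
      have htan := elr_tangent_le (β := α - 1) (by linarith) ha hx0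
      rw [show α - 1 - 1 = α - 2 by ring] at htan
      nlinarith [htan]
  have h0 : G a = 0 := by simp [hG]
  have := hanti (Set.mem_Icc.2 ⟨le_refl t, hat⟩) (Set.mem_Icc.2 ⟨hat, le_refl a⟩) hat
  rw [h0] at this
  simp only [hG] at this
  linarith

/-- Third derivative of `s ↦ s^α` at a positive point. -/
lemma elr_third_deriv_rpow {α : ℝ} {t : ℝ} (ht : 0 < t) :
    iteratedDeriv 3 (fun s : ℝ => s ^ α) t = α * ((α - 1) * ((α - 2) * t ^ (α - 3))) := by
  have hmem : ∀ x : ℝ, x ≠ 0 → ({0}ᶜ : Set ℝ) ∈ nhds x := fun x hx =>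
    isOpen_compl_singleton.mem_nhds hx
  have h1 : ∀ x : ℝ, x ≠ 0 → deriv (fun s : ℝ => s ^ α) x = α * x ^ (α - 1) := fun x hx =>
    Real.deriv_rpow_const x α
  have h2 : ∀ x : ℝ, x ≠ 0 →
      deriv (deriv (fun s : ℝ => s ^ α)) x = α * ((α - 1) * x ^ (α - 2)) := by
    intro x hx
    have hev : deriv (fun s : ℝ => s ^ α) =ᶠ[nhds x] fun y => α * y ^ (α - 1) :=
      Filter.eventuallyEq_of_mem (hmem x hx) fun y hy => h1 y hy
    rw [hev.deriv_eq, show α - 2 = α - 1 - 1 by ring]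
    exact ((Real.hasDerivAt_rpow_const (Or.inl hx)).const_mul α).deriv
  have h3 : deriv (deriv (deriv (fun s : ℝ => s ^ α))) t
      = α * ((α - 1) * ((α - 2) * t ^ (α - 3))) := by
    have hev : deriv (deriv (fun s : ℝ => s ^ α)) =ᶠ[nhds t]
        fun y => α * ((α - 1) * y ^ (α - 2)) :=
      Filter.eventuallyEq_of_mem (hmem t ht.ne') fun y hy => h2 y hy
    rw [hev.deriv_eq, show α - 3 = α - 2 - 1 by ring]
    exact (((Real.hasDerivAt_rpow_const (Or.inl ht.ne')).const_mul (α - 1)).const_mul α).deriv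
  rw [show (3 : ℕ) = 2 + 1 by rfl, iteratedDeriv_succ,
    iteratedDeriv_succ, iteratedDeriv_one, h3]

/-- Rényi divergence: for `α ≥ 2` the generating function `t ↦ t^α` is 3-convex on
`(0,∞)`, and the Edmundson–Lah–Ribarič chain holds (Example 3.1 of the paper). -/
theorem elr_renyi (n : ℕ) (p q : Fin n → ℝ)
    (m M : ℝ) (hmM : m < M) (hm0 : 0 < m) (hm1 : m ≤ 1) (h1M : 1 ≤ M)
    (hp : ∀ i, 0 ≤ p i) (hq : ∀ i, 0 < q i)
    (hps : ∑ i, p i = 1) (hqs : ∑ i, q i = 1)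
    (hratio : ∀ i, p i / q i ∈ Set.Icc m M)
    (α : ℝ) (hα : 2 ≤ α) :
    (∀ t : ℝ, 0 < t → 0 ≤ iteratedDeriv 3 (fun s : ℝ => s ^ α) t)
      ∧ (let Δ := (M ^ α - m ^ α) / (M - m)
        (M - 1) * (α * M ^ (α - 1) - Δ)
              - α * (α - 1) * M ^ (α - 2) / 2 * ∑ i, (M * q i - p i) ^ 2 / q i
            ≤ (M - 1) / (M - m) * m ^ α + (1 - m) / (M - m) * M ^ α
                - ∑ i, q i ^ (1 - α) * p i ^ α
          ∧ (M - 1) / (M - m) * m ^ α + (1 - m) / (M - m) * M ^ α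
                - ∑ i, q i ^ (1 - α) * p i ^ α
            ≤ (1 - m) * (Δ - α * m ^ (α - 1))
                - α * (α - 1) * m ^ (α - 2) / 2 * ∑ i, (p i - m * q i) ^ 2 / q i) := by
  constructor
  · intro t ht
    rw [elr_third_deriv_rpow ht]
    have h3 : (0 : ℝ) ≤ t ^ (α - 3) := Real.rpow_nonneg ht.le _
    have h2 : (0 : ℝ) ≤ α - 2 := by linarith
    have h1 : (0 : ℝ) ≤ α - 1 := by linarith
    have h0 : (0 : ℝ) ≤ α := by linarith
    exact mul_nonneg h0 (mul_nonneg h1 (mul_nonneg h2 h3))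
  · dsimp only
    have hMm : (0 : ℝ) < M - m := by linarith
    set T : Fin n → ℝ := fun i => p i / q i with hT
    have hT0 : ∀ i, m ≤ T i := fun i => (hratio i).1
    have hTM : ∀ i, T i ≤ M := fun i => (hratio i).2
    have hTpos : ∀ i, 0 < T i := fun i => lt_of_lt_of_le hm0 (hT0 i)
    have hsum1 : ∑ i, q i * T i = 1 := by
      rw [← hps]
      refine Finset.sum_congr rfl fun i _ => ?_
      have := (hq i).ne'
      rw [hT]
      field_simp
    have hSR : ∑ i, q i ^ (1 - α) * p i ^ α = ∑ i, q i * T i ^ α := by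
      refine Finset.sum_congr rfl fun i _ => ?_
      rw [hT]
      rw [Real.div_rpow (hp i) (hq i).le, Real.rpow_sub (hq i), Real.rpow_one]
      ring
    have hSm : ∑ i, (p i - m * q i) ^ 2 / q i = ∑ i, q i * (T i - m) ^ 2 := by
      refine Finset.sum_congr rfl fun i _ => ?_
      have := (hq i).ne'
      rw [hT]
      field_simp
    have hSM : ∑ i, (M * q i - p i) ^ 2 / q i = ∑ i, q i * (M - T i) ^ 2 := by
      refine Finset.sum_congr rfl fun i _ => ?_
      have := (hq i).ne'
      rw [hT]
      field_simp
    have expand : ∀ a : ℝ,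
        ∑ i, q i * (a ^ α + α * a ^ (α - 1) * (T i - a)
            + α * (α - 1) * a ^ (α - 2) * (T i - a) ^ 2 / 2)
          = a ^ α + α * a ^ (α - 1) * (1 - a)
            + α * (α - 1) * a ^ (α - 2) / 2 * ∑ i, q i * (T i - a) ^ 2 := by
      intro a
      have h1 : ∀ i, q i * (a ^ α + α * a ^ (α - 1) * (T i - a)
            + α * (α - 1) * a ^ (α - 2) * (T i - a) ^ 2 / 2)
          = a ^ α * q i + (α * a ^ (α - 1)) * (q i * T i)
            + (-(α * a ^ (α - 1) * a)) * q i
            + (α * (α - 1) * a ^ (α - 2) / 2) * (q i * (T i - a) ^ 2) := fun i => by ring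
      rw [Finset.sum_congr rfl fun i _ => h1 i, Finset.sum_add_distrib,
        Finset.sum_add_distrib, Finset.sum_add_distrib,
        ← Finset.mul_sum, ← Finset.mul_sum, ← Finset.mul_sum, ← Finset.mul_sum,
        hqs, hsum1]
      ring
    have hsumr : ∑ i, q i * (m ^ α + α * m ^ (α - 1) * (T i - m)
          + α * (α - 1) * m ^ (α - 2) * (T i - m) ^ 2 / 2) ≤ ∑ i, q i * T i ^ α :=
      Finset.sum_le_sum fun i _ =>
        mul_le_mul_of_nonneg_left (elr_taylor2_le hα hm0 (hT0 i)) (hq i).le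
    have hsuml : ∑ i, q i * T i ^ α ≤ ∑ i, q i * (M ^ α + α * M ^ (α - 1) * (T i - M)
          + α * (α - 1) * M ^ (α - 2) * (T i - M) ^ 2 / 2) :=
      Finset.sum_le_sum fun i _ =>
        mul_le_mul_of_nonneg_left (elr_taylor2_ge hα (hTpos i) (hTM i)) (hq i).le
    rw [expand m] at hsumr
    rw [expand M] at hsuml
    have hflip : ∑ i, q i * (T i - M) ^ 2 = ∑ i, q i * (M - T i) ^ 2 :=
      Finset.sum_congr rfl fun i _ => by ring
    rw [hflip] at hsuml
    have hL1 : (M - 1) / (M - m) * m ^ α + (1 - m) / (M - m) * M ^ α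
        = M ^ α - (M - 1) * ((M ^ α - m ^ α) / (M - m)) := by
      field_simp
      ring
    have hL2 : (M - 1) / (M - m) * m ^ α + (1 - m) / (M - m) * M ^ α
        = m ^ α + (1 - m) * ((M ^ α - m ^ α) / (M - m)) := by
      field_simp
      ring
    constructor
    · rw [hSM, hSR, hL1]
      linarith [hsuml]
    · rw [hSm, hSR, hL2]
      linarith [hsumr]
end

section
/- Assume additionally 0 ≤ m. The harmonic generating function f(t) = 2t/(1 + t) satisfies f'''(t) = 12/(1 + t)⁴ > 0 on [0,∞), i.e. it is 3-convex, and hence, writing Δ = (2M/(1+M) − 2m/(1+m))/(M − m): (M − 1)·[2/(1+M)² − Δ] + (2/(1+M)³)·∑_{i=1}^n (M·q_i − p_i)²/q_i ≤ (M − 1)/(M − m)·(2m/(1+m)) + (1 − m)/(M − m)·(2M/(1+M)) − ∑_{i=1}^n 2p_i·q_i/(p_i + q_i) ≤ (1 − m)·[Δ − 2/(1+m)²] + (2/(1+m)³)·∑_{i=1}^n (p_i − m·q_i)²/q_i. -/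
private theorem deriv3_harm (t : ℝ) (ht : 0 ≤ t) :
    iteratedDeriv 3 (fun s : ℝ => 2 * s / (1 + s)) t = 12 / (1 + t) ^ 4 := by
  have hmem : ∀ s : ℝ, s ∈ Set.Ioi (-1 : ℝ) → (1 : ℝ) + s ≠ 0 := by
    intro s hs; simp only [Set.mem_Ioi] at hs; intro h; nlinarith
  have hid : ∀ s : ℝ, HasDerivAt (fun s : ℝ => 1 + s) 1 s := by
    intro s; simpa using (hasDerivAt_id s).const_add 1
  have hg0 : ∀ s : ℝ, s ∈ Set.Ioi (-1 : ℝ) →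
      HasDerivAt (fun s : ℝ => 2 * s / (1 + s)) (2 / (1 + s) ^ 2) s := by
    intro s hs
    have hs' := hmem s hs
    have h1 : HasDerivAt (fun s : ℝ => 2 * s) 2 s := by
      simpa using (hasDerivAt_id s).const_mul 2
    refine (h1.fun_div (hid s) hs').congr_deriv ?_
    field_simp; ring
  have hg1 : ∀ s : ℝ, s ∈ Set.Ioi (-1 : ℝ) →
      HasDerivAt (fun s : ℝ => 2 / (1 + s) ^ 2) (-4 / (1 + s) ^ 3) s := by
    intro s hs
    have hs' := hmem s hs
    have hpow : HasDerivAt (fun s : ℝ => (1 + s) ^ 2) (2 * (1 + s)) s := by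
      simpa using (hid s).fun_pow 2
    have hne : (1 + s) ^ 2 ≠ 0 := pow_ne_zero _ hs'
    refine ((hasDerivAt_const s (2:ℝ)).fun_div hpow hne).congr_deriv ?_
    field_simp; ring
  have hg2 : ∀ s : ℝ, s ∈ Set.Ioi (-1 : ℝ) →
      HasDerivAt (fun s : ℝ => -4 / (1 + s) ^ 3) (12 / (1 + s) ^ 4) s := by
    intro s hs
    have hs' := hmem s hs
    have hpow : HasDerivAt (fun s : ℝ => (1 + s) ^ 3) (3 * (1 + s) ^ 2) s := by
      simpa using (hid s).fun_pow 3
    have hne : (1 + s) ^ 3 ≠ 0 := pow_ne_zero _ hs'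
    refine ((hasDerivAt_const s (-4:ℝ)).fun_div hpow hne).congr_deriv ?_
    field_simp; ring
  have htU : t ∈ Set.Ioi (-1 : ℝ) := by simp; linarith
  have hU : ∀ᶠ s in nhds t, s ∈ Set.Ioi (-1 : ℝ) := isOpen_Ioi.eventually_mem htU
  have e1 : deriv (fun s : ℝ => 2 * s / (1 + s)) =ᶠ[nhds t] fun s => 2 / (1 + s) ^ 2 :=
    hU.mono fun s hs => (hg0 s hs).deriv
  have e2 : deriv (deriv (fun s : ℝ => 2 * s / (1 + s))) =ᶠ[nhds t]
      fun s => -4 / (1 + s) ^ 3 :=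
    e1.deriv.trans (hU.mono fun s hs => (hg1 s hs).deriv)
  have e3 : deriv (deriv (deriv (fun s : ℝ => 2 * s / (1 + s)))) t = 12 / (1 + t) ^ 4 :=
    e2.deriv.self_of_nhds.trans (hg2 t htU).deriv
  rw [show (3:ℕ) = 2 + 1 from rfl, iteratedDeriv_succ,
    show (2:ℕ) = 1 + 1 from rfl, iteratedDeriv_succ, iteratedDeriv_one]
  exact e3

private theorem point_left (m M t : ℝ) (hm0 : 0 ≤ m) (hmt : m ≤ t) (htM : t ≤ M)
    (hmM : m < M) :
    (M - t) * (2 / (1 + M) ^ 2 - 2 / ((1 + m) * (1 + M))) + 2 / (1 + M) ^ 3 * (M - t) ^ 2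
      ≤ ((M - t) * (2 * m / (1 + m)) + (t - m) * (2 * M / (1 + M))) / (M - m)
          - 2 * t / (1 + t) := by
  have h1 : (0:ℝ) < 1 + m := by linarith
  have h2 : (0:ℝ) < 1 + t := by linarith
  have h3 : (0:ℝ) < 1 + M := by linarith
  have h4 : (0:ℝ) < M - m := by linarith
  rw [← sub_nonneg]
  have key : ((M - t) * (2 * m / (1 + m)) + (t - m) * (2 * M / (1 + M))) / (M - m)
          - 2 * t / (1 + t)
      - ((M - t) * (2 / (1 + M) ^ 2 - 2 / ((1 + m) * (1 + M)))
          + 2 / (1 + M) ^ 3 * (M - t) ^ 2)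
      = 2 * (M - t) ^ 3 / ((1 + M) ^ 3 * (1 + t)) := by
    field_simp
    ring
  rw [key]
  apply div_nonneg
  · nlinarith
  · positivity

private theorem point_right (m M t : ℝ) (hm0 : 0 ≤ m) (hmt : m ≤ t) (htM : t ≤ M)
    (hmM : m < M) :
    ((M - t) * (2 * m / (1 + m)) + (t - m) * (2 * M / (1 + M))) / (M - m)
          - 2 * t / (1 + t)
      ≤ (t - m) * (2 / ((1 + m) * (1 + M)) - 2 / (1 + m) ^ 2)
          + 2 / (1 + m) ^ 3 * (t - m) ^ 2 := by
  have h1 : (0:ℝ) < 1 + m := by linarith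
  have h2 : (0:ℝ) < 1 + t := by linarith
  have h3 : (0:ℝ) < 1 + M := by linarith
  have h4 : (0:ℝ) < M - m := by linarith
  rw [← sub_nonneg]
  have key : (t - m) * (2 / ((1 + m) * (1 + M)) - 2 / (1 + m) ^ 2)
          + 2 / (1 + m) ^ 3 * (t - m) ^ 2
      - (((M - t) * (2 * m / (1 + m)) + (t - m) * (2 * M / (1 + M))) / (M - m)
          - 2 * t / (1 + t))
      = 2 * (t - m) ^ 3 / ((1 + m) ^ 3 * (1 + t)) := by
    field_simp
    ring
  rw [key]
  apply div_nonneg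
  · nlinarith
  · positivity

/-- Harmonic divergence: the generating function `t ↦ 2t/(1+t)` satisfies
`f'''(t) = 12/(1+t)⁴ > 0` on `[0,∞)`, hence is 3-convex there, and the
Edmundson–Lah–Ribarič chain holds (Example 3.1 of the paper). -/
theorem elr_harmonic (n : ℕ) (p q : Fin n → ℝ)
    (m M : ℝ) (hmM : m < M) (hm0 : 0 ≤ m) (hm1 : m ≤ 1) (h1M : 1 ≤ M)
    (hp : ∀ i, 0 ≤ p i) (hq : ∀ i, 0 < q i)
    (hps : ∑ i, p i = 1) (hqs : ∑ i, q i = 1)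
    (hratio : ∀ i, p i / q i ∈ Set.Icc m M) :
    (∀ t : ℝ, 0 ≤ t →
        iteratedDeriv 3 (fun s : ℝ => 2 * s / (1 + s)) t = 12 / (1 + t) ^ 4
          ∧ 0 < iteratedDeriv 3 (fun s : ℝ => 2 * s / (1 + s)) t)
      ∧ (let Δ := (2 * M / (1 + M) - 2 * m / (1 + m)) / (M - m)
        (M - 1) * (2 / (1 + M) ^ 2 - Δ)
              + 2 / (1 + M) ^ 3 * ∑ i, (M * q i - p i) ^ 2 / q i
            ≤ (M - 1) / (M - m) * (2 * m / (1 + m)) + (1 - m) / (M - m) * (2 * M / (1 + M))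
                - ∑ i, 2 * p i * q i / (p i + q i)
          ∧ (M - 1) / (M - m) * (2 * m / (1 + m)) + (1 - m) / (M - m) * (2 * M / (1 + M))
                - ∑ i, 2 * p i * q i / (p i + q i)
            ≤ (1 - m) * (Δ - 2 / (1 + m) ^ 2)
                + 2 / (1 + m) ^ 3 * ∑ i, (p i - m * q i) ^ 2 / q i) := by
  constructor
  · intro t ht
    refine ⟨deriv3_harm t ht, ?_⟩
    rw [deriv3_harm t ht]
    have h2 : (0:ℝ) < 1 + t := by linarith
    positivity
  · intro Δ
    have h1m : (0:ℝ) < 1 + m := by linarith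
    have h1M' : (0:ℝ) < 1 + M := by linarith
    have hMm : (0:ℝ) < M - m := by linarith
    have hΔ : Δ = 2 / ((1 + m) * (1 + M)) := by
      show (2 * M / (1 + M) - 2 * m / (1 + m)) / (M - m) = _
      rw [div_eq_div_iff hMm.ne' (by positivity : ((1+m)*(1+M):ℝ) ≠ 0)]
      field_simp
      ring
    rw [hΔ]
    have hA : ∑ i, (M * q i - p i) ^ 2 / q i = ∑ i, q i * (M - p i / q i) ^ 2 :=
      Finset.sum_congr rfl fun i _ => by
        have hqi := (hq i).ne'; field_simp
    have hB : ∑ i, (p i - m * q i) ^ 2 / q i = ∑ i, q i * (p i / q i - m) ^ 2 :=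
      Finset.sum_congr rfl fun i _ => by
        have hqi := (hq i).ne'; field_simp
    have hC : ∑ i, 2 * p i * q i / (p i + q i)
        = ∑ i, q i * (2 * (p i / q i) / (1 + p i / q i)) :=
      Finset.sum_congr rfl fun i _ => by
        have hqi := (hq i).ne'
        have hpq : p i + q i ≠ 0 := by have := hp i; have := hq i; positivity
        have hqp : q i + p i ≠ 0 := by have := hp i; have := hq i; positivity
        have h1 : (0:ℝ) < 1 + p i / q i := by
          have := hp i; have := hq i; positivity
        rw [eq_comm, eq_div_iff hpq]
        field_simp [h1.ne', hqp]
        ring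
    have hM1 : ∑ i, q i * (M - p i / q i) = M - 1 := by
      have h : ∀ i ∈ Finset.univ, q i * (M - p i / q i) = M * q i - p i := fun i _ => by
        have hqi := (hq i).ne'; field_simp
      rw [Finset.sum_congr rfl h, Finset.sum_sub_distrib, ← Finset.mul_sum, hqs, hps]; ring
    have hm1' : ∑ i, q i * (p i / q i - m) = 1 - m := by
      have h : ∀ i ∈ Finset.univ, q i * (p i / q i - m) = p i - m * q i := fun i _ => by
        have hqi := (hq i).ne'; field_simp
      rw [Finset.sum_congr rfl h, Finset.sum_sub_distrib, ← Finset.mul_sum, hqs, hps]; ring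
    have hmid : (M - 1) / (M - m) * (2 * m / (1 + m))
          + (1 - m) / (M - m) * (2 * M / (1 + M)) - ∑ i, 2 * p i * q i / (p i + q i)
        = ∑ i, q i * (((M - p i / q i) * (2 * m / (1 + m))
            + (p i / q i - m) * (2 * M / (1 + M))) / (M - m)
            - 2 * (p i / q i) / (1 + p i / q i)) := by
      rw [hC, ← hM1, ← hm1', Finset.sum_div, Finset.sum_div, Finset.sum_mul,
        Finset.sum_mul, ← Finset.sum_add_distrib, ← Finset.sum_sub_distrib]
      exact Finset.sum_congr rfl fun i _ => by ring
    have hleft : (M - 1) * (2 / (1 + M) ^ 2 - 2 / ((1 + m) * (1 + M)))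
          + 2 / (1 + M) ^ 3 * ∑ i, (M * q i - p i) ^ 2 / q i
        = ∑ i, q i * ((M - p i / q i) * (2 / (1 + M) ^ 2 - 2 / ((1 + m) * (1 + M)))
            + 2 / (1 + M) ^ 3 * (M - p i / q i) ^ 2) := by
      rw [hA, ← hM1, Finset.sum_mul, Finset.mul_sum, ← Finset.sum_add_distrib]
      exact Finset.sum_congr rfl fun i _ => by ring
    have hright : (1 - m) * (2 / ((1 + m) * (1 + M)) - 2 / (1 + m) ^ 2)
          + 2 / (1 + m) ^ 3 * ∑ i, (p i - m * q i) ^ 2 / q i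
        = ∑ i, q i * ((p i / q i - m) * (2 / ((1 + m) * (1 + M)) - 2 / (1 + m) ^ 2)
            + 2 / (1 + m) ^ 3 * (p i / q i - m) ^ 2) := by
      rw [hB, ← hm1', Finset.sum_mul, Finset.mul_sum, ← Finset.sum_add_distrib]
      exact Finset.sum_congr rfl fun i _ => by ring
    constructor
    · rw [hleft, hmid]
      apply Finset.sum_le_sum
      intro i _
      exact mul_le_mul_of_nonneg_left
        (point_left m M (p i / q i) hm0 (hratio i).1 (hratio i).2 hmM) (hq i).le
    · rw [hmid, hright]
      apply Finset.sum_le_sum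
      intro i _
      exact mul_le_mul_of_nonneg_left
        (point_right m M (p i / q i) hm0 (hratio i).1 (hratio i).2 hmM) (hq i).le
end

section
/- Assume additionally 0 < m. For the Jeffreys generating function f(t) = (1 − t)·ln(1/t) = (t − 1)·ln t one has f'''(t) = −1/t² − 2/t³ < 0 on (0,∞), so −f is 3-convex and the Edmundson–Lah–Ribarič chain reverses: writing Δ = (f(M) − f(m))/(M − m) with f as above, (M − 1)·[(ln M − 1/M + 1) − Δ] − ((1/M + 1/M²)/2)·∑_{i=1}^n (M·q_i − p_i)²/q_i ≥ (M − 1)/(M − m)·(m − 1)ln m + (1 − m)/(M − m)·(M − 1)ln M − ∑_{i=1}^n (p_i − q_i)·ln(p_i/q_i) ≥ (1 − m)·[Δ − (ln m − 1/m + 1)] − ((1/m + 1/m²)/2)·∑_{i=1}^n (p_i − m·q_i)²/q_i. -/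
lemma hd1 (x : ℝ) (hx : 0 < x) :
    HasDerivAt (fun s : ℝ => (s - 1) * Real.log s) (Real.log x + 1 - 1 / x) x := by
  have h := ((hasDerivAt_id x).sub_const 1).mul (Real.hasDerivAt_log hx.ne')
  refine h.congr_deriv ?_
  symm
  simp only [id]
  field_simp
  ring

lemma hd2 (x : ℝ) (hx : 0 < x) :
    HasDerivAt (fun s : ℝ => Real.log s + 1 - 1 / s) (1 / x + 1 / x ^ 2) x := by
  have h := ((Real.hasDerivAt_log hx.ne').add_const 1).sub (hasDerivAt_inv hx.ne')
  have he : (fun s : ℝ => Real.log s + 1 - 1 / s) = fun s : ℝ => Real.log s + 1 - s⁻¹ := by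
    funext s; rw [one_div]
  rw [he]
  refine h.congr_deriv ?_
  symm
  field_simp
  ring

lemma hd3 (x : ℝ) (hx : 0 < x) :
    HasDerivAt (fun s : ℝ => 1 / s + 1 / s ^ 2) (-1 / x ^ 2 - 2 / x ^ 3) x := by
  have h1 : HasDerivAt (fun s : ℝ => s⁻¹) (-(x^2)⁻¹) x := hasDerivAt_inv hx.ne'
  have h2 : HasDerivAt (fun s : ℝ => (s^2)⁻¹) (-(2*x) / (x^2)^2) x := by
    have := ((hasDerivAt_pow 2 x)).inv (by positivity)
    refine this.congr_deriv ?_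
    symm
    push_cast
    ring
  have h := h1.add h2
  have he : (fun s : ℝ => 1 / s + 1 / s ^ 2) = fun s : ℝ => s⁻¹ + (s^2)⁻¹ := by
    funext s; rw [one_div, one_div]
  rw [he]
  refine h.congr_deriv ?_
  symm
  field_simp
  ring

lemma deriv_step {F G H : ℝ → ℝ} (hFG : ∀ s : ℝ, 0 < s → deriv F s = G s)
    (hG : ∀ s : ℝ, 0 < s → HasDerivAt G (H s) s) (t : ℝ) (ht : 0 < t) :
    deriv (deriv F) t = H t := by
  have hev : deriv F =ᶠ[nhds t] G := by
    filter_upwards [isOpen_Ioi.mem_nhds (Set.mem_Ioi.2 ht)] with s hs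
    exact hFG s hs
  rw [hev.deriv_eq, (hG t ht).deriv]

lemma part1 (t : ℝ) (ht : 0 < t) :
    iteratedDeriv 3 (fun s : ℝ => (s - 1) * Real.log s) t = -1 / t ^ 2 - 2 / t ^ 3 := by
  rw [show (3:ℕ) = 2 + 1 from rfl, iteratedDeriv_succ,
    show (2:ℕ) = 1 + 1 from rfl, iteratedDeriv_succ, iteratedDeriv_one]
  have h1 : ∀ s : ℝ, 0 < s → deriv (fun s : ℝ => (s - 1) * Real.log s) s
      = Real.log s + 1 - 1 / s := fun s hs => (hd1 s hs).deriv
  have h2 : ∀ s : ℝ, 0 < s → deriv (deriv (fun s : ℝ => (s - 1) * Real.log s)) s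
      = 1 / s + 1 / s ^ 2 := fun s hs => deriv_step h1 hd2 s hs
  exact deriv_step h2 hd3 t ht

lemma taylorA (m x : ℝ) (hm : 0 < m) (hmx : m ≤ x) :
    (x - 1) * Real.log x ≤ (m - 1) * Real.log m + (Real.log m + 1 - 1 / m) * (x - m)
      + (1 / m + 1 / m ^ 2) / 2 * (x - m) ^ 2 := by
  set c1 : ℝ := Real.log m + 1 - 1 / m with hc1
  set c2 : ℝ := 1 / m + 1 / m ^ 2 with hc2
  set g' : ℝ → ℝ := fun y => c1 + c2 * (y - m) - (Real.log y + 1 - 1 / y) with hg'def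
  set g : ℝ → ℝ := fun y => (m - 1) * Real.log m + c1 * (y - m) + c2 / 2 * (y - m) ^ 2
      - (y - 1) * Real.log y with hgdef
  have hg' : ∀ y : ℝ, 0 < y → HasDerivAt g' (c2 - (1 / y + 1 / y ^ 2)) y := by
    intro y hy
    have h := ((hasDerivAt_const y c1).add
      (((hasDerivAt_id y).sub_const m).const_mul c2)).sub (hd2 y hy)
    refine h.congr_deriv ?_
    symm
    ring
  have hg : ∀ y : ℝ, 0 < y → HasDerivAt g (g' y) y := by
    intro y hy
    have h := (((hasDerivAt_const y ((m - 1) * Real.log m)).add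
        (((hasDerivAt_id y).sub_const m).const_mul c1)).add
        ((((hasDerivAt_id y).sub_const m).pow 2).const_mul (c2 / 2))).sub (hd1 y hy)
    refine h.congr_deriv ?_
    symm
    simp [hg'def]
    ring
  have hpos : ∀ y : ℝ, y ∈ Set.Ici m → 0 < y := fun y hy => lt_of_lt_of_le hm hy
  have hmono' : MonotoneOn g' (Set.Ici m) := by
    apply monotoneOn_of_deriv_nonneg (convex_Ici m)
    · exact fun y hy => ((hg' y (hpos y hy)).continuousAt).continuousWithinAt
    · intro y hy
      rw [interior_Ici] at hy
      exact ((hg' y (hpos y (Set.mem_Ici.2 (le_of_lt hy)))).differentiableAt).differentiableWithinAt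
    · intro y hy
      rw [interior_Ici] at hy
      have hy0 : 0 < y := lt_trans hm hy
      rw [(hg' y hy0).deriv]
      have h1 : 1 / y ≤ 1 / m := by
        apply one_div_le_one_div_of_le hm (le_of_lt hy)
      have h2 : 1 / y ^ 2 ≤ 1 / m ^ 2 := by
        apply one_div_le_one_div_of_le (by positivity)
        exact pow_le_pow_left₀ (le_of_lt hm) (le_of_lt hy) 2
      simp only [hc2]
      linarith
  have hg'm : g' m = 0 := by simp [hg'def, hc1]
  have hg'nonneg : ∀ y ∈ Set.Ici m, 0 ≤ g' y := by
    intro y hy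
    have := hmono' (Set.self_mem_Ici) hy hy
    linarith [hg'm ▸ this]
  have hmono : MonotoneOn g (Set.Ici m) := by
    apply monotoneOn_of_deriv_nonneg (convex_Ici m)
    · exact fun y hy => ((hg y (hpos y hy)).continuousAt).continuousWithinAt
    · intro y hy
      rw [interior_Ici] at hy
      exact ((hg y (hpos y (Set.mem_Ici.2 (le_of_lt hy)))).differentiableAt).differentiableWithinAt
    · intro y hy
      rw [interior_Ici] at hy
      rw [(hg y (lt_trans hm hy)).deriv]
      exact hg'nonneg y (Set.mem_Ici.2 (le_of_lt hy))
  have hgm : g m = 0 := by simp [hgdef]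
  have := hmono (Set.self_mem_Ici) (Set.mem_Ici.2 hmx) hmx
  rw [hgm] at this
  simp only [hgdef] at this
  linarith

lemma taylorB (M x : ℝ) (hx0 : 0 < x) (hxM : x ≤ M) :
    (M - 1) * Real.log M + (Real.log M + 1 - 1 / M) * (x - M)
      + (1 / M + 1 / M ^ 2) / 2 * (x - M) ^ 2 ≤ (x - 1) * Real.log x := by
  have hM0 : 0 < M := lt_of_lt_of_le hx0 hxM
  set c1 : ℝ := Real.log M + 1 - 1 / M with hc1
  set c2 : ℝ := 1 / M + 1 / M ^ 2 with hc2
  set g' : ℝ → ℝ := fun y => (Real.log y + 1 - 1 / y) - c1 - c2 * (y - M) with hg'def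
  set g : ℝ → ℝ := fun y => (y - 1) * Real.log y - ((M - 1) * Real.log M + c1 * (y - M)
      + c2 / 2 * (y - M) ^ 2) with hgdef
  have hpos : ∀ y : ℝ, y ∈ Set.Ioc (0:ℝ) M → 0 < y := fun y hy => hy.1
  have hg' : ∀ y : ℝ, 0 < y → HasDerivAt g' ((1 / y + 1 / y ^ 2) - c2) y := by
    intro y hy
    have h := ((hd2 y hy).sub (hasDerivAt_const y c1)).sub
      (((hasDerivAt_id y).sub_const M).const_mul c2)
    refine h.congr_deriv ?_
    symm
    ring
  have hg : ∀ y : ℝ, 0 < y → HasDerivAt g (g' y) y := by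
    intro y hy
    have h := (hd1 y hy).sub (((hasDerivAt_const y ((M - 1) * Real.log M)).add
        (((hasDerivAt_id y).sub_const M).const_mul c1)).add
        ((((hasDerivAt_id y).sub_const M).pow 2).const_mul (c2 / 2)))
    refine h.congr_deriv ?_
    symm
    simp [hg'def]
    ring
  have hmono' : MonotoneOn g' (Set.Ioc (0:ℝ) M) := by
    apply monotoneOn_of_deriv_nonneg (convex_Ioc 0 M)
    · exact fun y hy => ((hg' y (hpos y hy)).continuousAt).continuousWithinAt
    · intro y hy
      rw [interior_Ioc] at hy
      exact ((hg' y hy.1).differentiableAt).differentiableWithinAt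
    · intro y hy
      rw [interior_Ioc] at hy
      rw [(hg' y hy.1).deriv]
      have h1 : 1 / M ≤ 1 / y := one_div_le_one_div_of_le hy.1 (le_of_lt hy.2)
      have h2 : 1 / M ^ 2 ≤ 1 / y ^ 2 := by
        apply one_div_le_one_div_of_le (pow_pos hy.1 2)
        exact pow_le_pow_left₀ (le_of_lt hy.1) (le_of_lt hy.2) 2
      simp only [hc2]
      linarith
  have hg'M : g' M = 0 := by simp [hg'def, hc1]
  have hg'nonpos : ∀ y ∈ Set.Ioc (0:ℝ) M, g' y ≤ 0 := by
    intro y hy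
    have := hmono' hy (Set.right_mem_Ioc.2 (lt_of_lt_of_le hy.1 hy.2)) hy.2
    linarith [hg'M ▸ this]
  have hanti : AntitoneOn g (Set.Ioc (0:ℝ) M) := by
    apply antitoneOn_of_deriv_nonpos (convex_Ioc 0 M)
    · exact fun y hy => ((hg y (hpos y hy)).continuousAt).continuousWithinAt
    · intro y hy
      rw [interior_Ioc] at hy
      exact ((hg y hy.1).differentiableAt).differentiableWithinAt
    · intro y hy
      rw [interior_Ioc] at hy
      rw [(hg y hy.1).deriv]
      exact hg'nonpos y ⟨hy.1, le_of_lt hy.2⟩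
  have hgM : g M = 0 := by simp [hgdef]
  have := hanti (Set.mem_Ioc.2 ⟨hx0, hxM⟩) (Set.right_mem_Ioc.2 (lt_of_lt_of_le hx0 hxM)) hxM
  rw [hgM] at this
  simp only [hgdef] at this
  linarith

/-- Jeffreys divergence: the generating function `t ↦ (t − 1)·ln t` satisfies
`f'''(t) = −1/t² − 2/t³ < 0` on `(0,∞)`, so `−f` is 3-convex and the
Edmundson–Lah–Ribarič chain reverses (Example 3.1 of the paper). -/
theorem elr_jeffreys (n : ℕ) (p q : Fin n → ℝ)
    (m M : ℝ) (hmM : m < M) (hm0 : 0 < m) (hm1 : m ≤ 1) (h1M : 1 ≤ M)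
    (hp : ∀ i, 0 ≤ p i) (hq : ∀ i, 0 < q i)
    (hps : ∑ i, p i = 1) (hqs : ∑ i, q i = 1)
    (hratio : ∀ i, p i / q i ∈ Set.Icc m M) :
    (∀ t : ℝ, 0 < t →
        iteratedDeriv 3 (fun s : ℝ => (s - 1) * Real.log s) t = -1 / t ^ 2 - 2 / t ^ 3
          ∧ iteratedDeriv 3 (fun s : ℝ => (s - 1) * Real.log s) t < 0)
      ∧ (let f : ℝ → ℝ := fun s => (s - 1) * Real.log s
        let Δ := (f M - f m) / (M - m)
        (M - 1) * ((Real.log M - 1 / M + 1) - Δ)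
              - (1 / M + 1 / M ^ 2) / 2 * ∑ i, (M * q i - p i) ^ 2 / q i
            ≥ (M - 1) / (M - m) * ((m - 1) * Real.log m)
                + (1 - m) / (M - m) * ((M - 1) * Real.log M)
                - ∑ i, (p i - q i) * Real.log (p i / q i)
          ∧ (M - 1) / (M - m) * ((m - 1) * Real.log m)
                + (1 - m) / (M - m) * ((M - 1) * Real.log M)
                - ∑ i, (p i - q i) * Real.log (p i / q i)
            ≥ (1 - m) * (Δ - (Real.log m - 1 / m + 1))
                - (1 / m + 1 / m ^ 2) / 2 * ∑ i, (p i - m * q i) ^ 2 / q i) := by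
  have hM0 : (0:ℝ) < M := lt_of_lt_of_le hm0 (le_of_lt hmM)
  have hMm : M - m ≠ 0 := sub_ne_zero.2 (ne_of_gt hmM)
  constructor
  · intro t ht
    refine ⟨part1 t ht, ?_⟩
    rw [part1 t ht]
    have h : (0:ℝ) < 1 / t ^ 2 + 2 / t ^ 3 := by positivity
    have he : -1 / t ^ 2 - 2 / t ^ 3 = -(1 / t ^ 2 + 2 / t ^ 3) := by ring
    linarith [he ▸ neg_neg_iff_pos.2 h]
  · show (M - 1) * ((Real.log M - 1 / M + 1)
            - ((M - 1) * Real.log M - (m - 1) * Real.log m) / (M - m))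
              - (1 / M + 1 / M ^ 2) / 2 * ∑ i, (M * q i - p i) ^ 2 / q i
            ≥ (M - 1) / (M - m) * ((m - 1) * Real.log m)
                + (1 - m) / (M - m) * ((M - 1) * Real.log M)
                - ∑ i, (p i - q i) * Real.log (p i / q i)
          ∧ (M - 1) / (M - m) * ((m - 1) * Real.log m)
                + (1 - m) / (M - m) * ((M - 1) * Real.log M)
                - ∑ i, (p i - q i) * Real.log (p i / q i)
            ≥ (1 - m) * (((M - 1) * Real.log M - (m - 1) * Real.log m) / (M - m)
                  - (Real.log m - 1 / m + 1))
                - (1 / m + 1 / m ^ 2) / 2 * ∑ i, (p i - m * q i) ^ 2 / q i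
    have hA' : ∑ i, (p i - q i) * Real.log (p i / q i)
        ≤ (m - 1) * Real.log m + (Real.log m + 1 - 1 / m) * (1 - m)
          + (1 / m + 1 / m ^ 2) / 2 * ∑ i, (p i - m * q i) ^ 2 / q i := by
      calc ∑ i, (p i - q i) * Real.log (p i / q i)
          ≤ ∑ i, (((m - 1) * Real.log m) * q i + (Real.log m + 1 - 1 / m) * p i
              - ((Real.log m + 1 - 1 / m) * m) * q i
              + ((1 / m + 1 / m ^ 2) / 2) * ((p i - m * q i) ^ 2 / q i)) := by
            apply Finset.sum_le_sum
            intro i _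
            have hqi := hq i
            have ht := taylorA m (p i / q i) hm0 (hratio i).1
            set ℓ := Real.log (p i / q i) with hl
            have e1 : (p i - q i) * ℓ = q i * ((p i / q i - 1) * ℓ) := by
              field_simp
            have e2 : q i * ((m - 1) * Real.log m
                  + (Real.log m + 1 - 1 / m) * (p i / q i - m)
                  + (1 / m + 1 / m ^ 2) / 2 * (p i / q i - m) ^ 2)
                = ((m - 1) * Real.log m) * q i + (Real.log m + 1 - 1 / m) * p i
                  - ((Real.log m + 1 - 1 / m) * m) * q i
                  + ((1 / m + 1 / m ^ 2) / 2) * ((p i - m * q i) ^ 2 / q i) := by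
              field_simp
              ring
            rw [e1, ← e2]
            exact mul_le_mul_of_nonneg_left ht hqi.le
        _ = (m - 1) * Real.log m + (Real.log m + 1 - 1 / m) * (1 - m)
              + (1 / m + 1 / m ^ 2) / 2 * ∑ i, (p i - m * q i) ^ 2 / q i := by
            simp only [Finset.sum_add_distrib, Finset.sum_sub_distrib, ← Finset.mul_sum]
            rw [hps, hqs]
            ring
    have hB' : (M - 1) * Real.log M + (Real.log M + 1 - 1 / M) * (1 - M)
          + (1 / M + 1 / M ^ 2) / 2 * ∑ i, (M * q i - p i) ^ 2 / q i
        ≤ ∑ i, (p i - q i) * Real.log (p i / q i) := by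
      calc (M - 1) * Real.log M + (Real.log M + 1 - 1 / M) * (1 - M)
              + (1 / M + 1 / M ^ 2) / 2 * ∑ i, (M * q i - p i) ^ 2 / q i
          = ∑ i, (((M - 1) * Real.log M) * q i + (Real.log M + 1 - 1 / M) * p i
              - ((Real.log M + 1 - 1 / M) * M) * q i
              + ((1 / M + 1 / M ^ 2) / 2) * ((M * q i - p i) ^ 2 / q i)) := by
            simp only [Finset.sum_add_distrib, Finset.sum_sub_distrib, ← Finset.mul_sum]
            rw [hps, hqs]
            ring
        _ ≤ ∑ i, (p i - q i) * Real.log (p i / q i) := by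
            apply Finset.sum_le_sum
            intro i _
            have hqi := hq i
            have hr0 : 0 < p i / q i := lt_of_lt_of_le hm0 (hratio i).1
            have ht := taylorB M (p i / q i) hr0 (hratio i).2
            set ℓ := Real.log (p i / q i) with hl
            have e1 : (p i - q i) * ℓ = q i * ((p i / q i - 1) * ℓ) := by
              field_simp
            have e2 : q i * ((M - 1) * Real.log M
                  + (Real.log M + 1 - 1 / M) * (p i / q i - M)
                  + (1 / M + 1 / M ^ 2) / 2 * (p i / q i - M) ^ 2)
                = ((M - 1) * Real.log M) * q i + (Real.log M + 1 - 1 / M) * p i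
                  - ((Real.log M + 1 - 1 / M) * M) * q i
                  + ((1 / M + 1 / M ^ 2) / 2) * ((M * q i - p i) ^ 2 / q i) := by
              field_simp
              ring
            rw [e1, ← e2]
            exact mul_le_mul_of_nonneg_left ht hqi.le
    constructor
    · have h3 : (M - 1) * ((Real.log M - 1 / M + 1)
            - ((M - 1) * Real.log M - (m - 1) * Real.log m) / (M - m))
              - (1 / M + 1 / M ^ 2) / 2 * ∑ i, (M * q i - p i) ^ 2 / q i
          = (M - 1) / (M - m) * ((m - 1) * Real.log m)
              + (1 - m) / (M - m) * ((M - 1) * Real.log M)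
            - ((M - 1) * Real.log M + (Real.log M + 1 - 1 / M) * (1 - M)
              + (1 / M + 1 / M ^ 2) / 2 * ∑ i, (M * q i - p i) ^ 2 / q i) := by
        field_simp
        ring
      rw [h3]
      linarith [hB']
    · have h2 : (1 - m) * (((M - 1) * Real.log M - (m - 1) * Real.log m) / (M - m)
                  - (Real.log m - 1 / m + 1))
                - (1 / m + 1 / m ^ 2) / 2 * ∑ i, (p i - m * q i) ^ 2 / q i
          = (M - 1) / (M - m) * ((m - 1) * Real.log m)
              + (1 - m) / (M - m) * ((M - 1) * Real.log M)
            - ((m - 1) * Real.log m + (Real.log m + 1 - 1 / m) * (1 - m)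
              + (1 / m + 1 / m ^ 2) / 2 * ∑ i, (p i - m * q i) ^ 2 / q i) := by
        field_simp
        ring
      rw [h2]
      linarith [hA']
end
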